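/- arXiv:1711.03260 — 2 statements merged into one kernel-verified Lean document; each statement's English description precedes it below -/
import Mathlib

section
/- For each n ∈ ℕ ∪ {∞}, let f_n : (0,∞) → [0,∞) be a non-increasing function. Assume there exists a non-empty open interval I ⊂ (0,∞) such that for every q ∈ I, ∫_0^∞ e^{−qu} f_n(u) du → ∫_0^∞ e^{−qu} f_∞(u) du < ∞ as n → ∞. Then f_n(u) → f_∞(u) for every u ∈ (0,∞) at which f_∞ is continuous. -/
open MeasureTheory Filter Topology Set
open scoped ENNReal

noncomputable section

/-- Occupation time vector: `S_n(x) i = ∑_{k=1}^n 1_{A i}(T^k x)`. -/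
def occVec {X : Type*} (T : X → X) {ι : Type*} (A : ι → Set X) (n : ℕ) (x : X) :
    ι → ℝ :=
  fun i => ∑ k ∈ Finset.range n, (A i).indicator (fun _ => (1 : ℝ)) (T^[k + 1] x)

/-- `Y_k = {x : ψ(x) = k}` where `ψ(x) = min{k ≥ 0 : T^k x ∈ Y}`. -/
def Yray {X : Type*} (T : X → X) (Y : Set X) (k : ℕ) : Set X :=
  {x | T^[k] x ∈ Y ∧ ∀ j < k, T^[j] x ∉ Y}

/-- `B_{i,k}`: points of `Y` which stay in `Ai` at times `1, …, k-1` and return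
to `Y` at time `k`. -/
def Bray {X : Type*} (T : X → X) (Y Ai : Set X) (k : ℕ) : Set X :=
  {x | x ∈ Y ∧ (∀ j, 0 < j → j < k → T^[j] x ∈ Ai) ∧ T^[k] x ∈ Y}

/-- Wandering rate of `Y` starting from `B`: `∑_{k<n} μ(Y_k ∩ B)`
(for `B = A i` this is `w_i(n)`, for `B = univ` it is `w(n)`). -/
def wrate {X : Type*} [MeasurableSpace X] (μ : Measure X) (T : X → X) (Y B : Set X)
    (n : ℕ) : ℝ≥0∞ :=
  ∑ k ∈ Finset.range n, μ (Yray T Y k ∩ B)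

/-- `Q_i(s) = ∑_{n ≥ 0} e^{-ns} μ(Y_n ∩ A_i)`, a finite real number for `s > 0`. -/
def Qlap {X : Type*} [MeasurableSpace X] (μ : Measure X) (T : X → X) (Y B : Set X)
    (s : ℝ) : ℝ :=
  ∑' n : ℕ, Real.exp (-(n : ℝ) * s) * (μ (Yray T Y n ∩ B)).toReal

/-- `Y` dynamically separates the rays `A i`. -/
def DynSep {X : Type*} (T : X → X) (Y : Set X) {d : ℕ} (A : Fin d → Set X) : Prop :=
  ∀ x n i j, i ≠ j → x ∈ A i → T^[n] x ∈ A j → ∃ k, 0 < k ∧ k < n ∧ T^[k] x ∈ Y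

/-- Assumption (R). -/
structure RaySetting {X : Type*} [MeasurableSpace X] (μ : Measure X) (T : X → X)
    {d : ℕ} (Y : Set X) (A : Fin d → Set X) : Prop where
  d2 : 2 ≤ d
  sigmaFinite : SigmaFinite μ
  infiniteTotal : μ Set.univ = ⊤
  conservative : Conservative T μ
  ergodic : Ergodic T μ
  measY : MeasurableSet Y
  measA : ∀ i, MeasurableSet (A i)
  disjA : Pairwise (Function.onFun Disjoint A)
  disjYA : ∀ i, Disjoint Y (A i)
  cover : Y ∪ (⋃ i, A i) = Set.univ
  posY : 0 < μ Y
  finY : μ Y < ⊤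
  infA : ∀ i, μ (A i) = ⊤
  sep : DynSep T Y A

/-- `h` is a version of `T̂^k 1_B`, the `k`-th power of the dual operator applied
to the indicator of `B`. -/
def IsDualPowIndicator {X : Type*} [MeasurableSpace X] (μ : Measure X) (T : X → X)
    (B : Set X) (k : ℕ) (h : X → ℝ) : Prop :=
  Measurable h ∧ (∀ x, 0 ≤ h x) ∧ Integrable h μ ∧
    ∀ g : X → ℝ, Measurable g → (∃ C, ∀ x, |g x| ≤ C) →
      ∫ x, h x * g x ∂μ = ∫ x in B, g (T^[k] x) ∂μ

/-- Assumption (C): `hT k i` is a version of `T̂^k 1_{Y_k ∩ A_i}` and, for each `i`,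
the collection `{ w_i(n)⁻¹ ∑_{k<n} T̂^k 1_{Y_k ∩ A_i} : n ≥ 1 }` is strongly
precompact in `L¹(μ)`. -/
def AssumptionC {X : Type*} [MeasurableSpace X] (μ : Measure X) (T : X → X)
    {d : ℕ} (Y : Set X) (A : Fin d → Set X) (hT : ℕ → Fin d → X → ℝ) : Prop :=
  (∀ k i, IsDualPowIndicator μ T (Yray T Y k ∩ A i) k (hT k i)) ∧
    ∀ i, IsCompact (closure
      {f : Lp ℝ 1 μ | ∃ n, 1 ≤ n ∧
        (f : X → ℝ) =ᵐ[μ]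
          fun x => ((wrate μ T Y (A i) n).toReal)⁻¹ *
            ∑ k ∈ Finset.range n, hT k i x})

/-- A positive function is regularly varying of index `ρ` at `∞`. -/
def RegVarAtTop (f : ℝ → ℝ) (ρ : ℝ) : Prop :=
  (∀ᶠ x in atTop, 0 < f x) ∧
    ∀ r > 0, Tendsto (fun x => f (r * x) / f x) atTop (𝓝 (r ^ ρ))

/-- A positive sequence is regularly varying of index `ρ` at `∞`. -/
def RegVarSeq (a : ℕ → ℝ) (ρ : ℝ) : Prop :=
  RegVarAtTop (fun x => a ⌊x⌋₊) ρ

/-- A positive function is regularly varying of index `ρ` at `0+`. -/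
def RegVarAtZero (f : ℝ → ℝ) (ρ : ℝ) : Prop :=
  (∀ᶠ x in 𝓝[>] (0 : ℝ), 0 < f x) ∧
    ∀ r > 0, Tendsto (fun x => f (r * x) / f x) (𝓝[>] (0 : ℝ)) (𝓝 (r ^ ρ))

/-- Weak convergence of the pushforwards of `F n` under `ν` to the law of `ζ`. -/
def WeakConvTo {X : Type*} [MeasurableSpace X] (ν : Measure X) {E : Type*}
    [TopologicalSpace E] (F : ℕ → X → E) {Ω : Type*} [MeasurableSpace Ω]
    (P : Measure Ω) (ζ : Ω → E) : Prop :=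
  ∀ f : BoundedContinuousFunction E ℝ,
    Tendsto (fun n => ∫ x, f (F n x) ∂ν) atTop (𝓝 (∫ ω, f (ζ ω) ∂P))

/-- `ζ` has the generalized arcsine law `ζ_{α,β}`, characterized via the double
Laplace transform. -/
def HasArcsineLaw {Ω : Type*} [MeasurableSpace Ω] (P : Measure Ω) {ι : Type*}
    [Fintype ι] (ζ : Ω → ι → ℝ) (α : ℝ) (β : ι → ℝ) : Prop :=
  ∀ q > (0 : ℝ), ∀ lam : ι → ℝ, (∀ i, 0 ≤ lam i) →
    ∫ u in Ioi (0 : ℝ), Real.exp (-q * u) *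
        (∫ ω, Real.exp (-u * ∑ i, lam i * ζ ω i) ∂P)
      = (∑ i, β i * (q + lam i) ^ (-(1 - α))) / (∑ i, β i * (q + lam i) ^ α)

/-- `S̃_{λ,n,t} = exp(−λ·S_n/t)`. -/
def Stilde {X : Type*} (T : X → X) {ι : Type*} [Fintype ι] (A : ι → Set X)
    (lam : ι → ℝ) (n : ℕ) (t : ℝ) (x : X) : ℝ :=
  Real.exp (-(∑ i, lam i * occVec T A n x i) / t)

/-! ### The interval-map setting -/

/-- The Thaler interval-map setting: `T : [0,1] → [0,1]` with indifferent fixed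
points `xp 1 < ⋯ < xp d`, branch intervals `(a (i-1), a i)`, `C²` branch
extensions `Text i` and `C²` extensions `finv i` of the branch inverses. -/
structure ThalerMap (d : ℕ) (a : ℕ → ℝ) (xp : ℕ → ℝ) (T : ℝ → ℝ)
    (Text : ℕ → ℝ → ℝ) (finv : ℕ → ℝ → ℝ) : Prop where
  d2 : 2 ≤ d
  a0 : a 0 = 0
  ad : a d = 1
  xp1 : xp 1 = 0
  xpd : xp d = 1
  lt_left : ∀ i, 2 ≤ i → i ≤ d → a (i - 1) < xp i
  lt_right : ∀ i, 1 ≤ i → i ≤ d - 1 → xp i < a i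
  mapsTo : Set.MapsTo T (Icc 0 1) (Icc 0 1)
  ext_smooth : ∀ i, 1 ≤ i → i ≤ d → ContDiff ℝ 2 (Text i)
  ext_eq : ∀ i, 1 ≤ i → i ≤ d → EqOn (Text i) T (Ioo (a (i - 1)) (a i))
  dense_image : ∀ i, 1 ≤ i → i ≤ d → Icc (0 : ℝ) 1 ⊆ closure (T '' Ioo (a (i - 1)) (a i))
  fixed : ∀ i, 1 ≤ i → i ≤ d → T (xp i) = xp i ∧ Text i (xp i) = xp i
  deriv_one : ∀ i, 1 ≤ i → i ≤ d → deriv (Text i) (xp i) = 1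
  second_deriv_pos : ∀ i, 1 ≤ i → i ≤ d → ∀ x ∈ Ioo (a (i - 1)) (a i), x ≠ xp i →
    0 < (x - xp i) * iteratedDeriv 2 (Text i) x
  inv_smooth : ∀ i, 1 ≤ i → i ≤ d → ContDiff ℝ 2 (finv i)
  inv_eq : ∀ i, 1 ≤ i → i ≤ d → ∀ x ∈ Ioo (a (i - 1)) (a i), finv i (T x) = x
  inv_maps : ∀ i, 1 ≤ i → i ≤ d → MapsTo (finv i) (Icc 0 1) (Icc (a (i - 1)) (a i))

/-- The density `h(x) = h₀(x) ∏_i (x - x_i)/(x - f_i(x))` of the invariant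
measure with respect to Lebesgue measure. -/
def thalerDensity (d : ℕ) (xp : ℕ → ℝ) (finv : ℕ → ℝ → ℝ) (h0 : ℝ → ℝ) (x : ℝ) : ℝ :=
  h0 x * ∏ i ∈ Finset.Icc 1 d, ((x - xp i) / (x - finv i x))

/-- The invariant measure `μ = h · Leb|_{[0,1]}`. -/
def thalerMeasure (d : ℕ) (xp : ℕ → ℝ) (finv : ℕ → ℝ → ℝ) (h0 : ℝ → ℝ) :
    Measure ℝ :=
  (volume.restrict (Icc 0 1)).withDensity
    (fun x => ENNReal.ofReal (thalerDensity d xp finv h0 x))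

/-- The index set of the rays `(i, ±)`: `+` for `1 ≤ i ≤ d-1`, `−` for `2 ≤ i ≤ d`
(`true` encodes `+`, `false` encodes `−`); it has `2d - 2` elements. -/
def RayIdx (d : ℕ) :=
  {p : Fin (d + 1) × Bool //
    (p.2 = true ∧ 1 ≤ (p.1 : ℕ) ∧ (p.1 : ℕ) ≤ d - 1) ∨
    (p.2 = false ∧ 2 ≤ (p.1 : ℕ) ∧ (p.1 : ℕ) ≤ d)}

instance (d : ℕ) : Fintype (RayIdx d) := by
  unfold RayIdx; infer_instance

/-- The index `i` of a ray. -/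
def rayNum {d : ℕ} (k : RayIdx d) : ℕ := (k.1.1 : ℕ)

/-- The ray `A_i^± = (x_i, x_i + ε)` resp. `(x_i − ε, x_i)`. -/
def raySet {d : ℕ} (xp : ℕ → ℝ) (ε : ℝ) (k : RayIdx d) : Set ℝ :=
  if k.1.2 then Ioo (xp (rayNum k)) (xp (rayNum k) + ε)
  else Ioo (xp (rayNum k) - ε) (xp (rayNum k))

/-- `v_i = ∑_{j ≠ i} h(f_j(x_i)) f_j'(x_i)`. -/
def rayV (d : ℕ) (xp : ℕ → ℝ) (finv : ℕ → ℝ → ℝ) (h0 : ℝ → ℝ) (i : ℕ) : ℝ :=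
  ∑ j ∈ (Finset.Icc 1 d).erase i,
    thalerDensity d xp finv h0 (finv j (xp i)) * deriv (finv j) (xp i)

/-- `β_i^± = (c_i^±)^{−α} v_i / ∑_{j,±} (c_j^±)^{−α} v_j`, with `∞^{−α} = 0`. -/
def rayBeta (d : ℕ) (xp : ℕ → ℝ) (finv : ℕ → ℝ → ℝ) (h0 : ℝ → ℝ) (α : ℝ)
    (c : RayIdx d → ℝ≥0∞) (k : RayIdx d) : ℝ :=
  ((c k ^ (-α)).toReal * rayV d xp finv h0 (rayNum k)) /
    ∑ j, ((c j ^ (-α)).toReal * rayV d xp finv h0 (rayNum j))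

/-- The asymptotic relation `|Tx − x| / Ψ(|x − x_i|) → c_i^±` as `x → x_i ± 0`
(the limit being `+∞` when `c_i^± = ∞`). -/
def RegTLimit {d : ℕ} (T : ℝ → ℝ) (xp : ℕ → ℝ) (Ψ : ℝ → ℝ) (k : RayIdx d)
    (cv : ℝ≥0∞) : Prop :=
  Tendsto (fun x => ENNReal.ofReal (|T x - x| / Ψ |x - xp (rayNum k)|))
    (if k.1.2 then 𝓝[>] (xp (rayNum k)) else 𝓝[<] (xp (rayNum k))) (𝓝 cv)


/-- Bundles the standing hypotheses on one function. -/
structure S7OK (g : ℝ → ℝ) (q1 : ℝ) : Prop where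
  meas : AEMeasurable g (volume.restrict (Ioi (0:ℝ)))
  nonneg : ∀ u ∈ Ioi (0:ℝ), 0 ≤ g u
  fin : (∫⁻ u in Ioi (0:ℝ), ENNReal.ofReal (Real.exp (-q1*u) * g u)) < ⊤

/-- Real Laplace transform. -/
def s7Lap (g : ℝ → ℝ) (q : ℝ) : ℝ := ∫ u in Ioi (0:ℝ), Real.exp (-q*u) * g u

/-- Real moment integrals. -/
def s7Mom (g : ℝ → ℝ) (k : ℕ) (q : ℝ) : ℝ :=
  ∫ u in Ioi (0:ℝ), u^k * (Real.exp (-q*u) * g u)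

lemma s7_pow_exp_le {q1 q : ℝ} (h : q1 < q) {u : ℝ} (hu : 0 ≤ u) (k : ℕ) :
    u^k * Real.exp (-q*u) ≤ (k.factorial : ℝ) * ((q - q1)⁻¹)^k * Real.exp (-q1*u) := by
  have hq : (0:ℝ) < q - q1 := by linarith
  have h1 : ((q - q1)*u)^k / (k.factorial : ℝ) ≤ Real.exp ((q - q1)*u) :=
    Real.pow_div_factorial_le_exp _ (mul_nonneg hq.le hu) k
  have h2 : u^k ≤ (k.factorial : ℝ) * ((q - q1)⁻¹)^k * Real.exp ((q - q1)*u) := by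
    have hfac : (0:ℝ) < (k.factorial : ℝ) := by positivity
    rw [mul_pow] at h1
    have := (div_le_iff₀ hfac).mp h1
    calc u^k = ((q-q1)^k * u^k) * ((q-q1)⁻¹)^k := by
              rw [mul_comm ((q-q1)^k), mul_assoc, ← mul_pow, mul_inv_cancel₀ hq.ne', one_pow, mul_one]
      _ ≤ (Real.exp ((q-q1)*u) * (k.factorial:ℝ)) * ((q-q1)⁻¹)^k := by
              apply mul_le_mul_of_nonneg_right this (by positivity)
      _ = (k.factorial : ℝ) * ((q - q1)⁻¹)^k * Real.exp ((q - q1)*u) := by ring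
  calc u^k * Real.exp (-q*u)
      ≤ ((k.factorial : ℝ) * ((q - q1)⁻¹)^k * Real.exp ((q - q1)*u)) * Real.exp (-q*u) := by
        apply mul_le_mul_of_nonneg_right h2 (Real.exp_nonneg _)
    _ = (k.factorial : ℝ) * ((q - q1)⁻¹)^k * Real.exp (-q1*u) := by
        rw [mul_assoc, ← Real.exp_add]; ring_nf

/-- base integrability -/
lemma s7_int_base {g : ℝ → ℝ} {q1 : ℝ} (hg : S7OK g q1) :
    IntegrableOn (fun u => Real.exp (-q1*u) * g u) (Ioi (0:ℝ)) := by
  constructor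
  · exact ((Real.continuous_exp.comp (continuous_const.mul continuous_id)).aemeasurable.mul
      hg.meas).aestronglyMeasurable
  · rw [hasFiniteIntegral_iff_norm]
    have : ∀ᵐ u ∂(volume.restrict (Ioi (0:ℝ))),
        ENNReal.ofReal ‖Real.exp (-q1*u) * g u‖ = ENNReal.ofReal (Real.exp (-q1*u) * g u) := by
      filter_upwards [ae_restrict_mem measurableSet_Ioi] with u hu
      rw [Real.norm_eq_abs, abs_of_nonneg (mul_nonneg (Real.exp_nonneg _) (hg.nonneg u hu))]
    rw [lintegral_congr_ae this]
    exact hg.fin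

lemma s7_integrableOn {g : ℝ → ℝ} {q1 : ℝ} (hg : S7OK g q1) {q : ℝ} (hq : q1 < q) (k : ℕ) :
    IntegrableOn (fun u => u^k * (Real.exp (-q*u) * g u)) (Ioi (0:ℝ)) := by
  apply Integrable.mono' (((s7_int_base hg).const_mul ((k.factorial : ℝ) * ((q - q1)⁻¹)^k)))
  · exact ((continuous_pow k).aemeasurable.mul
      ((Real.continuous_exp.comp (continuous_const.mul continuous_id)).aemeasurable.mul
        hg.meas)).aestronglyMeasurable
  · filter_upwards [ae_restrict_mem measurableSet_Ioi] with u hu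
    have hu0 : (0:ℝ) ≤ u := le_of_lt hu
    have hgu : 0 ≤ g u := hg.nonneg u hu
    rw [Real.norm_eq_abs, abs_of_nonneg (by positivity)]
    calc u^k * (Real.exp (-q*u) * g u) = (u^k * Real.exp (-q*u)) * g u := by ring
      _ ≤ ((k.factorial : ℝ) * ((q - q1)⁻¹)^k * Real.exp (-q1*u)) * g u :=
          mul_le_mul_of_nonneg_right (s7_pow_exp_le hq hu0 k) hgu
      _ = (k.factorial : ℝ) * ((q - q1)⁻¹)^k * (Real.exp (-q1*u) * g u) := by ring

lemma s7_lap_eq_toReal {g : ℝ → ℝ} {q1 : ℝ} (hg : S7OK g q1) (q : ℝ) :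
    s7Lap g q = (∫⁻ u in Ioi (0:ℝ), ENNReal.ofReal (Real.exp (-q*u) * g u)).toReal := by
  apply integral_eq_lintegral_of_nonneg_ae
  · filter_upwards [ae_restrict_mem measurableSet_Ioi] with u hu
    exact mul_nonneg (Real.exp_nonneg _) (hg.nonneg u hu)
  · exact ((Real.continuous_exp.comp (continuous_const.mul continuous_id)).aemeasurable.mul
      hg.meas).aestronglyMeasurable

lemma s7_mom_nonneg {g : ℝ → ℝ} {q1 : ℝ} (hg : S7OK g q1) (k : ℕ) (q : ℝ) :
    0 ≤ s7Mom g k q := by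
  apply integral_nonneg_of_ae
  filter_upwards [ae_restrict_mem measurableSet_Ioi] with u hu
  have := hg.nonneg u hu
  have : (0:ℝ) ≤ u := le_of_lt hu
  positivity

lemma s7_lap_nonneg {g : ℝ → ℝ} {q1 : ℝ} (hg : S7OK g q1) (q : ℝ) :
    0 ≤ s7Lap g q := by
  apply integral_nonneg_of_ae
  filter_upwards [ae_restrict_mem measurableSet_Ioi] with u hu
  exact mul_nonneg (Real.exp_nonneg _) (hg.nonneg u hu)

lemma s7_mom_le {g : ℝ → ℝ} {q1 : ℝ} (hg : S7OK g q1) {q : ℝ} (hq : q1 < q) (k : ℕ) :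
    s7Mom g k q ≤ (k.factorial : ℝ) * ((q - q1)⁻¹)^k * s7Lap g q1 := by
  have h2 : s7Lap g q1 = ∫ u in Ioi (0:ℝ), Real.exp (-q1*u) * g u := rfl
  rw [s7Mom, h2, ← integral_const_mul]
  apply integral_mono_ae (s7_integrableOn hg hq k) ((s7_int_base hg).const_mul _)
  filter_upwards [ae_restrict_mem measurableSet_Ioi] with u hu
  have hu0 : (0:ℝ) ≤ u := le_of_lt hu
  have hgu : 0 ≤ g u := hg.nonneg u hu
  calc u^k * (Real.exp (-q*u) * g u) = (u^k * Real.exp (-q*u)) * g u := by ring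
    _ ≤ ((k.factorial : ℝ) * ((q - q1)⁻¹)^k * Real.exp (-q1*u)) * g u :=
        mul_le_mul_of_nonneg_right (s7_pow_exp_le hq hu0 k) hgu
    _ = (k.factorial : ℝ) * ((q - q1)⁻¹)^k * (Real.exp (-q1*u) * g u) := by ring

/-- Laplace transform is antitone in `q` (on nonneg functions). -/
lemma s7_lap_mono {g : ℝ → ℝ} {q1 : ℝ} (hg : S7OK g q1) {q q' : ℝ} (hq : q1 < q)
    (hqq' : q ≤ q') : s7Lap g q' ≤ s7Lap g q := by
  have h1 : IntegrableOn (fun u => Real.exp (-q*u) * g u) (Ioi (0:ℝ)) := by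
    simpa using s7_integrableOn hg hq 0
  have h2 : IntegrableOn (fun u => Real.exp (-q'*u) * g u) (Ioi (0:ℝ)) := by
    simpa using s7_integrableOn hg (lt_of_lt_of_le hq hqq') 0
  apply integral_mono_ae h2 h1
  filter_upwards [ae_restrict_mem measurableSet_Ioi] with u hu
  apply mul_le_mul_of_nonneg_right _ (hg.nonneg u hu)
  apply Real.exp_le_exp.2
  nlinarith [le_of_lt (show (0:ℝ) < u from hu)]


/-- Binomial alternating sum of Laplace values equals integral against `(1-e^{-hu})^k`. -/
lemma s7_alt_sum {g : ℝ → ℝ} {q1 : ℝ} (hg : S7OK g q1) {q0 : ℝ} (hq : q1 < q0) (k : ℕ)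
    {h : ℝ} (hh : 0 < h) :
    ∑ j ∈ Finset.range (k+1), (-1:ℝ)^j * (k.choose j : ℝ) * s7Lap g (q0 + j*h)
      = ∫ u in Ioi (0:ℝ), (1 - Real.exp (-h*u))^k * (Real.exp (-q0*u) * g u) := by
  have hint : ∀ j : ℕ, IntegrableOn
      (fun u => (-1:ℝ)^j * (k.choose j : ℝ) * (Real.exp (-(q0 + j*h)*u) * g u)) (Ioi (0:ℝ)) := by
    intro j
    have : q1 < q0 + j*h := by
      have : (0:ℝ) ≤ (j:ℝ)*h := by positivity
      linarith
    have h0 := s7_integrableOn hg this 0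
    simp only [pow_zero, one_mul] at h0
    exact h0.const_mul _
  calc ∑ j ∈ Finset.range (k+1), (-1:ℝ)^j * (k.choose j : ℝ) * s7Lap g (q0 + j*h)
      = ∑ j ∈ Finset.range (k+1), ∫ u in Ioi (0:ℝ),
          (-1:ℝ)^j * (k.choose j : ℝ) * (Real.exp (-(q0 + j*h)*u) * g u) := by
        apply Finset.sum_congr rfl
        intro j _
        rw [s7Lap, ← integral_const_mul]
    _ = ∫ u in Ioi (0:ℝ), ∑ j ∈ Finset.range (k+1),
          (-1:ℝ)^j * (k.choose j : ℝ) * (Real.exp (-(q0 + j*h)*u) * g u) := by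
        rw [integral_finset_sum]
        intro j _
        exact hint j
    _ = ∫ u in Ioi (0:ℝ), (1 - Real.exp (-h*u))^k * (Real.exp (-q0*u) * g u) := by
        apply integral_congr_ae
        filter_upwards [] with u
        have hexp : ∀ j : ℕ, Real.exp (-(q0 + j*h)*u)
            = (-(-Real.exp (-h*u)))^j * Real.exp (-q0*u) := by
          intro j
          rw [neg_neg, ← Real.exp_nat_mul, ← Real.exp_add]
          ring_nf
        have hbin : (1 - Real.exp (-h*u))^k
            = ∑ j ∈ Finset.range (k+1), (-Real.exp (-h*u))^j * 1^(k-j) * (k.choose j : ℝ) := by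
          rw [← add_pow]
          ring_nf
        rw [hbin, Finset.sum_mul]
        apply Finset.sum_congr rfl
        intro j _
        rw [hexp j]
        rcases Nat.even_or_odd j with hj | hj
        · rw [hj.neg_pow, hj.neg_pow]; ring
        · rw [hj.neg_pow, hj.neg_pow]; ring

/-- Pointwise: `0 ≤ u^k - ((1-e^{-hu})/h)^k ≤ k h u^(k+1)`. -/
lemma s7_pointwise_diff {h u : ℝ} (hh : 0 < h) (hu : 0 ≤ u) (k : ℕ) :
    u^k - ((1 - Real.exp (-h*u))/h)^k ∈ Icc (0:ℝ) ((k:ℝ) * h * u^(k+1)) := by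
  set a : ℝ := (1 - Real.exp (-h*u))/h with ha
  have ha0 : 0 ≤ a := by
    apply div_nonneg _ hh.le
    have : Real.exp (-h*u) ≤ 1 := Real.exp_le_one_iff.2 (by nlinarith)
    linarith
  have hau : a ≤ u := by
    rw [ha, div_le_iff₀ hh]
    have h1 := Real.add_one_le_exp (-(h*u))
    have h2 : 1 - h*u ≤ Real.exp (-h*u) := by rw [neg_mul]; linarith
    nlinarith
  have hua : u - a ≤ h * u^2 := by
    rcases le_or_gt (h*u) 1 with hc | hc
    · have habs := Real.abs_exp_sub_one_sub_id_le (x := -(h*u)) (by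
        rw [abs_neg, abs_of_nonneg (by positivity)]; exact hc)
      have h2 : Real.exp (-h*u) ≤ 1 - h*u + (h*u)^2 := by
        rw [neg_mul]
        have := abs_le.1 habs
        nlinarith [this.2]
      have h3 : u - h*u^2 ≤ a := by
        rw [ha, le_div_iff₀ hh]
        nlinarith
      linarith
    · have h3 : u ≤ h * u^2 := by nlinarith
      nlinarith [ha0]
  constructor
  · have := pow_le_pow_left₀ ha0 hau k
    simp only [sub_nonneg]
    exact this
  · -- u^k - a^k ≤ k*h*u^(k+1), by induction
    have key : ∀ m : ℕ, u^m - a^m ≤ (m:ℝ) * h * u^(m+1) := by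
      intro m
      induction m with
      | zero => simp
      | succ n ih =>
        have e1 : u^(n+1) - a^(n+1) = u*(u^n - a^n) + a^n * (u - a) := by ring
        have h4 : a^n ≤ u^n := pow_le_pow_left₀ ha0 hau n
        have h5 : a^n * (u - a) ≤ u^n * (h * u^2) := by
          apply mul_le_mul h4 hua (by linarith) (by positivity)
        have h6 : u*(u^n - a^n) ≤ u * ((n:ℝ) * h * u^(n+1)) :=
          mul_le_mul_of_nonneg_left ih hu
        rw [e1]
        have : u * ((n:ℝ) * h * u^(n+1)) + u^n * (h*u^2) = ((n:ℝ)+1) * h * u^(n+2) := by ring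
        push_cast
        nlinarith
    exact key k

/-- Moments vs finite differences. -/
lemma s7_mom_diff {g : ℝ → ℝ} {q1 : ℝ} (hg : S7OK g q1) {q0 : ℝ} (hq : q1 < q0) (k : ℕ)
    {h : ℝ} (hh : 0 < h) :
    s7Mom g k q0 - (1/h^k) * ∑ j ∈ Finset.range (k+1),
        (-1:ℝ)^j * (k.choose j : ℝ) * s7Lap g (q0 + j*h)
      ∈ Icc (0:ℝ) ((k:ℝ) * h * s7Mom g (k+1) q0) := by
  rw [s7_alt_sum hg hq k hh]
  have hint1 := s7_integrableOn hg hq k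
  have hint2 : IntegrableOn (fun u => (1/h^k) * ((1 - Real.exp (-h*u))^k
      * (Real.exp (-q0*u) * g u))) (Ioi (0:ℝ)) := by
    apply Integrable.mono' hint1
    · apply AEStronglyMeasurable.const_mul
      apply AEStronglyMeasurable.mul _ (((Real.continuous_exp.comp
        (continuous_const.mul continuous_id)).aemeasurable.mul hg.meas).aestronglyMeasurable)
      exact (((continuous_const.sub (Real.continuous_exp.comp
        (continuous_const.mul continuous_id))).pow k)).aestronglyMeasurable
    · filter_upwards [ae_restrict_mem measurableSet_Ioi] with u hu
      have hu0 : (0:ℝ) ≤ u := le_of_lt hu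
      have hgu : 0 ≤ g u := hg.nonneg u hu
      have hd := s7_pointwise_diff hh hu0 k
      have hexp1 : (0:ℝ) ≤ 1 - Real.exp (-h*u) := by
        have : Real.exp (-h*u) ≤ 1 := Real.exp_le_one_iff.2 (by nlinarith)
        linarith
      have h1 : 0 ≤ ((1 - Real.exp (-h*u))/h)^k :=
        pow_nonneg (div_nonneg hexp1 hh.le) k
      have h2 : ((1 - Real.exp (-h*u))/h)^k ≤ u^k := by linarith [hd.1]
      rw [Real.norm_eq_abs, abs_of_nonneg]
      · calc (1/h^k) * ((1 - Real.exp (-h*u))^k * (Real.exp (-q0*u) * g u))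
            = ((1 - Real.exp (-h*u))/h)^k * (Real.exp (-q0*u) * g u) := by
              rw [div_pow]; ring
          _ ≤ u^k * (Real.exp (-q0*u) * g u) := by
              apply mul_le_mul_of_nonneg_right h2 (by positivity)
      · have : (0:ℝ) < h^k := by positivity
        have h3 : 0 ≤ ((1 - Real.exp (-h*u))/h)^k * (Real.exp (-q0*u) * g u) := by positivity
        calc (0:ℝ) ≤ ((1 - Real.exp (-h*u))/h)^k * (Real.exp (-q0*u) * g u) := h3
          _ = (1/h^k) * ((1 - Real.exp (-h*u))^k * (Real.exp (-q0*u) * g u)) := by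
              rw [div_pow]; ring
  have heq : s7Mom g k q0 - (1/h^k) * ∫ u in Ioi (0:ℝ),
      (1 - Real.exp (-h*u))^k * (Real.exp (-q0*u) * g u)
      = ∫ u in Ioi (0:ℝ), (u^k - ((1 - Real.exp (-h*u))/h)^k) * (Real.exp (-q0*u) * g u) := by
    rw [s7Mom, ← integral_const_mul, ← integral_sub hint1 hint2]
    apply integral_congr_ae
    filter_upwards [] with u
    rw [div_pow]; ring
  rw [heq]
  constructor
  · apply integral_nonneg_of_ae
    filter_upwards [ae_restrict_mem measurableSet_Ioi] with u hu
    have hu0 : (0:ℝ) ≤ u := le_of_lt hu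
    have hgu : 0 ≤ g u := hg.nonneg u hu
    have hd := (s7_pointwise_diff hh hu0 k).1
    positivity
  · have : (k:ℝ) * h * s7Mom g (k+1) q0 = ∫ u in Ioi (0:ℝ),
        (k:ℝ) * h * (u^(k+1) * (Real.exp (-q0*u) * g u)) := by
      rw [s7Mom, ← integral_const_mul]
    rw [this]
    apply integral_mono_ae _ ((s7_integrableOn hg hq (k+1)).const_mul _)
    · filter_upwards [ae_restrict_mem measurableSet_Ioi] with u hu
      have hu0 : (0:ℝ) ≤ u := le_of_lt hu
      have hgu : 0 ≤ g u := hg.nonneg u hu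
      have hd := (s7_pointwise_diff hh hu0 k).2
      calc (u^k - ((1 - Real.exp (-h*u))/h)^k) * (Real.exp (-q0*u) * g u)
          ≤ ((k:ℝ) * h * u^(k+1)) * (Real.exp (-q0*u) * g u) := by
            apply mul_le_mul_of_nonneg_right hd (by positivity)
        _ = (k:ℝ) * h * (u^(k+1) * (Real.exp (-q0*u) * g u)) := by ring
    · -- integrability of the difference
      have := hint1.sub hint2
      apply Integrable.congr this
      filter_upwards [] with u
      simp only [Pi.sub_apply]
      rw [div_pow]; ring

/-- Moment convergence from Laplace convergence on an interval. -/
lemma s7_mom_tendsto {F : ℕ → ℝ → ℝ} {flim : ℝ → ℝ} {q1 B R : ℝ}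
    (hFOK : ∀ n, S7OK (F n) q1) (hlOK : S7OK flim q1)
    (hB : ∀ n, s7Lap (F n) q1 ≤ B) (hBl : s7Lap flim q1 ≤ B)
    (hconv : ∀ q ∈ Ioo q1 R, Tendsto (fun n => s7Lap (F n) q) atTop (𝓝 (s7Lap flim q)))
    (k : ℕ) {q0 : ℝ} (hq0 : q0 ∈ Ioo q1 R) :
    Tendsto (fun n => s7Mom (F n) k q0) atTop (𝓝 (s7Mom flim k q0)) := by
  have hq01 : q1 < q0 := hq0.1
  rw [Metric.tendsto_atTop]
  intro ε hε
  -- uniform bound on (k+1)-moments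
  obtain ⟨D, hDpos, hDbound⟩ : ∃ D : ℝ, 0 < D ∧
      ((k:ℝ)+1) * (((k+1).factorial : ℝ) * ((q0 - q1)⁻¹)^(k+1) * B) ≤ D := by
    refine ⟨((k:ℝ)+1) * (((k+1).factorial : ℝ) * ((q0 - q1)⁻¹)^(k+1) * B) + 1, ?_, by linarith⟩
    have h0 : (0:ℝ) ≤ B := le_trans (s7_lap_nonneg hlOK q1) hBl
    have h1 : (0:ℝ) ≤ ((k:ℝ)+1) * (((k+1).factorial : ℝ) * ((q0 - q1)⁻¹)^(k+1) * B) := by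
      have : (0:ℝ) < q0 - q1 := by linarith
      positivity
    linarith
  have hmom : ∀ (g : ℝ → ℝ), S7OK g q1 → s7Lap g q1 ≤ B → {h : ℝ} → 0 < h →
      |s7Mom g k q0 - (1/h^k) * ∑ j ∈ Finset.range (k+1),
        (-1:ℝ)^j * (k.choose j : ℝ) * s7Lap g (q0 + j*h)| ≤ h * D := by
    intro g hg hgB h hh
    have hd := s7_mom_diff hg hq01 k hh
    have hm : s7Mom g (k+1) q0 ≤ ((k+1).factorial : ℝ) * ((q0 - q1)⁻¹)^(k+1) * s7Lap g q1 :=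
      s7_mom_le hg hq01 (k+1)
    have hfacpos : (0:ℝ) ≤ ((k+1).factorial : ℝ) * ((q0 - q1)⁻¹)^(k+1) := by
      have : (0:ℝ) < q0 - q1 := by linarith
      positivity
    rw [abs_of_nonneg hd.1]
    calc s7Mom g k q0 - (1/h^k) * ∑ j ∈ Finset.range (k+1),
          (-1:ℝ)^j * (k.choose j : ℝ) * s7Lap g (q0 + j*h) ≤ (k:ℝ) * h * s7Mom g (k+1) q0 := hd.2
      _ ≤ (k:ℝ) * h * (((k+1).factorial : ℝ) * ((q0 - q1)⁻¹)^(k+1) * B) := by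
          apply mul_le_mul_of_nonneg_left _ (by positivity)
          calc s7Mom g (k+1) q0 ≤ ((k+1).factorial : ℝ) * ((q0 - q1)⁻¹)^(k+1) * s7Lap g q1 := hm
            _ ≤ ((k+1).factorial : ℝ) * ((q0 - q1)⁻¹)^(k+1) * B :=
                mul_le_mul_of_nonneg_left hgB hfacpos
      _ ≤ h * D := by
          have hkk : (k:ℝ) ≤ (k:ℝ)+1 := by linarith
          have h1 : (0:ℝ) ≤ ((k+1).factorial : ℝ) * ((q0 - q1)⁻¹)^(k+1) * B := by
            have h0 : (0:ℝ) ≤ B := le_trans (s7_lap_nonneg hlOK q1) hBl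
            have : (0:ℝ) < q0 - q1 := by linarith
            positivity
          nlinarith [hDbound]
  -- pick h
  obtain ⟨h, hh, hhsmall, hhR⟩ : ∃ h : ℝ, 0 < h ∧ h * D < ε/3 ∧ q0 + k*h < R := by
    refine ⟨min (ε/(6*D)) ((R - q0)/(2*(k+1))), ?_, ?_, ?_⟩
    · have : (0:ℝ) < R - q0 := by linarith [hq0.2]
      positivity
    · have h1 : min (ε/(6*D)) ((R - q0)/(2*(k+1))) ≤ ε/(6*D) := min_le_left _ _
      calc min (ε/(6*D)) ((R - q0)/(2*(k+1))) * D ≤ (ε/(6*D)) * D :=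
            mul_le_mul_of_nonneg_right h1 hDpos.le
        _ = ε/6 := by field_simp
        _ < ε/3 := by linarith
    · have h1 : min (ε/(6*D)) ((R - q0)/(2*(k+1))) ≤ (R - q0)/(2*(k+1)) := min_le_right _ _
      have h2 : (k:ℝ) * ((R - q0)/(2*(k+1))) < R - q0 := by
        have : (0:ℝ) < R - q0 := by linarith [hq0.2]
        rw [mul_div_assoc']
        rw [div_lt_iff₀ (by positivity)]
        nlinarith
      have h3 : (0:ℝ) ≤ (k:ℝ) := by positivity
      nlinarith [mul_le_mul_of_nonneg_left h1 h3]
  -- finite differences converge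
  have hΔ : Tendsto (fun n => (1/h^k) * ∑ j ∈ Finset.range (k+1),
      (-1:ℝ)^j * (k.choose j : ℝ) * s7Lap (F n) (q0 + j*h)) atTop
      (𝓝 ((1/h^k) * ∑ j ∈ Finset.range (k+1),
      (-1:ℝ)^j * (k.choose j : ℝ) * s7Lap flim (q0 + j*h))) := by
    apply Tendsto.const_mul
    apply tendsto_finset_sum
    intro j hj
    apply Tendsto.const_mul
    apply hconv
    constructor
    · have : (0:ℝ) ≤ (j:ℝ)*h := by positivity
      linarith
    · have hj' : (j:ℝ) ≤ (k:ℝ) := by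
        exact_mod_cast Nat.lt_succ_iff.1 (Finset.mem_range.1 hj)
      have : (j:ℝ)*h ≤ (k:ℝ)*h := mul_le_mul_of_nonneg_right hj' hh.le
      linarith
  rw [Metric.tendsto_atTop] at hΔ
  obtain ⟨N, hN⟩ := hΔ (ε/3) (by linarith)
  refine ⟨N, fun n hn => ?_⟩
  have h1 := hmom (F n) (hFOK n) (hB n) hh
  have h2 := hmom flim hlOK hBl hh
  have h3 := hN n hn
  rw [Real.dist_eq] at h3 ⊢
  have key : ∀ x y z w : ℝ, |x - y| ≤ h*D → |z - w| ≤ h*D → |y - w| < ε/3 →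
      |x - z| < ε := by
    intro x y z w a b c
    have t1 := abs_sub_le x y z
    have t2 := abs_sub_le y w z
    have t3 := abs_sub_comm w z
    linarith
  exact key _ _ _ _ h1 h2 h3

lemma s7_exp_tsum (x : ℝ) : Real.exp x = ∑' j : ℕ, x^j / (j.factorial : ℝ) := by
  rw [Real.exp_eq_exp_ℝ, NormedSpace.exp_eq_tsum_div]

/-- Taylor series of the Laplace transform. -/
lemma s7_lap_series {g : ℝ → ℝ} {q1 : ℝ} (hg : S7OK g q1) {q0 : ℝ} (hq : q1 < q0)
    {Δ : ℝ} (hΔ0 : 0 ≤ Δ) (hΔ : Δ < q0 - q1) :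
    s7Lap g (q0 + Δ) = ∑' j : ℕ, (-Δ)^j / (j.factorial : ℝ) * s7Mom g j q0 := by
  have hmeas : ∀ j : ℕ, AEStronglyMeasurable
      (fun u => (-Δ)^j / (j.factorial : ℝ) * (u^j * (Real.exp (-q0*u) * g u)))
      (volume.restrict (Ioi (0:ℝ))) := by
    intro j
    apply AEStronglyMeasurable.const_mul
    exact ((continuous_pow j).aemeasurable.mul
      ((Real.continuous_exp.comp (continuous_const.mul continuous_id)).aemeasurable.mul
        hg.meas)).aestronglyMeasurable
  have hptsum : ∀ u : ℝ, ∑' j : ℕ, (-Δ)^j / (j.factorial : ℝ) * (u^j * (Real.exp (-q0*u) * g u))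
      = Real.exp (-(q0+Δ)*u) * g u := by
    intro u
    have h1 : (fun j : ℕ => (-Δ)^j / (j.factorial : ℝ) * (u^j * (Real.exp (-q0*u) * g u)))
        = fun j : ℕ => (-Δ*u)^j / (j.factorial : ℝ) * (Real.exp (-q0*u) * g u) := by
      funext j; rw [mul_pow]; ring
    rw [h1, tsum_mul_right, ← s7_exp_tsum (-Δ*u), ← mul_assoc, ← Real.exp_add]
    ring_nf
  have key : ∫ u in Ioi (0:ℝ), ∑' j : ℕ,
        (-Δ)^j / (j.factorial : ℝ) * (u^j * (Real.exp (-q0*u) * g u))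
      = ∑' j : ℕ, ∫ u in Ioi (0:ℝ),
        (-Δ)^j / (j.factorial : ℝ) * (u^j * (Real.exp (-q0*u) * g u)) := by
    apply integral_tsum hmeas
    have hcongr : ∀ j : ℕ, (∫⁻ u in Ioi (0:ℝ),
        (‖(-Δ)^j / (j.factorial : ℝ) * (u^j * (Real.exp (-q0*u) * g u))‖₊ : ℝ≥0∞))
        = ∫⁻ u in Ioi (0:ℝ),
          ENNReal.ofReal (Δ^j / (j.factorial : ℝ) * (u^j * (Real.exp (-q0*u) * g u))) := by
      intro j
      apply lintegral_congr_ae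
      filter_upwards [ae_restrict_mem measurableSet_Ioi] with u hu
      have hu0 : (0:ℝ) ≤ u := le_of_lt hu
      have hgu : 0 ≤ g u := hg.nonneg u hu
      rw [← enorm_eq_nnnorm, Real.enorm_eq_ofReal_abs]
      congr 1
      rw [abs_mul, abs_div, abs_pow, abs_neg, abs_of_nonneg hΔ0,
        abs_of_nonneg (by positivity : (0:ℝ) ≤ (j.factorial : ℝ)),
        abs_of_nonneg (by positivity : (0:ℝ) ≤ u^j * (Real.exp (-q0*u) * g u))]
    have hsum : ∑' j : ℕ, ∫⁻ u in Ioi (0:ℝ),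
          ENNReal.ofReal (Δ^j / (j.factorial : ℝ) * (u^j * (Real.exp (-q0*u) * g u)))
        = ∫⁻ u in Ioi (0:ℝ), ∑' j : ℕ,
          ENNReal.ofReal (Δ^j / (j.factorial : ℝ) * (u^j * (Real.exp (-q0*u) * g u))) := by
      rw [← lintegral_tsum]
      intro j
      apply AEMeasurable.ennreal_ofReal
      exact (aemeasurable_const.mul ((continuous_pow j).aemeasurable.mul
        ((Real.continuous_exp.comp (continuous_const.mul continuous_id)).aemeasurable.mul
          hg.meas)))
    have hpt : ∀ᵐ u ∂(volume.restrict (Ioi (0:ℝ))), (∑' j : ℕ,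
          ENNReal.ofReal (Δ^j / (j.factorial : ℝ) * (u^j * (Real.exp (-q0*u) * g u))))
        = ENNReal.ofReal (Real.exp (-(q0-Δ)*u) * g u) := by
      filter_upwards [ae_restrict_mem measurableSet_Ioi] with u hu
      have hu0 : (0:ℝ) ≤ u := le_of_lt hu
      have hgu : 0 ≤ g u := hg.nonneg u hu
      have h1 : (fun j : ℕ => Δ^j / (j.factorial : ℝ) * (u^j * (Real.exp (-q0*u) * g u)))
          = fun j : ℕ => (Δ*u)^j / (j.factorial : ℝ) * (Real.exp (-q0*u) * g u) := by
        funext j; rw [mul_pow]; ring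
      rw [← ENNReal.ofReal_tsum_of_nonneg, h1, tsum_mul_right, ← s7_exp_tsum (Δ*u),
        ← mul_assoc, ← Real.exp_add]
      · congr 2
        ring
      · intro j
        positivity
      · rw [h1]
        exact (Real.summable_pow_div_factorial (Δ*u)).mul_right _
    have hmono : (∫⁻ u in Ioi (0:ℝ), ENNReal.ofReal (Real.exp (-(q0-Δ)*u) * g u))
        ≤ ∫⁻ u in Ioi (0:ℝ), ENNReal.ofReal (Real.exp (-q1*u) * g u) := by
      apply lintegral_mono_ae
      filter_upwards [ae_restrict_mem measurableSet_Ioi] with u hu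
      apply ENNReal.ofReal_le_ofReal
      apply mul_le_mul_of_nonneg_right _ (hg.nonneg u hu)
      apply Real.exp_le_exp.2
      have hu0 : (0:ℝ) < u := hu
      nlinarith
    refine ne_of_lt ?_
    calc ∑' j : ℕ, ∫⁻ u in Ioi (0:ℝ),
          (‖(-Δ)^j / (j.factorial : ℝ) * (u^j * (Real.exp (-q0*u) * g u))‖₊ : ℝ≥0∞)
        = ∑' j : ℕ, ∫⁻ u in Ioi (0:ℝ),
          ENNReal.ofReal (Δ^j / (j.factorial : ℝ) * (u^j * (Real.exp (-q0*u) * g u))) :=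
          tsum_congr hcongr
      _ = ∫⁻ u in Ioi (0:ℝ), ∑' j : ℕ,
          ENNReal.ofReal (Δ^j / (j.factorial : ℝ) * (u^j * (Real.exp (-q0*u) * g u))) := hsum
      _ = ∫⁻ u in Ioi (0:ℝ), ENNReal.ofReal (Real.exp (-(q0-Δ)*u) * g u) :=
          lintegral_congr_ae hpt
      _ ≤ ∫⁻ u in Ioi (0:ℝ), ENNReal.ofReal (Real.exp (-q1*u) * g u) := hmono
      _ < ⊤ := hg.fin
  calc s7Lap g (q0 + Δ)
      = ∫ u in Ioi (0:ℝ), ∑' j : ℕ,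
        (-Δ)^j / (j.factorial : ℝ) * (u^j * (Real.exp (-q0*u) * g u)) := by
        apply integral_congr_ae
        filter_upwards [] with u
        rw [hptsum u]
    _ = ∑' j : ℕ, ∫ u in Ioi (0:ℝ),
        (-Δ)^j / (j.factorial : ℝ) * (u^j * (Real.exp (-q0*u) * g u)) := key
    _ = ∑' j : ℕ, (-Δ)^j / (j.factorial : ℝ) * s7Mom g j q0 := by
        apply tsum_congr
        intro j
        rw [s7Mom, ← integral_const_mul]

/-- Dominated convergence for series with geometric bound. -/
lemma s7_tendsto_tsum {a : ℕ → ℕ → ℝ} {b : ℕ → ℝ} {C r : ℝ} (hr0 : 0 ≤ r) (hr : r < 1)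
    (hab : ∀ n j, |a n j| ≤ C * r^j) (hbb : ∀ j, |b j| ≤ C * r^j)
    (hj : ∀ j, Tendsto (fun n => a n j) atTop (𝓝 (b j))) :
    Tendsto (fun n => ∑' j, a n j) atTop (𝓝 (∑' j, b j)) := by
  have hgeo : Summable (fun j : ℕ => C * r^j) :=
    (summable_geometric_of_lt_one hr0 hr).mul_left C
  have hsa : ∀ n, Summable (a n) := by
    intro n
    apply Summable.of_norm_bounded hgeo
    intro j; simpa using hab n j
  have hsb : Summable b := by
    apply Summable.of_norm_bounded hgeo
    intro j; simpa using hbb j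
  rw [Metric.tendsto_atTop]
  intro ε hε
  -- choose J with tail small
  have htail0 : Tendsto (fun J : ℕ => C * r^J * (1-r)⁻¹) atTop (𝓝 0) := by
    have := tendsto_pow_atTop_nhds_zero_of_lt_one hr0 hr
    have h2 := (this.const_mul C).mul_const (1-r)⁻¹
    simpa using h2
  obtain ⟨J, hJ⟩ : ∃ J : ℕ, C * r^J * (1-r)⁻¹ < ε/4 := by
    have := (htail0.eventually (gt_mem_nhds (by linarith : (0:ℝ) < ε/4)))
    rcases this.exists with ⟨J, hJ⟩
    exact ⟨J, hJ⟩
  -- tail bound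
  have htail : ∀ (f : ℕ → ℝ), Summable f → (∀ j, |f j| ≤ C * r^j) →
      |∑' j, f j - ∑ j ∈ Finset.range J, f j| ≤ C * r^J * (1-r)⁻¹ := by
    intro f hf hfb
    have hdecomp := hf.sum_add_tsum_nat_add J
    have h1 : ∑' j, f j - ∑ j ∈ Finset.range J, f j = ∑' j, f (j + J) := by
      linarith [hdecomp]
    rw [h1]
    have hsumtail : Summable (fun j => f (j + J)) := (summable_nat_add_iff J).2 hf
    calc |∑' j, f (j + J)| ≤ ∑' j, |f (j + J)| := by
          simpa using norm_tsum_le_tsum_norm (f := fun j => f (j + J)) (by simpa using hsumtail.abs)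
      _ ≤ ∑' j : ℕ, C * r^J * r^j := by
          apply Summable.tsum_le_tsum _ (hsumtail.abs) ((summable_geometric_of_lt_one hr0 hr).mul_left _)
          intro j
          calc |f (j + J)| ≤ C * r^(j+J) := hfb (j+J)
            _ = C * r^J * r^j := by rw [pow_add]; ring
      _ = C * r^J * (1-r)⁻¹ := by
          rw [tsum_mul_left, tsum_geometric_of_lt_one hr0 hr]
  -- finite sums converge
  have hfin : Tendsto (fun n => ∑ j ∈ Finset.range J, a n j) atTop
      (𝓝 (∑ j ∈ Finset.range J, b j)) := tendsto_finset_sum _ (fun j _ => hj j)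
  rw [Metric.tendsto_atTop] at hfin
  obtain ⟨N, hN⟩ := hfin (ε/4) (by linarith)
  refine ⟨N, fun n hn => ?_⟩
  have h1 := htail (a n) (hsa n) (hab n)
  have h2 := htail b hsb hbb
  have h3 := hN n hn
  rw [Real.dist_eq] at h3 ⊢
  have t1 := abs_sub_le (∑' j, a n j) (∑ j ∈ Finset.range J, a n j) (∑' j, b j)
  have t2 := abs_sub_le (∑ j ∈ Finset.range J, a n j) (∑ j ∈ Finset.range J, b j) (∑' j, b j)
  have t3 := abs_sub_comm (∑ j ∈ Finset.range J, b j) (∑' j, b j)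
  linarith

/-- Extension of Laplace convergence past the right end, by one Taylor step. -/
lemma s7_lap_ext {F : ℕ → ℝ → ℝ} {flim : ℝ → ℝ} {q1 B R : ℝ}
    (hFOK : ∀ n, S7OK (F n) q1) (hlOK : S7OK flim q1)
    (hB : ∀ n, s7Lap (F n) q1 ≤ B) (hBl : s7Lap flim q1 ≤ B)
    (hconv : ∀ q ∈ Ioo q1 R, Tendsto (fun n => s7Lap (F n) q) atTop (𝓝 (s7Lap flim q)))
    {q0 : ℝ} (hq0 : q0 ∈ Ioo q1 R) {Δ : ℝ} (hΔ0 : 0 ≤ Δ) (hΔ : Δ < q0 - q1) :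
    Tendsto (fun n => s7Lap (F n) (q0 + Δ)) atTop (𝓝 (s7Lap flim (q0 + Δ))) := by
  have hq01 : q1 < q0 := hq0.1
  have hBnn : 0 ≤ B := le_trans (s7_lap_nonneg hlOK q1) hBl
  have hq0q1 : (0:ℝ) < q0 - q1 := by linarith
  have habs : ∀ (g : ℝ → ℝ), S7OK g q1 → s7Lap g q1 ≤ B → ∀ j : ℕ,
      |(-Δ)^j / (j.factorial : ℝ) * s7Mom g j q0| ≤ B * (Δ * (q0-q1)⁻¹)^j := by
    intro g hg hgB j
    have hm0 : 0 ≤ s7Mom g j q0 := s7_mom_nonneg hg j q0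
    have hfac : (0:ℝ) < (j.factorial : ℝ) := by positivity
    rw [abs_mul, abs_div, abs_pow, abs_neg, abs_of_nonneg hΔ0,
      abs_of_nonneg hfac.le, abs_of_nonneg hm0]
    have h1 : s7Mom g j q0 ≤ (j.factorial : ℝ) * ((q0 - q1)⁻¹)^j * B := by
      calc s7Mom g j q0 ≤ (j.factorial : ℝ) * ((q0 - q1)⁻¹)^j * s7Lap g q1 :=
            s7_mom_le hg hq01 j
        _ ≤ (j.factorial : ℝ) * ((q0 - q1)⁻¹)^j * B := by
            apply mul_le_mul_of_nonneg_left hgB (by positivity)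
    calc Δ^j / (j.factorial : ℝ) * s7Mom g j q0
        ≤ Δ^j / (j.factorial : ℝ) * ((j.factorial : ℝ) * ((q0 - q1)⁻¹)^j * B) := by
          apply mul_le_mul_of_nonneg_left h1 (by positivity)
      _ = B * (Δ * (q0-q1)⁻¹)^j := by
          rw [mul_pow]
          field_simp
  have hr0 : 0 ≤ Δ * (q0-q1)⁻¹ := by positivity
  have hr1 : Δ * (q0-q1)⁻¹ < 1 := by
    rw [mul_inv_lt_iff₀ hq0q1]
    linarith
  have hser : ∀ n, s7Lap (F n) (q0 + Δ) = ∑' j : ℕ,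
      (-Δ)^j / (j.factorial : ℝ) * s7Mom (F n) j q0 :=
    fun n => s7_lap_series (hFOK n) hq01 hΔ0 hΔ
  have hserl : s7Lap flim (q0 + Δ) = ∑' j : ℕ,
      (-Δ)^j / (j.factorial : ℝ) * s7Mom flim j q0 :=
    s7_lap_series hlOK hq01 hΔ0 hΔ
  simp only [hser, hserl]
  apply s7_tendsto_tsum hr0 hr1
    (fun n j => habs (F n) (hFOK n) (hB n) j)
    (fun j => habs flim hlOK hBl j)
  intro j
  exact (s7_mom_tendsto hFOK hlOK hB hBl hconv j hq0).const_mul _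

/-- Laplace convergence extends to all `q > q1`. -/
lemma s7_lap_tendsto_all {F : ℕ → ℝ → ℝ} {flim : ℝ → ℝ} {q1 B R : ℝ}
    (hFOK : ∀ n, S7OK (F n) q1) (hlOK : S7OK flim q1)
    (hB : ∀ n, s7Lap (F n) q1 ≤ B) (hBl : s7Lap flim q1 ≤ B) (hR : q1 < R)
    (hconv : ∀ q ∈ Ioo q1 R, Tendsto (fun n => s7Lap (F n) q) atTop (𝓝 (s7Lap flim q))) :
    ∀ q, q1 < q → Tendsto (fun n => s7Lap (F n) q) atTop (𝓝 (s7Lap flim q)) := by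
  obtain ⟨c, hcpos, hc⟩ : ∃ c : ℝ, 0 < c ∧ c = (R - q1)/2 := ⟨_, by linarith, rfl⟩
  obtain ⟨qm, hqm⟩ : ∃ qm : ℝ, qm = q1 + c := ⟨_, rfl⟩
  have main : ∀ k : ℕ, ∀ q, q1 < q → q < qm + (k:ℝ)*(c/2) →
      Tendsto (fun n => s7Lap (F n) q) atTop (𝓝 (s7Lap flim q)) := by
    intro k
    induction k with
    | zero =>
      intro q hq1 hq2
      apply hconv
      refine ⟨hq1, ?_⟩
      push_cast at hq2
      nlinarith [hq2, hc, hqm]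
    | succ k ih =>
      intro q hq1 hq2
      by_cases hcase : q < qm + (k:ℝ)*(c/2)
      · exact ih q hq1 hcase
      · push_neg at hcase
        have hkc : (0:ℝ) ≤ (k:ℝ) := by positivity
        obtain ⟨q0, hq0def⟩ : ∃ q0 : ℝ, q0 = qm + (k:ℝ)*(c/2) - c/8 := ⟨_, rfl⟩
        have hq0mem : q0 ∈ Ioo q1 (qm + (k:ℝ)*(c/2)) := by
          constructor
          · rw [hq0def, hqm]
            nlinarith
          · rw [hq0def]
            linarith
        have hΔ0 : 0 ≤ q - q0 := by
          rw [hq0def]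
          linarith
        have hΔ : q - q0 < q0 - q1 := by
          push_cast at hq2
          rw [hq0def, hqm]
          nlinarith
        have := s7_lap_ext hFOK hlOK hB hBl
          (fun q' hq' => ih q' hq'.1 hq'.2) hq0mem hΔ0 hΔ
        have heq : q0 + (q - q0) = q := by ring
        rw [heq] at this
        exact this
  intro q hq
  obtain ⟨k, hk⟩ := exists_nat_gt ((q - qm)/(c/2))
  apply main k q hq
  have h2 : (0:ℝ) < c/2 := by linarith
  rw [div_lt_iff₀ h2] at hk
  linarith

/-- Laplace transform at `q' ≥ q1` is bounded by the one at `q1`. -/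
lemma s7_lap_mono' {g : ℝ → ℝ} {q1 : ℝ} (hg : S7OK g q1) {q' : ℝ} (hq' : q1 ≤ q') :
    s7Lap g q' ≤ s7Lap g q1 := by
  rcases eq_or_lt_of_le hq' with h | h
  · rw [← h]
  · have h2 : IntegrableOn (fun u => Real.exp (-q'*u) * g u) (Ioi (0:ℝ)) := by
      have := s7_integrableOn hg h 0
      simp only [pow_zero, one_mul] at this
      exact this
    apply integral_mono_ae h2 (s7_int_base hg)
    filter_upwards [ae_restrict_mem measurableSet_Ioi] with u hu
    apply mul_le_mul_of_nonneg_right _ (hg.nonneg u hu)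
    apply Real.exp_le_exp.2
    have : (0:ℝ) < u := hu
    nlinarith

/-- integrability of a bounded continuous kernel against the Laplace weight -/
lemma s7_kernel_int {φ : ℝ → ℝ} {q1 : ℝ} (hφ : S7OK φ q1) {qC : ℝ} (hqC : q1 < qC)
    {ψ : ℝ → ℝ} (hψc : Continuous ψ) {Mψ : ℝ} (hMψ : ∀ t ∈ Icc (0:ℝ) 1, |ψ t| ≤ Mψ) :
    IntegrableOn (fun u => ψ (Real.exp (-u)) * (Real.exp (-qC*u) * φ u)) (Ioi (0:ℝ)) := by
  have hbase : IntegrableOn (fun u => Real.exp (-qC*u) * φ u) (Ioi (0:ℝ)) := by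
    have := s7_integrableOn hφ hqC 0
    simp only [pow_zero, one_mul] at this
    exact this
  apply Integrable.mono' (hbase.const_mul Mψ)
  · exact ((hψc.comp (Real.continuous_exp.comp continuous_neg)).aemeasurable.mul
      ((Real.continuous_exp.comp (continuous_const.mul continuous_id)).aemeasurable.mul
        hφ.meas)).aestronglyMeasurable
  · filter_upwards [ae_restrict_mem measurableSet_Ioi] with u hu
    have hu0 : (0:ℝ) < u := hu
    have hgu : 0 ≤ φ u := hφ.nonneg u hu
    have hmem : Real.exp (-u) ∈ Icc (0:ℝ) 1 := by
      constructor
      · exact (Real.exp_pos _).le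
      · exact Real.exp_le_one_iff.2 (by linarith)
    rw [Real.norm_eq_abs, abs_mul,
      abs_of_nonneg (by positivity : (0:ℝ) ≤ Real.exp (-qC*u) * φ u)]
    exact mul_le_mul_of_nonneg_right (hMψ _ hmem) (by positivity)

/-- The Weierstrass step: convergence of integrals against continuous kernels. -/
lemma s7_weier {F : ℕ → ℝ → ℝ} {flim : ℝ → ℝ} {q1 B : ℝ}
    (hFOK : ∀ n, S7OK (F n) q1) (hlOK : S7OK flim q1)
    (hB : ∀ n, s7Lap (F n) q1 ≤ B) (hBl : s7Lap flim q1 ≤ B)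
    (hAll : ∀ q, q1 < q → Tendsto (fun n => s7Lap (F n) q) atTop (𝓝 (s7Lap flim q)))
    {qC : ℝ} (hqC : q1 < qC) (g : ℝ → ℝ) (hgc : Continuous g) :
    Tendsto (fun n => ∫ u in Ioi (0:ℝ), g (Real.exp (-u)) * (Real.exp (-qC*u) * F n u)) atTop
      (𝓝 (∫ u in Ioi (0:ℝ), g (Real.exp (-u)) * (Real.exp (-qC*u) * flim u))) := by
  have hBnn : 0 ≤ B := le_trans (s7_lap_nonneg hlOK q1) hBl
  -- polynomial integrals converge
  have hpoly : ∀ p : Polynomial ℝ,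
      Tendsto (fun n => ∫ u in Ioi (0:ℝ), p.eval (Real.exp (-u)) * (Real.exp (-qC*u) * F n u))
        atTop (𝓝 (∫ u in Ioi (0:ℝ), p.eval (Real.exp (-u)) * (Real.exp (-qC*u) * flim u))) := by
    intro p
    have hterm : ∀ (φ : ℝ → ℝ), S7OK φ q1 → ∀ i : ℕ,
        IntegrableOn (fun u => p.coeff i * ((Real.exp (-u))^i * (Real.exp (-qC*u) * φ u)))
          (Ioi (0:ℝ)) := by
      intro φ hφ i
      have h1 : q1 < qC + (i:ℝ) := by
        have : (0:ℝ) ≤ (i:ℝ) := by positivity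
        linarith
      have h2 := s7_integrableOn hφ h1 0
      simp only [pow_zero, one_mul] at h2
      apply Integrable.congr (h2.const_mul (p.coeff i))
      filter_upwards [] with u
      have hx : Real.exp (-(qC+(i:ℝ))*u) = Real.exp (-u)^i * Real.exp (-qC*u) := by
        rw [← Real.exp_nat_mul, ← Real.exp_add]
        congr 1
        ring
      rw [hx]
      ring
    have hrw : ∀ (φ : ℝ → ℝ), S7OK φ q1 →
        ∫ u in Ioi (0:ℝ), p.eval (Real.exp (-u)) * (Real.exp (-qC*u) * φ u)
          = ∑ i ∈ Finset.range (p.natDegree + 1), p.coeff i * s7Lap φ (qC + i) := by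
      intro φ hφ
      have h0 : ∫ u in Ioi (0:ℝ), p.eval (Real.exp (-u)) * (Real.exp (-qC*u) * φ u)
          = ∑ i ∈ Finset.range (p.natDegree + 1), ∫ u in Ioi (0:ℝ),
            p.coeff i * ((Real.exp (-u))^i * (Real.exp (-qC*u) * φ u)) := by
        rw [← integral_finset_sum _ (fun i _ => hterm φ hφ i)]
        apply integral_congr_ae
        filter_upwards [] with u
        rw [Polynomial.eval_eq_sum_range, Finset.sum_mul]
        exact Finset.sum_congr rfl (fun i _ => by ring)
      rw [h0]
      apply Finset.sum_congr rfl
      intro i _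
      rw [integral_const_mul]
      congr 1
      have hpt : ∀ u : ℝ, (Real.exp (-u))^i * (Real.exp (-qC*u) * φ u)
          = Real.exp (-(qC+(i:ℝ))*u) * φ u := by
        intro u
        have hx : Real.exp (-(qC+(i:ℝ))*u) = Real.exp (-u)^i * Real.exp (-qC*u) := by
          rw [← Real.exp_nat_mul, ← Real.exp_add]
          congr 1
          ring
        rw [hx]
        ring
      calc ∫ u in Ioi (0:ℝ), (Real.exp (-u))^i * (Real.exp (-qC*u) * φ u)
          = ∫ u in Ioi (0:ℝ), Real.exp (-(qC+(i:ℝ))*u) * φ u := by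
            apply integral_congr_ae
            filter_upwards [] with u
            rw [hpt u]
        _ = s7Lap φ (qC + (i:ℝ)) := rfl
    have e1 : (fun n => ∫ u in Ioi (0:ℝ), p.eval (Real.exp (-u)) * (Real.exp (-qC*u) * F n u))
        = fun n => ∑ i ∈ Finset.range (p.natDegree + 1), p.coeff i * s7Lap (F n) (qC + i) :=
      funext (fun n => hrw (F n) (hFOK n))
    rw [e1, hrw flim hlOK]
    apply tendsto_finset_sum
    intro i _
    have h1 : q1 < qC + (i:ℝ) := by
      have : (0:ℝ) ≤ (i:ℝ) := by positivity
      linarith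
    exact (hAll _ h1).const_mul _
  -- now the ε/3 argument
  rw [Metric.tendsto_atTop]
  intro ε hε
  obtain ⟨Mg, hMg⟩ : ∃ M, ∀ t ∈ Icc (0:ℝ) 1, |g t| ≤ M :=
    (isCompact_Icc).exists_bound_of_continuousOn (hgc.continuousOn)
  -- Weierstrass approximation
  obtain ⟨p, hp⟩ := exists_polynomial_near_continuousMap 0 1
    ⟨fun t : Icc (0:ℝ) 1 => g t, hgc.comp continuous_subtype_val⟩
    (ε/(4*(B+1))) (by positivity)
  have hpg : ∀ t ∈ Icc (0:ℝ) 1, |g t - p.eval t| ≤ ε/(4*(B+1)) := by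
    intro t ht
    have h2 := (p.toContinuousMapOn (Icc (0:ℝ) 1) -
      (⟨fun t : Icc (0:ℝ) 1 => g t, hgc.comp continuous_subtype_val⟩ : C(Icc (0:ℝ) 1, ℝ))).norm_coe_le_norm ⟨t, ht⟩
    have h3 : ‖p.eval t - g t‖ ≤ ‖p.toContinuousMapOn (Icc (0:ℝ) 1) -
        (⟨fun t : Icc (0:ℝ) 1 => g t, hgc.comp continuous_subtype_val⟩ : C(Icc (0:ℝ) 1, ℝ))‖ := by
      simpa [Polynomial.toContinuousMapOn, Polynomial.toContinuousMap] using h2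
    rw [abs_sub_comm]
    rw [Real.norm_eq_abs] at h3
    linarith [hp, h3]
  obtain ⟨Mp, hMp⟩ : ∃ M, ∀ t ∈ Icc (0:ℝ) 1, |Polynomial.eval t p| ≤ M :=
    isCompact_Icc.exists_bound_of_continuousOn (p.continuous.continuousOn)
  -- difference bound
  have hdiff : ∀ (φ : ℝ → ℝ), S7OK φ q1 → s7Lap φ q1 ≤ B →
      |(∫ u in Ioi (0:ℝ), g (Real.exp (-u)) * (Real.exp (-qC*u) * φ u))
        - ∫ u in Ioi (0:ℝ), p.eval (Real.exp (-u)) * (Real.exp (-qC*u) * φ u)| ≤ ε/4 := by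
    intro φ hφ hφB
    have hint1 := s7_kernel_int hφ hqC hgc hMg
    have hint2 := s7_kernel_int hφ hqC p.continuous hMp
    have hbase : IntegrableOn (fun u => Real.exp (-qC*u) * φ u) (Ioi (0:ℝ)) := by
      have := s7_integrableOn hφ hqC 0
      simp only [pow_zero, one_mul] at this
      exact this
    have habs : |∫ u in Ioi (0:ℝ), (g (Real.exp (-u)) * (Real.exp (-qC*u) * φ u)
          - p.eval (Real.exp (-u)) * (Real.exp (-qC*u) * φ u))|
        ≤ ∫ u in Ioi (0:ℝ), |g (Real.exp (-u)) * (Real.exp (-qC*u) * φ u)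
          - p.eval (Real.exp (-u)) * (Real.exp (-qC*u) * φ u)| := by
      simpa [Real.norm_eq_abs] using norm_integral_le_integral_norm
        (f := fun u => g (Real.exp (-u)) * (Real.exp (-qC*u) * φ u)
          - p.eval (Real.exp (-u)) * (Real.exp (-qC*u) * φ u))
        (μ := volume.restrict (Ioi (0:ℝ)))
    have hmono : (∫ u in Ioi (0:ℝ), |g (Real.exp (-u)) * (Real.exp (-qC*u) * φ u)
          - p.eval (Real.exp (-u)) * (Real.exp (-qC*u) * φ u)|)
        ≤ ∫ u in Ioi (0:ℝ), (ε/(4*(B+1))) * (Real.exp (-qC*u) * φ u) := by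
      apply integral_mono_ae ((hint1.sub hint2).abs) (hbase.const_mul _)
      filter_upwards [ae_restrict_mem measurableSet_Ioi] with u hu
      have hu0 : (0:ℝ) < u := hu
      have hgu : 0 ≤ φ u := hφ.nonneg u hu
      have hmem : Real.exp (-u) ∈ Icc (0:ℝ) 1 :=
        ⟨(Real.exp_pos _).le, Real.exp_le_one_iff.2 (by linarith)⟩
      have h1 : g (Real.exp (-u)) * (Real.exp (-qC*u) * φ u)
          - p.eval (Real.exp (-u)) * (Real.exp (-qC*u) * φ u)
          = (g (Real.exp (-u)) - p.eval (Real.exp (-u))) * (Real.exp (-qC*u) * φ u) := by ring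
      simp only [Pi.sub_apply]
      rw [h1, abs_mul, abs_of_nonneg (by positivity : (0:ℝ) ≤ Real.exp (-qC*u) * φ u)]
      exact mul_le_mul_of_nonneg_right (hpg _ hmem) (by positivity)
    have hval : (∫ u in Ioi (0:ℝ), (ε/(4*(B+1))) * (Real.exp (-qC*u) * φ u))
        = (ε/(4*(B+1))) * s7Lap φ qC := integral_const_mul _ _
    have hlapB : s7Lap φ qC ≤ B := le_trans (s7_lap_mono' hφ hqC.le) hφB
    have hlap0 : 0 ≤ s7Lap φ qC := s7_lap_nonneg hφ qC
    have hfinal : (ε/(4*(B+1))) * s7Lap φ qC ≤ ε/4 := by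
      rw [div_mul_eq_mul_div, div_le_div_iff₀ (by positivity) (by positivity)]
      nlinarith
    calc |(∫ u in Ioi (0:ℝ), g (Real.exp (-u)) * (Real.exp (-qC*u) * φ u))
          - ∫ u in Ioi (0:ℝ), p.eval (Real.exp (-u)) * (Real.exp (-qC*u) * φ u)|
        = |∫ u in Ioi (0:ℝ), (g (Real.exp (-u)) * (Real.exp (-qC*u) * φ u)
            - p.eval (Real.exp (-u)) * (Real.exp (-qC*u) * φ u))| := by
          rw [integral_sub hint1 hint2]
      _ ≤ ∫ u in Ioi (0:ℝ), |g (Real.exp (-u)) * (Real.exp (-qC*u) * φ u)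
            - p.eval (Real.exp (-u)) * (Real.exp (-qC*u) * φ u)| := habs
      _ ≤ ∫ u in Ioi (0:ℝ), (ε/(4*(B+1))) * (Real.exp (-qC*u) * φ u) := hmono
      _ = (ε/(4*(B+1))) * s7Lap φ qC := hval
      _ ≤ ε/4 := hfinal
  obtain ⟨N, hN⟩ := (Metric.tendsto_atTop.1 (hpoly p)) (ε/4) (by linarith)
  refine ⟨N, fun n hn => ?_⟩
  have d1 := hdiff (F n) (hFOK n) (hB n)
  have d2 := hdiff flim hlOK hBl
  have d3 := hN n hn
  rw [Real.dist_eq] at d3 ⊢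
  have t1 := abs_sub_le
    (∫ u in Ioi (0:ℝ), g (Real.exp (-u)) * (Real.exp (-qC*u) * F n u))
    (∫ u in Ioi (0:ℝ), p.eval (Real.exp (-u)) * (Real.exp (-qC*u) * F n u))
    (∫ u in Ioi (0:ℝ), g (Real.exp (-u)) * (Real.exp (-qC*u) * flim u))
  have t2 := abs_sub_le
    (∫ u in Ioi (0:ℝ), p.eval (Real.exp (-u)) * (Real.exp (-qC*u) * F n u))
    (∫ u in Ioi (0:ℝ), p.eval (Real.exp (-u)) * (Real.exp (-qC*u) * flim u))
    (∫ u in Ioi (0:ℝ), g (Real.exp (-u)) * (Real.exp (-qC*u) * flim u))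
  have t3 := abs_sub_comm
    (∫ u in Ioi (0:ℝ), p.eval (Real.exp (-u)) * (Real.exp (-qC*u) * flim u))
    (∫ u in Ioi (0:ℝ), g (Real.exp (-u)) * (Real.exp (-qC*u) * flim u))
  linarith

/-- Piecewise-linear bump: `1` on `[a,b]`, `0` outside `(a-η, b+η)`. -/
def s7bump (a b η : ℝ) (u : ℝ) : ℝ :=
  max 0 (min 1 (min ((u - a)/η + 1) ((b - u)/η + 1)))

lemma s7bump_cont (a b η : ℝ) : Continuous (s7bump a b η) := by
  apply continuous_const.max
  apply continuous_const.min
  exact (((continuous_id.sub continuous_const).div_const η).add continuous_const).min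
    (((continuous_const.sub continuous_id).div_const η).add continuous_const)

lemma s7bump_nonneg (a b η u : ℝ) : 0 ≤ s7bump a b η u := le_max_left _ _

lemma s7bump_le_one (a b η u : ℝ) : s7bump a b η u ≤ 1 :=
  max_le zero_le_one (min_le_left _ _)

lemma s7bump_eq_one {a b η u : ℝ} (hη : 0 < η) (ha : a ≤ u) (hb : u ≤ b) :
    s7bump a b η u = 1 := by
  have h1 : (1:ℝ) ≤ (u - a)/η + 1 := by
    have : 0 ≤ (u - a)/η := div_nonneg (by linarith) hη.le
    linarith
  have h2 : (1:ℝ) ≤ (b - u)/η + 1 := by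
    have : 0 ≤ (b - u)/η := div_nonneg (by linarith) hη.le
    linarith
  rw [s7bump, min_eq_left (le_min h1 h2), max_eq_right zero_le_one]

lemma s7bump_eq_zero_left {a b η u : ℝ} (hη : 0 < η) (h : u ≤ a - η) :
    s7bump a b η u = 0 := by
  have h1 : (u - a)/η + 1 ≤ 0 := by
    have : (u - a)/η ≤ -1 := by
      rw [div_le_iff₀ hη]
      linarith
    linarith
  rw [s7bump, max_eq_left]
  calc min 1 (min ((u - a)/η + 1) ((b - u)/η + 1))
      ≤ min ((u - a)/η + 1) ((b - u)/η + 1) := min_le_right _ _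
    _ ≤ (u - a)/η + 1 := min_le_left _ _
    _ ≤ 0 := h1

lemma s7bump_eq_zero_right {a b η u : ℝ} (hη : 0 < η) (h : b + η ≤ u) :
    s7bump a b η u = 0 := by
  have h1 : (b - u)/η + 1 ≤ 0 := by
    have : (b - u)/η ≤ -1 := by
      rw [div_le_iff₀ hη]
      linarith
    linarith
  rw [s7bump, max_eq_left]
  calc min 1 (min ((u - a)/η + 1) ((b - u)/η + 1))
      ≤ min ((u - a)/η + 1) ((b - u)/η + 1) := min_le_right _ _
    _ ≤ (b - u)/η + 1 := min_le_right _ _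
    _ ≤ 0 := h1

/-- Transfer: integrals of `χ · F n` converge for continuous `χ` vanishing at `∞`. -/
lemma s7_kernel_tendsto {F : ℕ → ℝ → ℝ} {flim : ℝ → ℝ} {q1 B : ℝ}
    (hFOK : ∀ n, S7OK (F n) q1) (hlOK : S7OK flim q1)
    (hB : ∀ n, s7Lap (F n) q1 ≤ B) (hBl : s7Lap flim q1 ≤ B)
    (hAll : ∀ q, q1 < q → Tendsto (fun n => s7Lap (F n) q) atTop (𝓝 (s7Lap flim q)))
    {qC : ℝ} (hqC : q1 < qC)
    (χ : ℝ → ℝ) (hχ : Continuous χ) {L : ℝ} (hL : 0 < L)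
    (hsupp : ∀ u, L ≤ u → χ u = 0) :
    Tendsto (fun n => ∫ u in Ioi (0:ℝ), χ u * F n u) atTop
      (𝓝 (∫ u in Ioi (0:ℝ), χ u * flim u)) := by
  have hlogc : Continuous fun t : ℝ => Real.log (max t (Real.exp (-(2*L)))) := by
    apply Real.continuousOn_log.comp_continuous (continuous_id.max continuous_const)
    intro t
    simp only [mem_compl_iff, mem_singleton_iff]
    have : 0 < max t (Real.exp (-(2*L))) := lt_max_of_lt_right (Real.exp_pos _)
    exact this.ne'
  set g : ℝ → ℝ := fun t =>
    χ (-(Real.log (max t (Real.exp (-(2*L)))))) *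
      Real.exp (-qC * Real.log (max t (Real.exp (-(2*L))))) with hgdef
  have hgc : Continuous g := by
    rw [hgdef]
    exact (hχ.comp hlogc.neg).mul (Real.continuous_exp.comp (continuous_const.mul hlogc))
  have hkey : ∀ (φ : ℝ → ℝ), ∀ u ∈ Ioi (0:ℝ),
      g (Real.exp (-u)) * (Real.exp (-qC*u) * φ u) = χ u * φ u := by
    intro φ u hu
    have hu0 : (0:ℝ) < u := hu
    rcases le_or_gt u (2*L) with hcase | hcase
    · have hmax : max (Real.exp (-u)) (Real.exp (-(2*L))) = Real.exp (-u) :=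
        max_eq_left (Real.exp_le_exp.2 (by linarith))
      rw [hgdef]
      simp only []
      rw [hmax, Real.log_exp, neg_neg]
      have : Real.exp (-qC * -u) * (Real.exp (-qC*u) * φ u) = φ u := by
        rw [← mul_assoc, ← Real.exp_add]
        have h0 : -qC * -u + -qC*u = 0 := by ring
        rw [h0, Real.exp_zero, one_mul]
      calc χ u * Real.exp (-qC * -u) * (Real.exp (-qC*u) * φ u)
          = χ u * (Real.exp (-qC * -u) * (Real.exp (-qC*u) * φ u)) := by ring
        _ = χ u * φ u := by rw [this]
    · have hmax : max (Real.exp (-u)) (Real.exp (-(2*L))) = Real.exp (-(2*L)) :=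
        max_eq_right (Real.exp_le_exp.2 (by linarith))
      rw [hgdef]
      simp only []
      rw [hmax, Real.log_exp, neg_neg]
      rw [hsupp (2*L) (by linarith), hsupp u (by linarith)]
      ring
  have he1 : ∀ (φ : ℝ → ℝ), S7OK φ q1 →
      ∫ u in Ioi (0:ℝ), g (Real.exp (-u)) * (Real.exp (-qC*u) * φ u)
        = ∫ u in Ioi (0:ℝ), χ u * φ u := by
    intro φ hφ
    apply integral_congr_ae
    filter_upwards [ae_restrict_mem measurableSet_Ioi] with u hu
    exact hkey φ u hu
  have := s7_weier hFOK hlOK hB hBl hAll hqC g hgc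
  rw [he1 flim hlOK] at this
  have he2 : (fun n => ∫ u in Ioi (0:ℝ), g (Real.exp (-u)) * (Real.exp (-qC*u) * F n u))
      = fun n => ∫ u in Ioi (0:ℝ), χ u * F n u :=
    funext (fun n => he1 (F n) (hFOK n))
  rw [he2] at this
  exact this

lemma s7_int_Ioc {φ : ℝ → ℝ} {q1 : ℝ} (hφ : S7OK φ q1) (hq1 : 0 ≤ q1) {a b : ℝ}
    (ha : 0 ≤ a) : IntegrableOn φ (Ioc a b) := by
  have hsub : Ioc a b ⊆ Ioi (0:ℝ) := fun x hx => lt_of_le_of_lt ha hx.1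
  have hker : IntegrableOn (fun u => Real.exp (-(q1+1)*u) * φ u) (Ioi (0:ℝ)) := by
    have := s7_integrableOn hφ (lt_add_one q1) 0
    simp only [pow_zero, one_mul] at this
    exact this
  apply Integrable.mono' ((hker.mono_set hsub).const_mul (Real.exp ((q1+1)*b)))
  · exact hφ.meas.aestronglyMeasurable.mono_measure (Measure.restrict_mono hsub le_rfl)
  · filter_upwards [ae_restrict_mem measurableSet_Ioc] with u hu
    have hu0 : (0:ℝ) < u := lt_of_le_of_lt ha hu.1
    have hφu : 0 ≤ φ u := hφ.nonneg u hu0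
    rw [Real.norm_eq_abs, abs_of_nonneg hφu]
    have h1 : Real.exp ((q1+1)*b) * (Real.exp (-(q1+1)*u) * φ u)
        = Real.exp ((q1+1)*(b-u)) * φ u := by
      rw [← mul_assoc, ← Real.exp_add]
      ring_nf
    rw [h1]
    have h2 : (1:ℝ) ≤ Real.exp ((q1+1)*(b-u)) := by
      have hub : u ≤ b := hu.2
      have := Real.add_one_le_exp ((q1+1)*(b-u))
      nlinarith
    nlinarith

lemma s7_ind_eq {φ : ℝ → ℝ} {a b : ℝ} (ha : 0 ≤ a) :
    ∫ u in Ioi (0:ℝ), (Ioc a b).indicator φ u = ∫ u in Ioc a b, φ u := by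
  have hsub : Ioc a b ⊆ Ioi (0:ℝ) := fun x hx => lt_of_le_of_lt ha hx.1
  rw [integral_indicator measurableSet_Ioc, Measure.restrict_restrict measurableSet_Ioc,
    inter_eq_self_of_subset_left hsub]

lemma s7_ind_int {φ : ℝ → ℝ} {q1 : ℝ} (hφ : S7OK φ q1) (hq1 : 0 ≤ q1) {a b : ℝ}
    (ha : 0 ≤ a) :
    Integrable ((Ioc a b).indicator φ) (volume.restrict (Ioi (0:ℝ))) := by
  have hsub : Ioc a b ⊆ Ioi (0:ℝ) := fun x hx => lt_of_le_of_lt ha hx.1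
  rw [integrable_indicator_iff measurableSet_Ioc]
  rw [IntegrableOn, Measure.restrict_restrict measurableSet_Ioc,
    inter_eq_self_of_subset_left hsub]
  exact s7_int_Ioc hφ hq1 ha

lemma s7_chi_int {φ : ℝ → ℝ} {q1 : ℝ} (hφ : S7OK φ q1) (hq1 : 0 ≤ q1)
    {χ : ℝ → ℝ} (hχ : Continuous χ) {L : ℝ} (hL : 0 < L)
    (h0 : ∀ u, 0 ≤ χ u) (h1 : ∀ u, χ u ≤ 1) (hsupp : ∀ u, L ≤ u → χ u = 0) :
    Integrable (fun u => χ u * φ u) (volume.restrict (Ioi (0:ℝ))) := by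
  apply Integrable.mono' (s7_ind_int hφ hq1 (a := 0) (b := L) le_rfl)
  · exact (hχ.aemeasurable.mul hφ.meas).aestronglyMeasurable
  · filter_upwards [ae_restrict_mem measurableSet_Ioi] with u hu
    have hu0 : (0:ℝ) < u := hu
    have hφu : 0 ≤ φ u := hφ.nonneg u hu0
    rw [Real.norm_eq_abs, abs_of_nonneg (mul_nonneg (h0 u) hφu)]
    rcases le_or_gt u L with hc | hc
    · have hmem : u ∈ Ioc (0:ℝ) L := mem_Ioc.2 ⟨hu0, hc⟩
      rw [indicator_of_mem hmem]
      nlinarith [h1 u, h0 u]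
    · have hmem : u ∉ Ioc (0:ℝ) L := by
        rw [mem_Ioc]
        push_neg
        intro _
        linarith
      rw [hsupp u hc.le, indicator_of_notMem hmem]
      simp

set_option maxHeartbeats 1000000 in
/-- The final sandwich: pointwise convergence at continuity points. -/
lemma s7_final {F : ℕ → ℝ → ℝ} {flim : ℝ → ℝ} {q1 B : ℝ} (hq1 : 0 ≤ q1)
    (hFOK : ∀ n, S7OK (F n) q1) (hlOK : S7OK flim q1)
    (hB : ∀ n, s7Lap (F n) q1 ≤ B) (hBl : s7Lap flim q1 ≤ B)
    (hAll : ∀ q, q1 < q → Tendsto (fun n => s7Lap (F n) q) atTop (𝓝 (s7Lap flim q)))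
    (hFanti : ∀ n, AntitoneOn (F n) (Ioi 0)) (hlanti : AntitoneOn flim (Ioi 0))
    {u0 : ℝ} (hu0 : 0 < u0) (hcont : ContinuousWithinAt flim (Ioi 0) u0) :
    Tendsto (fun n => F n u0) atTop (𝓝 (flim u0)) := by
  have hca : ContinuousAt flim u0 := hcont.continuousAt (Ioi_mem_nhds hu0)
  rw [Metric.tendsto_atTop]
  intro ε' hε'
  obtain ⟨ε, hε, hεε'⟩ : ∃ ε : ℝ, 0 < ε ∧ 4*ε < ε' := ⟨ε'/8, by linarith, by linarith⟩
  rw [Metric.continuousAt_iff] at hca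
  obtain ⟨δw, hδw, hδwprop⟩ := hca ε hε
  simp only [Real.dist_eq] at hδwprop
  obtain ⟨δ, hδ, hδ1, hδ2⟩ : ∃ δ : ℝ, 0 < δ ∧ δ ≤ δw/2 ∧ δ ≤ u0/4 :=
    ⟨min (δw/2) (u0/4), by positivity, min_le_left _ _, min_le_right _ _⟩
  have hF0 : 0 ≤ flim u0 := hlOK.nonneg u0 hu0
  obtain ⟨η, hη, hη1, hη2⟩ : ∃ η : ℝ, 0 < η ∧ η ≤ δ/4 ∧
      2*η*(flim u0 + ε) ≤ δ*ε := by
    refine ⟨min (δ/4) (δ*ε/(2*(flim u0 + ε + 1))), by positivity, min_le_left _ _, ?_⟩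
    have h1 : min (δ/4) (δ*ε/(2*(flim u0 + ε + 1))) ≤ δ*ε/(2*(flim u0 + ε + 1)) :=
      min_le_right _ _
    have h2 : (0:ℝ) < flim u0 + ε + 1 := by linarith
    have h3 : (0:ℝ) < min (δ/4) (δ*ε/(2*(flim u0 + ε + 1))) := by positivity
    have h4 : δ*ε/(2*(flim u0 + ε + 1)) * (2*(flim u0 + ε + 1)) = δ*ε := by
      field_simp
    nlinarith
  have hqCgt : q1 < q1 + 1 := lt_add_one q1
  -- the two bumps
  have hχp := s7_kernel_tendsto hFOK hlOK hB hBl hAll hqCgt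
    (s7bump (u0-δ) u0 η) (s7bump_cont _ _ _) (L := u0 + δ) (by linarith)
    (fun u hu => s7bump_eq_zero_right hη (by linarith))
  have hχm := s7_kernel_tendsto hFOK hlOK hB hBl hAll hqCgt
    (s7bump (u0+η) (u0+δ-η) η) (s7bump_cont _ _ _) (L := u0 + δ) (by linarith)
    (fun u hu => s7bump_eq_zero_right hη (by linarith))
  -- (A) δ * F n u0 ≤ ∫ χp F n
  have hA : ∀ n, δ * F n u0 ≤ ∫ u in Ioi (0:ℝ), s7bump (u0-δ) u0 η u * F n u := by
    intro n
    have hsub : Ioc (u0-δ) u0 ⊆ Ioi (0:ℝ) := fun x hx => by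
      have := hx.1
      simp only [mem_Ioi]
      linarith
    have hint := s7_int_Ioc (hFOK n) hq1 (a := u0-δ) (b := u0) (by linarith)
    have step1 : δ * F n u0 ≤ ∫ u in Ioc (u0-δ) u0, F n u := by
      have hconst : ∫ _u in Ioc (u0-δ) u0, F n u0 = δ * F n u0 := by
        rw [setIntegral_const, Real.volume_real_Ioc_of_le (by linarith)]
        simp only [smul_eq_mul]
        ring_nf
      rw [← hconst]
      apply setIntegral_mono_on (integrableOn_const (by
        rw [Real.volume_Ioc]; exact ENNReal.ofReal_ne_top)) hint measurableSet_Ioc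
      intro u hu
      exact hFanti n (hsub hu) hu0 hu.2
    have step2 : ∫ u in Ioc (u0-δ) u0, F n u
        ≤ ∫ u in Ioi (0:ℝ), s7bump (u0-δ) u0 η u * F n u := by
      rw [← s7_ind_eq (by linarith : (0:ℝ) ≤ u0-δ)]
      apply integral_mono_ae (s7_ind_int (hFOK n) hq1 (by linarith))
        (s7_chi_int (hFOK n) hq1 (s7bump_cont _ _ _) (L := u0+δ) (by linarith)
          (s7bump_nonneg _ _ _) (s7bump_le_one _ _ _)
          (fun u hu => s7bump_eq_zero_right hη (by linarith)))
      filter_upwards [ae_restrict_mem measurableSet_Ioi] with u hu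
      by_cases hmem : u ∈ Ioc (u0-δ) u0
      · rw [indicator_of_mem hmem, s7bump_eq_one hη hmem.1.le hmem.2, one_mul]
      · rw [indicator_of_notMem hmem]
        exact mul_nonneg (s7bump_nonneg _ _ _ _) ((hFOK n).nonneg u hu)
    linarith
  -- (B) ∫ χp flim ≤ (δ+2η)(flim u0 + ε)
  have hBup : (∫ u in Ioi (0:ℝ), s7bump (u0-δ) u0 η u * flim u)
      ≤ (δ+2*η)*(flim u0 + ε) := by
    have hc0 : (0:ℝ) < u0-δ-η := by linarith
    have hsub : Ioc (u0-δ-η) (u0+η) ⊆ Ioi (0:ℝ) := fun x hx => by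
      have := hx.1
      simp only [mem_Ioi]
      linarith
    have h1 : (∫ u in Ioi (0:ℝ), s7bump (u0-δ) u0 η u * flim u)
        ≤ ∫ u in Ioi (0:ℝ), (Ioc (u0-δ-η) (u0+η)).indicator flim u := by
      apply integral_mono_ae
        (s7_chi_int hlOK hq1 (s7bump_cont _ _ _) (L := u0+δ) (by linarith)
          (s7bump_nonneg _ _ _) (s7bump_le_one _ _ _)
          (fun u hu => s7bump_eq_zero_right hη (by linarith)))
        (s7_ind_int hlOK hq1 hc0.le)
      filter_upwards [ae_restrict_mem measurableSet_Ioi] with u hu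
      by_cases hmem : u ∈ Ioc (u0-δ-η) (u0+η)
      · rw [indicator_of_mem hmem]
        have := hlOK.nonneg u hu
        nlinarith [s7bump_le_one (u0-δ) u0 η u, s7bump_nonneg (u0-δ) u0 η u]
      · rw [indicator_of_notMem hmem]
        rw [mem_Ioc, not_and_or] at hmem
        rcases hmem with hmem | hmem
        · push_neg at hmem
          rw [s7bump_eq_zero_left hη (by linarith), zero_mul]
        · push_neg at hmem
          rw [s7bump_eq_zero_right hη (by linarith), zero_mul]
    have h2 : (∫ u in Ioi (0:ℝ), (Ioc (u0-δ-η) (u0+η)).indicator flim u)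
        = ∫ u in Ioc (u0-δ-η) (u0+η), flim u := s7_ind_eq hc0.le
    have h3 : (∫ u in Ioc (u0-δ-η) (u0+η), flim u) ≤ (δ+2*η) * flim (u0-δ-η) := by
      have hconst : ∫ _u in Ioc (u0-δ-η) (u0+η), flim (u0-δ-η) = (δ+2*η) * flim (u0-δ-η) := by
        rw [setIntegral_const, Real.volume_real_Ioc_of_le (by linarith)]
        simp only [smul_eq_mul]
        ring_nf
      rw [← hconst]
      apply setIntegral_mono_on (s7_int_Ioc hlOK hq1 hc0.le)
        (integrableOn_const (by
          rw [Real.volume_Ioc]; exact ENNReal.ofReal_ne_top)) measurableSet_Ioc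
      intro u hu
      exact hlanti hc0 (hsub hu) hu.1.le
    have h4 : flim (u0-δ-η) ≤ flim u0 + ε := by
      have := hδwprop (x := u0-δ-η) (by
        rw [abs_of_nonpos (by linarith)]
        linarith)
      have h5 := abs_lt.1 this
      linarith [h5.2]
    calc (∫ u in Ioi (0:ℝ), s7bump (u0-δ) u0 η u * flim u)
        ≤ ∫ u in Ioc (u0-δ-η) (u0+η), flim u := h2 ▸ h1
      _ ≤ (δ+2*η) * flim (u0-δ-η) := h3
      _ ≤ (δ+2*η)*(flim u0 + ε) := mul_le_mul_of_nonneg_left h4 (by linarith)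
  -- (C) ∫ χm F n ≤ δ * F n u0
  have hC : ∀ n, (∫ u in Ioi (0:ℝ), s7bump (u0+η) (u0+δ-η) η u * F n u) ≤ δ * F n u0 := by
    intro n
    have hsub : Ioc u0 (u0+δ) ⊆ Ioi (0:ℝ) := fun x hx => lt_trans hu0 hx.1
    have h1 : (∫ u in Ioi (0:ℝ), s7bump (u0+η) (u0+δ-η) η u * F n u)
        ≤ ∫ u in Ioi (0:ℝ), (Ioc u0 (u0+δ)).indicator (F n) u := by
      apply integral_mono_ae
        (s7_chi_int (hFOK n) hq1 (s7bump_cont _ _ _) (L := u0+δ) (by linarith)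
          (s7bump_nonneg _ _ _) (s7bump_le_one _ _ _)
          (fun u hu => s7bump_eq_zero_right hη (by linarith)))
        (s7_ind_int (hFOK n) hq1 hu0.le)
      filter_upwards [ae_restrict_mem measurableSet_Ioi] with u hu
      by_cases hmem : u ∈ Ioc u0 (u0+δ)
      · rw [indicator_of_mem hmem]
        have := (hFOK n).nonneg u hu
        nlinarith [s7bump_le_one (u0+η) (u0+δ-η) η u, s7bump_nonneg (u0+η) (u0+δ-η) η u]
      · rw [indicator_of_notMem hmem]
        rw [mem_Ioc, not_and_or] at hmem
        rcases hmem with hmem | hmem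
        · push_neg at hmem
          rw [s7bump_eq_zero_left hη (by linarith), zero_mul]
        · push_neg at hmem
          rw [s7bump_eq_zero_right hη (by linarith), zero_mul]
    have h2 : (∫ u in Ioi (0:ℝ), (Ioc u0 (u0+δ)).indicator (F n) u)
        = ∫ u in Ioc u0 (u0+δ), F n u := s7_ind_eq hu0.le
    have h3 : (∫ u in Ioc u0 (u0+δ), F n u) ≤ δ * F n u0 := by
      have hconst : ∫ _u in Ioc u0 (u0+δ), F n u0 = δ * F n u0 := by
        rw [setIntegral_const, Real.volume_real_Ioc_of_le (by linarith)]
        simp only [smul_eq_mul]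
        ring_nf
      rw [← hconst]
      apply setIntegral_mono_on (s7_int_Ioc (hFOK n) hq1 hu0.le)
        (integrableOn_const (by
          rw [Real.volume_Ioc]; exact ENNReal.ofReal_ne_top)) measurableSet_Ioc
      intro u hu
      exact hFanti n hu0 (hsub hu) hu.1.le
    linarith [h2 ▸ h1]
  -- (D) (δ-2η)(flim u0 - ε) ≤ ∫ χm flim
  have hD : (δ-2*η)*(flim u0 - ε) ≤ ∫ u in Ioi (0:ℝ), s7bump (u0+η) (u0+δ-η) η u * flim u := by
    have hsub : Ioc (u0+η) (u0+δ-η) ⊆ Ioi (0:ℝ) := fun x hx => by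
      have := hx.1
      simp only [mem_Ioi]
      linarith
    have h1 : (∫ u in Ioi (0:ℝ), (Ioc (u0+η) (u0+δ-η)).indicator flim u)
        ≤ ∫ u in Ioi (0:ℝ), s7bump (u0+η) (u0+δ-η) η u * flim u := by
      apply integral_mono_ae (s7_ind_int hlOK hq1 (by linarith))
        (s7_chi_int hlOK hq1 (s7bump_cont _ _ _) (L := u0+δ) (by linarith)
          (s7bump_nonneg _ _ _) (s7bump_le_one _ _ _)
          (fun u hu => s7bump_eq_zero_right hη (by linarith)))
      filter_upwards [ae_restrict_mem measurableSet_Ioi] with u hu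
      by_cases hmem : u ∈ Ioc (u0+η) (u0+δ-η)
      · rw [indicator_of_mem hmem, s7bump_eq_one hη hmem.1.le hmem.2, one_mul]
      · rw [indicator_of_notMem hmem]
        exact mul_nonneg (s7bump_nonneg _ _ _ _) (hlOK.nonneg u hu)
    have h2 : (∫ u in Ioi (0:ℝ), (Ioc (u0+η) (u0+δ-η)).indicator flim u)
        = ∫ u in Ioc (u0+η) (u0+δ-η), flim u := s7_ind_eq (by linarith)
    have h3 : (δ-2*η) * flim (u0+δ-η) ≤ ∫ u in Ioc (u0+η) (u0+δ-η), flim u := by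
      have hconst : ∫ _u in Ioc (u0+η) (u0+δ-η), flim (u0+δ-η)
          = (δ-2*η) * flim (u0+δ-η) := by
        rw [setIntegral_const, Real.volume_real_Ioc_of_le (by linarith)]
        simp only [smul_eq_mul]
        ring_nf
      rw [← hconst]
      apply setIntegral_mono_on
        (integrableOn_const (by
          rw [Real.volume_Ioc]; exact ENNReal.ofReal_ne_top))
        (s7_int_Ioc hlOK hq1 (by linarith)) measurableSet_Ioc
      intro u hu
      exact hlanti (hsub hu) (by simp only [mem_Ioi]; linarith) hu.2
    have h4 : flim u0 - ε ≤ flim (u0+δ-η) := by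
      have := hδwprop (x := u0+δ-η) (by
        rw [abs_of_nonneg (by linarith)]
        linarith)
      have h5 := abs_lt.1 this
      linarith [h5.1]
    have h6 : (0:ℝ) ≤ δ-2*η := by linarith
    calc (δ-2*η)*(flim u0 - ε) ≤ (δ-2*η) * flim (u0+δ-η) :=
        mul_le_mul_of_nonneg_left h4 h6
      _ ≤ ∫ u in Ioc (u0+η) (u0+δ-η), flim u := h3
      _ = ∫ u in Ioi (0:ℝ), (Ioc (u0+η) (u0+δ-η)).indicator flim u := h2.symm
      _ ≤ ∫ u in Ioi (0:ℝ), s7bump (u0+η) (u0+δ-η) η u * flim u := h1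
  -- assemble
  obtain ⟨N1, hN1⟩ := Metric.tendsto_atTop.1 hχp (δ*ε) (by positivity)
  obtain ⟨N2, hN2⟩ := Metric.tendsto_atTop.1 hχm (δ*ε) (by positivity)
  refine ⟨max N1 N2, fun n hn => ?_⟩
  have e1 := hN1 n (le_trans (le_max_left _ _) hn)
  have e2 := hN2 n (le_trans (le_max_right _ _) hn)
  rw [Real.dist_eq] at e1 e2 ⊢
  have e1' := abs_lt.1 e1
  have e2' := abs_lt.1 e2
  have hexp1 : (δ+2*η)*(flim u0 + ε) ≤ δ*(flim u0 + ε) + δ*ε := by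
    have he : (δ+2*η)*(flim u0 + ε) = δ*(flim u0+ε) + 2*η*(flim u0+ε) := by ring
    linarith [hη2]
  have h3 : 2*η*(flim u0 - ε) ≤ δ*ε := by
    rcases le_or_gt (flim u0 - ε) 0 with hle | hlt
    · have ha1 : 2*η*(flim u0 - ε) ≤ 0 :=
        mul_nonpos_of_nonneg_of_nonpos (by positivity) hle
      have ha2 : (0:ℝ) < δ*ε := by positivity
      linarith
    · have h4 : flim u0 - ε ≤ flim u0 + ε := by linarith
      calc 2*η*(flim u0 - ε) ≤ 2*η*(flim u0 + ε) :=
            mul_le_mul_of_nonneg_left h4 (by positivity)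
        _ ≤ δ*ε := hη2
  have hexp2 : δ*(flim u0 - ε) - δ*ε ≤ (δ-2*η)*(flim u0 - ε) := by
    have he : (δ-2*η)*(flim u0 - ε) = δ*(flim u0-ε) - 2*η*(flim u0-ε) := by ring
    linarith [h3]
  have up : F n u0 ≤ flim u0 + 3*ε := by
    have h1 := hA n
    have hfin : δ * F n u0 ≤ δ*(flim u0 + 3*ε) := by linarith [e1'.2, hBup]
    exact le_of_mul_le_mul_left (by linarith) hδ
  have lo : flim u0 - 3*ε ≤ F n u0 := by
    have h1 := hC n
    have hfin : δ*(flim u0 - 3*ε) ≤ δ * F n u0 := by linarith [e2'.1, hD]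
    exact le_of_mul_le_mul_left (by linarith) hδ
  rw [abs_lt]
  constructor <;> linarith


/-- convergence of Laplace transforms of non-increasing functions
implies pointwise convergence at continuity points of the limit. -/
theorem stmt7
    (f : ℕ → ℝ → ℝ) (flim : ℝ → ℝ)
    (hfnonneg : ∀ n, ∀ u ∈ Ioi (0 : ℝ), 0 ≤ f n u)
    (hfanti : ∀ n, AntitoneOn (f n) (Ioi 0))
    (hlnonneg : ∀ u ∈ Ioi (0 : ℝ), 0 ≤ flim u)
    (hlanti : AntitoneOn flim (Ioi 0))
    (qa qb : ℝ) (hqa : 0 ≤ qa) (hqab : qa < qb)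
    (hfin : ∀ q ∈ Ioo qa qb,
      (∫⁻ u in Ioi (0 : ℝ), ENNReal.ofReal (Real.exp (-q * u) * flim u)) < ⊤)
    (hconv : ∀ q ∈ Ioo qa qb,
      Tendsto (fun n => ∫⁻ u in Ioi (0 : ℝ), ENNReal.ofReal (Real.exp (-q * u) * f n u))
        atTop (𝓝 (∫⁻ u in Ioi (0 : ℝ), ENNReal.ofReal (Real.exp (-q * u) * flim u)))) :
    ∀ u ∈ Ioi (0 : ℝ), ContinuousWithinAt flim (Ioi 0) u →
      Tendsto (fun n => f n u) atTop (𝓝 (flim u)) := by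
  intro u0 hu0mem hcont
  have hu0 : (0:ℝ) < u0 := hu0mem
  obtain ⟨qA, hqA1, hqA2⟩ : ∃ qA : ℝ, qa < qA ∧ qA < qb :=
    ⟨(qa+qb)/2, by linarith, by linarith⟩
  have hqA0 : (0:ℝ) ≤ qA := le_of_lt (lt_of_le_of_lt hqa hqA1)
  have hmeasn : ∀ n, AEMeasurable (f n) (volume.restrict (Ioi (0:ℝ))) :=
    fun n => aemeasurable_restrict_of_antitoneOn measurableSet_Ioi (hfanti n)
  have hmeasl : AEMeasurable flim (volume.restrict (Ioi (0:ℝ))) :=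
    aemeasurable_restrict_of_antitoneOn measurableSet_Ioi hlanti
  have hΛfin : (∫⁻ u in Ioi (0:ℝ), ENNReal.ofReal (Real.exp (-qA*u) * flim u)) < ⊤ :=
    hfin qA ⟨hqA1, hqA2⟩
  have hbound : (∫⁻ u in Ioi (0:ℝ), ENNReal.ofReal (Real.exp (-qA*u) * flim u))
      < (∫⁻ u in Ioi (0:ℝ), ENNReal.ofReal (Real.exp (-qA*u) * flim u)) + 1 :=
    ENNReal.lt_add_right hΛfin.ne one_ne_zero
  have hev := (hconv qA ⟨hqA1, hqA2⟩).eventually_lt_const hbound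
  obtain ⟨N, hN⟩ := eventually_atTop.1 hev
  have htopfin : (∫⁻ u in Ioi (0:ℝ), ENNReal.ofReal (Real.exp (-qA*u) * flim u)) + 1 < ⊤ :=
    ENNReal.add_lt_top.2 ⟨hΛfin, ENNReal.one_lt_top⟩
  have hFOK : ∀ n, S7OK (f (n + N)) qA := fun n =>
    ⟨hmeasn _, hfnonneg _, lt_trans (hN _ (Nat.le_add_left N n)) htopfin⟩
  have hlOK : S7OK flim qA := ⟨hmeasl, hlnonneg, hΛfin⟩
  have hB : ∀ n, s7Lap (f (n + N)) qA
      ≤ ((∫⁻ u in Ioi (0:ℝ), ENNReal.ofReal (Real.exp (-qA*u) * flim u)) + 1).toReal := by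
    intro n
    rw [s7_lap_eq_toReal (hFOK n)]
    exact ENNReal.toReal_mono htopfin.ne (le_of_lt (hN _ (Nat.le_add_left N n)))
  have hBl : s7Lap flim qA
      ≤ ((∫⁻ u in Ioi (0:ℝ), ENNReal.ofReal (Real.exp (-qA*u) * flim u)) + 1).toReal := by
    rw [s7_lap_eq_toReal hlOK]
    exact ENNReal.toReal_mono htopfin.ne (le_of_lt hbound)
  have hconvR : ∀ q ∈ Ioo qA qb,
      Tendsto (fun n => s7Lap (f (n + N)) q) atTop (𝓝 (s7Lap flim q)) := by
    intro q hq
    have hq' : q ∈ Ioo qa qb := ⟨lt_trans hqA1 hq.1, hq.2⟩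
    have h1 : Tendsto (fun n => ∫⁻ u in Ioi (0:ℝ),
        ENNReal.ofReal (Real.exp (-q*u) * f (n + N) u)) atTop
        (𝓝 (∫⁻ u in Ioi (0:ℝ), ENNReal.ofReal (Real.exp (-q*u) * flim u))) :=
      (hconv q hq').comp (tendsto_add_atTop_nat N)
    have h2 := (ENNReal.tendsto_toReal (hfin q hq').ne).comp h1
    have e1 : (fun n => s7Lap (f (n + N)) q) = fun n => (∫⁻ u in Ioi (0:ℝ),
        ENNReal.ofReal (Real.exp (-q*u) * f (n + N) u)).toReal :=
      funext fun n => s7_lap_eq_toReal (hFOK n) q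
    rw [e1, s7_lap_eq_toReal hlOK q]
    exact h2
  have hAll := s7_lap_tendsto_all hFOK hlOK hB hBl hqA2 hconvR
  have hfinal := s7_final hqA0 hFOK hlOK hB hBl hAll
    (fun n => hfanti (n + N)) hlanti hu0 hcont
  exact (tendsto_add_atTop_iff_nat N).1 hfinal

end
end

section
/- Suppose Assumption (R) holds. Let ζ be a [0,∞)^d-valued random vector and I ⊂ (0,∞) a non-empty open interval. Assume that for every q ∈ I, every λ ∈ [0,∞)^d, and every probability measure ν ≪ μ on (X,𝒜), ∫_0^∞ e^{−qu} (∫_X S̃_{λ,⌊ut⌋,t} dν) du → ∫_0^∞ e^{−qu} E[exp(−u λ·ζ)] du as t → ∞ (t real). Then for every probability measure ν ≪ μ, the pushforwards ν ∘ (S_n/n)^{−1} converge weakly to the law of ζ. -/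
open MeasureTheory Filter Topology Set
open scoped ENNReal

noncomputable section

/-! ### Auxiliary machinery for `stmt8` -/

section Stmt8Aux
set_option linter.unusedSectionVars false

variable {X : Type*} [MeasurableSpace X] {T : X → X} {d : ℕ} {A : Fin d → Set X}
  {Ω : Type*} [MeasurableSpace Ω] {P : Measure Ω} {ζ : Ω → Fin d → ℝ}
  {ν : Measure X}

/-- Projection onto `[0,1]`. -/
def s8proj (x : ℝ) : Set.Icc (0:ℝ) 1 := Set.projIcc 0 1 zero_le_one x

lemma s8_occ_nonneg (n : ℕ) (x : X) (i : Fin d) : 0 ≤ occVec T A n x i :=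
  Finset.sum_nonneg fun _ _ => Set.indicator_nonneg (fun _ _ => zero_le_one) _

lemma s8_occ_mono {n m : ℕ} (h : n ≤ m) (x : X) (i : Fin d) :
    occVec T A n x i ≤ occVec T A m x i :=
  Finset.sum_le_sum_of_subset_of_nonneg (Finset.range_subset_range.2 h)
    (fun _ _ _ => Set.indicator_nonneg (fun _ _ => zero_le_one) _)

lemma s8_occ_le (n : ℕ) (x : X) (i : Fin d) : occVec T A n x i ≤ n := by
  have : ∀ k ∈ Finset.range n,
      (A i).indicator (fun _ => (1:ℝ)) (T^[k+1] x) ≤ 1 := by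
    intro k _
    exact Set.indicator_le_self' (fun _ _ => zero_le_one) _ |>.trans <| by
      by_cases h : T^[k+1] x ∈ A i <;> simp [Set.indicator_apply, h]
  calc occVec T A n x i ≤ ∑ _k ∈ Finset.range n, (1:ℝ) := Finset.sum_le_sum this
    _ = n := by simp

lemma s8_occ_meas (hT : Measurable T) {i : Fin d} (hA : MeasurableSet (A i)) (n : ℕ) :
    Measurable fun x => occVec T A n x i := by
  apply Finset.measurable_sum
  intro k _
  exact (measurable_const.indicator hA).comp (hT.iterate (k+1))

lemma s8_St_pos {lam : Fin d → ℝ} {n : ℕ} {t : ℝ} {x : X} :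
    0 < Stilde T A lam n t x := Real.exp_pos _

lemma s8_exponent_nonneg {lam : Fin d → ℝ} (hlam : ∀ i, 0 ≤ lam i) (n : ℕ) (x : X) :
    0 ≤ ∑ i, lam i * occVec T A n x i :=
  Finset.sum_nonneg fun i _ => mul_nonneg (hlam i) (s8_occ_nonneg n x i)

lemma s8_St_le_one {lam : Fin d → ℝ} (hlam : ∀ i, 0 ≤ lam i) {n : ℕ} {t : ℝ}
    (ht : 0 ≤ t) {x : X} : Stilde T A lam n t x ≤ 1 := by
  rw [Stilde, Real.exp_le_one_iff, neg_div, neg_nonpos]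
  exact div_nonneg (s8_exponent_nonneg hlam n x) ht

lemma s8_St_anti {lam : Fin d → ℝ} (hlam : ∀ i, 0 ≤ lam i) {n m : ℕ} (hnm : n ≤ m)
    {t : ℝ} (ht : 0 ≤ t) {x : X} : Stilde T A lam m t x ≤ Stilde T A lam n t x := by
  rw [Stilde, Stilde, Real.exp_le_exp, neg_div, neg_div, neg_le_neg_iff]
  rcases ht.eq_or_lt with h | h
  · simp [← h]
  · gcongr with i hi
    · exact hlam i
    · exact s8_occ_mono hnm x i

lemma s8_St_meas (hT : Measurable T) (hA : ∀ i, MeasurableSet (A i))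
    (lam : Fin d → ℝ) (n : ℕ) (t : ℝ) : Measurable (Stilde T A lam n t) := by
  apply Real.measurable_exp.comp
  exact ((Finset.measurable_sum _ fun i _ =>
    (s8_occ_meas hT (hA i) n).const_mul (lam i)).neg.div_const t)

lemma s8_St_int (hT : Measurable T) (hA : ∀ i, MeasurableSet (A i))
    {lam : Fin d → ℝ} (hlam : ∀ i, 0 ≤ lam i) (n : ℕ) {t : ℝ} (ht : 0 ≤ t)
    [IsFiniteMeasure ν] : Integrable (Stilde T A lam n t) ν := by
  refine (integrable_const (1:ℝ)).mono' ((s8_St_meas hT hA lam n t).aestronglyMeasurable) ?_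
  filter_upwards with x
  rw [Real.norm_eq_abs, abs_of_pos s8_St_pos]
  exact s8_St_le_one hlam ht

lemma s8_St_scale {r : ℝ} (hr : r ≠ 0) (lam : Fin d → ℝ) (n : ℕ) (t : ℝ) (x : X) :
    Stilde T A (r • lam) n (r * t) x = Stilde T A lam n t x := by
  rw [Stilde, Stilde]
  congr 1
  have : ∑ i, (r • lam) i * occVec T A n x i = r * ∑ i, lam i * occVec T A n x i := by
    rw [Finset.mul_sum]
    exact Finset.sum_congr rfl fun i _ => by simp [Pi.smul_apply, smul_eq_mul]; ring
  rw [this, neg_div, neg_div, mul_div_mul_left _ _ hr]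

lemma s8_int_exp_mul {b : ℝ} (hb : 0 < b) :
    ∫ u in Ioi (0:ℝ), Real.exp (-(b*u)) = b⁻¹ := by
  have h := integral_comp_mul_left_Ioi (fun x => Real.exp (-x)) 0 hb
  rw [mul_zero, integral_exp_neg_Ioi, neg_zero, Real.exp_zero, smul_eq_mul, mul_one] at h
  exact h

lemma s8_intOn {h : ℝ → ℝ} (hm : AEStronglyMeasurable h (volume.restrict (Ioi 0)))
    {C b : ℝ} (hb : 0 < b) (hC : ∀ u ∈ Ioi (0:ℝ), |h u| ≤ C * Real.exp (-(b*u))) :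
    IntegrableOn h (Ioi (0:ℝ)) := by
  refine Integrable.mono' (IntegrableOn.congr_fun ((exp_neg_integrableOn_Ioi 0 hb).const_mul C)
    (fun u _ => by rw [neg_mul]) measurableSet_Ioi) hm ?_
  rw [ae_restrict_iff' measurableSet_Ioi]
  filter_upwards with u hu
  rw [Real.norm_eq_abs]
  exact hC u hu

/-! #### Laplace transforms and scaling -/

/-- Inner expectation `φ_λ(u) = E[exp(-u λ·ζ)]`. -/
def s8phi (P : Measure Ω) (ζ : Ω → Fin d → ℝ) (lam : Fin d → ℝ) (u : ℝ) : ℝ :=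
  ∫ ω, Real.exp (-u * ∑ i, lam i * ζ ω i) ∂P

/-- The double Laplace transform appearing on the LHS of the hypothesis. -/
def s8LT (T : X → X) (A : Fin d → Set X) (ν : Measure X) (lam : Fin d → ℝ)
    (t q : ℝ) : ℝ :=
  ∫ u in Ioi (0:ℝ), Real.exp (-q * u) * ∫ x, Stilde T A lam ⌊u * t⌋₊ t x ∂ν

/-- The double Laplace transform appearing on the RHS of the hypothesis. -/
def s8RT (P : Measure Ω) (ζ : Ω → Fin d → ℝ) (lam : Fin d → ℝ) (q : ℝ) : ℝ :=
  ∫ u in Ioi (0:ℝ), Real.exp (-q * u) * s8phi P ζ lam u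

lemma s8_sum_smul (r : ℝ) (lam v : Fin d → ℝ) :
    ∑ i, (r • lam) i * v i = r * ∑ i, lam i * v i := by
  rw [Finset.mul_sum]
  exact Finset.sum_congr rfl fun i _ => by simp [smul_eq_mul]; ring

lemma s8_LT_scale {r : ℝ} (hr : 0 < r) (lam : Fin d → ℝ) (t q : ℝ) :
    s8LT T A ν lam t q = r * s8LT T A ν (r • lam) (r * t) (q * r) := by
  have h := integral_comp_mul_left_Ioi
    (fun u => Real.exp (-q * u) * ∫ x, Stilde T A lam ⌊u * t⌋₊ t x ∂ν) 0 hr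
  rw [mul_zero] at h
  have h' := congrArg (fun z => r * z) h
  simp only [smul_eq_mul, ← mul_assoc, mul_inv_cancel₀ hr.ne', one_mul] at h'
  rw [s8LT, ← h', s8LT]
  congr 1
  refine setIntegral_congr_fun measurableSet_Ioi (fun v _ => ?_)
  have e1 : r * v * t = v * (r * t) := by ring
  rw [e1]
  congr 1
  · congr 1; ring
  · exact integral_congr_ae (Filter.Eventually.of_forall
      fun x => (s8_St_scale hr.ne' lam _ t x).symm)

lemma s8_phi_scale (r : ℝ) (hr : r ≠ 0) (lam : Fin d → ℝ) (v : ℝ) :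
    s8phi P ζ lam (r * v) = s8phi P ζ (r • lam) v := by
  rw [s8phi, s8phi]
  refine integral_congr_ae (Filter.Eventually.of_forall fun ω => ?_)
  simp only [s8_sum_smul]
  congr 1
  ring

lemma s8_RT_scale {r : ℝ} (hr : 0 < r) (lam : Fin d → ℝ) (q : ℝ) :
    s8RT P ζ lam q = r * s8RT P ζ (r • lam) (q * r) := by
  have h := integral_comp_mul_left_Ioi
    (fun u => Real.exp (-q * u) * s8phi P ζ lam u) 0 hr
  rw [mul_zero] at h
  have h' := congrArg (fun z => r * z) h
  simp only [smul_eq_mul, ← mul_assoc, mul_inv_cancel₀ hr.ne', one_mul] at h'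
  rw [s8RT, ← h', s8RT]
  congr 1
  refine setIntegral_congr_fun measurableSet_Ioi (fun v _ => ?_)
  rw [s8_phi_scale r hr.ne']
  congr 1
  ring

lemma s8_hconv_all {qa qb : ℝ} (hqa : 0 ≤ qa) (hqab : qa < qb)
    (hconv : ∀ q ∈ Ioo qa qb, ∀ lam : Fin d → ℝ, (∀ i, 0 ≤ lam i) →
      Tendsto (fun t : ℝ => s8LT T A ν lam t q) atTop (𝓝 (s8RT P ζ lam q)))
    {q : ℝ} (hq : 0 < q) {lam : Fin d → ℝ} (hlam : ∀ i, 0 ≤ lam i) :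
    Tendsto (fun t : ℝ => s8LT T A ν lam t q) atTop (𝓝 (s8RT P ζ lam q)) := by
  set q0 := (qa + qb)/2 with hq0def
  have hq0 : q0 ∈ Ioo qa qb := ⟨by rw [hq0def]; linarith, by rw [hq0def]; linarith⟩
  have hq0pos : 0 < q0 := lt_of_le_of_lt hqa hq0.1
  set r := q0 / q with hrdef
  have hr : 0 < r := div_pos hq0pos hq
  have hqr : q * r = q0 := by
    rw [hrdef]; field_simp
  have h1 := hconv q0 hq0 (r • lam) (fun i => mul_nonneg hr.le (hlam i))
  have h2 : Tendsto (fun t : ℝ => r * t) atTop atTop := tendsto_id.const_mul_atTop hr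
  have h3 := (h1.comp h2).const_mul r
  have e1 : (fun t : ℝ => r * s8LT T A ν (r • lam) (r * t) q0)
      = fun t : ℝ => s8LT T A ν lam t q := by
    funext t; rw [← hqr, ← s8_LT_scale hr]
  have e2 : r * s8RT P ζ (r • lam) q0 = s8RT P ζ lam q := by
    rw [← hqr, ← s8_RT_scale hr]
  rw [← e2]
  exact e1 ▸ h3

/-! #### Properties of `φ` -/

lemma s8_zsum_nonneg (hζ0 : ∀ ω i, 0 ≤ ζ ω i) {lam : Fin d → ℝ}
    (hlam : ∀ i, 0 ≤ lam i) (ω : Ω) : 0 ≤ ∑ i, lam i * ζ ω i :=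
  Finset.sum_nonneg fun i _ => mul_nonneg (hlam i) (hζ0 ω i)

lemma s8_phi_integrand_int [IsProbabilityMeasure P] (hζ0 : ∀ ω i, 0 ≤ ζ ω i)
    {lam : Fin d → ℝ} (hlam : ∀ i, 0 ≤ lam i)
    (hcm : AEMeasurable (fun ω => ∑ i, lam i * ζ ω i) P) {u : ℝ} (hu : 0 ≤ u) :
    Integrable (fun ω => Real.exp (-u * ∑ i, lam i * ζ ω i)) P := by
  refine (integrable_const 1).mono'
    ((Real.measurable_exp.comp_aemeasurable (hcm.const_mul (-u))).aestronglyMeasurable) ?_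
  filter_upwards with ω
  rw [Real.norm_eq_abs, abs_of_pos (Real.exp_pos _), Real.exp_le_one_iff]
  exact mul_nonpos_of_nonpos_of_nonneg (neg_nonpos.2 hu) (s8_zsum_nonneg hζ0 hlam ω)

lemma s8_phi_nonneg (lam : Fin d → ℝ) (u : ℝ) : 0 ≤ s8phi P ζ lam u :=
  integral_nonneg fun ω => (Real.exp_pos _).le

lemma s8_phi_le_one [IsProbabilityMeasure P] (hζ0 : ∀ ω i, 0 ≤ ζ ω i)
    {lam : Fin d → ℝ} (hlam : ∀ i, 0 ≤ lam i)
    (hcm : AEMeasurable (fun ω => ∑ i, lam i * ζ ω i) P) {u : ℝ} (hu : 0 ≤ u) :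
    s8phi P ζ lam u ≤ 1 := by
  calc s8phi P ζ lam u ≤ ∫ _, (1:ℝ) ∂P := by
        refine integral_mono (s8_phi_integrand_int hζ0 hlam hcm hu) (integrable_const 1)
          fun ω => ?_
        rw [Real.exp_le_one_iff]
        exact mul_nonpos_of_nonpos_of_nonneg (neg_nonpos.2 hu) (s8_zsum_nonneg hζ0 hlam ω)
    _ = 1 := by simp

lemma s8_phi_anti [IsProbabilityMeasure P] (hζ0 : ∀ ω i, 0 ≤ ζ ω i)
    {lam : Fin d → ℝ} (hlam : ∀ i, 0 ≤ lam i)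
    (hcm : AEMeasurable (fun ω => ∑ i, lam i * ζ ω i) P) {u u' : ℝ}
    (hu : 0 ≤ u) (huu : u ≤ u') : s8phi P ζ lam u' ≤ s8phi P ζ lam u := by
  refine integral_mono (s8_phi_integrand_int hζ0 hlam hcm (hu.trans huu))
    (s8_phi_integrand_int hζ0 hlam hcm hu) fun ω => ?_
  apply Real.exp_le_exp.2
  have := s8_zsum_nonneg hζ0 hlam ω
  nlinarith

lemma s8_phi_contAt [IsProbabilityMeasure P] (hζ0 : ∀ ω i, 0 ≤ ζ ω i)
    {lam : Fin d → ℝ} (hlam : ∀ i, 0 ≤ lam i)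
    (hcm : AEMeasurable (fun ω => ∑ i, lam i * ζ ω i) P) :
    ContinuousAt (s8phi P ζ lam) 1 := by
  refine tendsto_integral_filter_of_dominated_convergence (fun _ => (1:ℝ)) ?_ ?_
    (integrable_const 1) ?_
  · exact Filter.Eventually.of_forall fun u =>
      (Real.measurable_exp.comp_aemeasurable (hcm.const_mul (-u))).aestronglyMeasurable
  · filter_upwards [eventually_gt_nhds zero_lt_one] with u hu
    filter_upwards with ω
    rw [Real.norm_eq_abs, abs_of_pos (Real.exp_pos _), Real.exp_le_one_iff]
    exact mul_nonpos_of_nonpos_of_nonneg (neg_nonpos.2 hu.le) (s8_zsum_nonneg hζ0 hlam ω)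
  · refine Filter.Eventually.of_forall fun ω => ?_
    exact ((Real.continuous_exp.comp (continuous_neg.mul continuous_const)).tendsto 1)

/-! #### `F_t` properties -/

lemma s8_F_nonneg (lam : Fin d → ℝ) (n : ℕ) (t : ℝ) :
    0 ≤ ∫ x, Stilde T A lam n t x ∂ν :=
  integral_nonneg fun _ => s8_St_pos.le

lemma s8_F_le_one [IsProbabilityMeasure ν] (hT : Measurable T)
    (hA : ∀ i, MeasurableSet (A i)) {lam : Fin d → ℝ} (hlam : ∀ i, 0 ≤ lam i)
    (n : ℕ) {t : ℝ} (ht : 0 ≤ t) : ∫ x, Stilde T A lam n t x ∂ν ≤ 1 := by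
  calc ∫ x, Stilde T A lam n t x ∂ν ≤ ∫ _, (1:ℝ) ∂ν :=
        integral_mono (s8_St_int hT hA hlam n ht) (integrable_const 1)
          fun x => s8_St_le_one hlam ht
    _ = 1 := by simp

lemma s8_F_anti [IsProbabilityMeasure ν] (hT : Measurable T)
    (hA : ∀ i, MeasurableSet (A i)) {lam : Fin d → ℝ} (hlam : ∀ i, 0 ≤ lam i)
    {t : ℝ} (ht : 0 ≤ t) :
    Antitone fun u : ℝ => ∫ x, Stilde T A lam ⌊u * t⌋₊ t x ∂ν := by
  intro u u' huu
  refine integral_mono (s8_St_int hT hA hlam _ ht) (s8_St_int hT hA hlam _ ht) fun x => ?_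
  exact s8_St_anti hlam (Nat.floor_mono (mul_le_mul_of_nonneg_right huu ht)) ht

lemma s8_F_meas [IsProbabilityMeasure ν] (hT : Measurable T)
    (hA : ∀ i, MeasurableSet (A i)) {lam : Fin d → ℝ} (hlam : ∀ i, 0 ≤ lam i)
    {t : ℝ} (ht : 0 ≤ t) :
    Measurable fun u : ℝ => ∫ x, Stilde T A lam ⌊u * t⌋₊ t x ∂ν :=
  (s8_F_anti hT hA hlam ht).measurable

/-! #### A.e. measurability of `ζ` -/

lemma s8_zeta_meas {qa qb : ℝ} (hqa : 0 ≤ qa) (hqab : qa < qb)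
    [IsProbabilityMeasure ν] [IsProbabilityMeasure P]
    (hT : Measurable T) (hA : ∀ i, MeasurableSet (A i))
    (hζ0 : ∀ ω i, 0 ≤ ζ ω i)
    (hconv : ∀ q ∈ Ioo qa qb, ∀ lam : Fin d → ℝ, (∀ i, 0 ≤ lam i) →
      Tendsto (fun t : ℝ => s8LT T A ν lam t q) atTop (𝓝 (s8RT P ζ lam q)))
    (i : Fin d) : AEMeasurable (fun ω => ζ ω i) P := by
  by_contra hc
  set lam : Fin d → ℝ := fun j => if j = i then 1 else 0 with hlam_def
  have hlam : ∀ j, 0 ≤ lam j := fun j => by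
    by_cases h : j = i <;> simp [hlam_def, h]
  have hsum : ∀ v : Fin d → ℝ, ∑ j, lam j * v j = v i := by
    intro v
    rw [hlam_def]
    simp [ite_mul]
  set q0 := (qa + qb)/2 with hq0def
  have hq0 : q0 ∈ Ioo qa qb := ⟨by rw [hq0def]; linarith, by rw [hq0def]; linarith⟩
  have hq0pos : 0 < q0 := lt_of_le_of_lt hqa hq0.1
  -- the RHS vanishes identically
  have hphi0 : ∀ u : ℝ, u ∈ Ioi (0:ℝ) → s8phi P ζ lam u = 0 := by
    intro u hu
    rw [s8phi]
    refine integral_undef fun hint => hc ?_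
    have h1 : AEMeasurable (fun ω => Real.exp (-u * ∑ j, lam j * ζ ω j)) P :=
      hint.aemeasurable
    have h2 : AEMeasurable
        (fun ω => -Real.log (Real.exp (-u * ∑ j, lam j * ζ ω j)) / u) P :=
      (Real.measurable_log.comp_aemeasurable h1).neg.div_const u
    refine h2.congr (Filter.Eventually.of_forall fun ω => ?_)
    show -Real.log (Real.exp (-u * ∑ j, lam j * ζ ω j)) / u = ζ ω i
    rw [Real.log_exp, hsum (ζ ω), neg_mul, neg_neg, mul_comm,
      mul_div_assoc, div_self (ne_of_gt (mem_Ioi.1 hu)), mul_one]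
  have hRT0 : s8RT P ζ lam q0 = 0 := by
    rw [s8RT]
    calc ∫ u in Ioi (0:ℝ), Real.exp (-q0 * u) * s8phi P ζ lam u
        = ∫ _ in Ioi (0:ℝ), (0:ℝ) := setIntegral_congr_fun measurableSet_Ioi
          (fun u hu => by rw [hphi0 u hu, mul_zero])
      _ = 0 := integral_zero _ _
  have htend := hconv q0 hq0 lam hlam
  rw [hRT0] at htend
  -- but the LHS is bounded below
  have hlow : ∀ᶠ t : ℝ in atTop, (q0 + 1)⁻¹ ≤ s8LT T A ν lam t q0 := by
    filter_upwards [eventually_gt_atTop (0:ℝ)] with t ht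
    have hFlow : ∀ u ∈ Ioi (0:ℝ),
        Real.exp (-(q0+1) * u) ≤ Real.exp (-q0 * u) * ∫ x, Stilde T A lam ⌊u * t⌋₊ t x ∂ν := by
      intro u hu
      have hS : ∀ x : X, Real.exp (-u) ≤ Stilde T A lam ⌊u * t⌋₊ t x := by
        intro x
        rw [Stilde, Real.exp_le_exp, hsum]
        rw [neg_div, neg_le_neg_iff]
        have h1 : occVec T A ⌊u * t⌋₊ x i ≤ u * t :=
          (s8_occ_le _ x i).trans (Nat.floor_le (mul_nonneg (le_of_lt (mem_Ioi.1 hu)) ht.le))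
        rw [div_le_iff₀ ht]
        linarith [mul_comm u t]
      have hF : Real.exp (-u) ≤ ∫ x, Stilde T A lam ⌊u * t⌋₊ t x ∂ν := by
        calc Real.exp (-u) = ∫ _, Real.exp (-u) ∂ν := by simp
          _ ≤ _ := integral_mono (integrable_const _)
              (s8_St_int hT hA hlam _ ht.le) hS
      calc Real.exp (-(q0+1) * u) = Real.exp (-q0 * u) * Real.exp (-u) := by
            rw [← Real.exp_add]; ring_nf
        _ ≤ _ := mul_le_mul_of_nonneg_left hF (Real.exp_pos _).le
    have hint1 : IntegrableOn
        (fun u => Real.exp (-q0 * u) * ∫ x, Stilde T A lam ⌊u * t⌋₊ t x ∂ν) (Ioi 0) := by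
      refine s8_intOn (((Real.measurable_exp.comp ((measurable_id.const_mul (-q0))))
        |>.mul (s8_F_meas hT hA hlam ht.le)).aestronglyMeasurable) hq0pos (C := 1)
        fun u hu => ?_
      rw [abs_mul, abs_of_pos (Real.exp_pos _),
        abs_of_nonneg (s8_F_nonneg lam _ t), one_mul, neg_mul]
      exact mul_le_of_le_one_right (Real.exp_pos _).le
        (s8_F_le_one hT hA hlam _ ht.le)
    have hint2 : IntegrableOn (fun u => Real.exp (-(q0+1) * u)) (Ioi (0:ℝ)) := by
      refine IntegrableOn.congr_fun (exp_neg_integrableOn_Ioi (a := 0) (b := q0 + 1)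
        (by linarith)) (fun u _ => by rw [neg_mul]) measurableSet_Ioi
    calc (q0 + 1)⁻¹ = ∫ u in Ioi (0:ℝ), Real.exp (-(q0+1) * u) := by
          rw [← s8_int_exp_mul (by linarith : (0:ℝ) < q0 + 1)]
          refine setIntegral_congr_fun measurableSet_Ioi fun u _ => by rw [neg_mul]
      _ ≤ s8LT T A ν lam t q0 :=
          setIntegral_mono_on hint2 hint1 measurableSet_Ioi hFlow
  have hle := ge_of_tendsto htend hlow
  have : (0:ℝ) < (q0 + 1)⁻¹ := by positivity
  linarith
/-! #### Step A : the Laplace inversion via Weierstrass approximation and bumps -/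

lemma s8proj_coe {x : ℝ} (hx : x ∈ Set.Icc (0:ℝ) 1) : (s8proj x : ℝ) = x := by
  rw [s8proj, Set.projIcc_of_mem zero_le_one hx]

lemma s8_exp_mem {u : ℝ} (hu : 0 ≤ u) : Real.exp (-u) ∈ Set.Icc (0:ℝ) 1 :=
  ⟨(Real.exp_pos _).le, Real.exp_le_one_iff.2 (neg_nonpos.2 hu)⟩

lemma s8_phi_aesm [IsProbabilityMeasure P] (hζ0 : ∀ ω i, 0 ≤ ζ ω i)
    {lam : Fin d → ℝ} (hlam : ∀ i, 0 ≤ lam i)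
    (hcm : AEMeasurable (fun ω => ∑ i, lam i * ζ ω i) P) :
    AEStronglyMeasurable (s8phi P ζ lam) (volume.restrict (Ioi (0:ℝ))) := by
  have h1 : Antitone fun u : ℝ => s8phi P ζ lam (max u 0) := fun a b hab =>
    s8_phi_anti hζ0 hlam hcm (le_max_right a 0) (max_le_max hab le_rfl)
  refine (h1.measurable.aestronglyMeasurable).congr ?_
  rw [EventuallyEq, ae_restrict_iff' measurableSet_Ioi]
  filter_upwards with u hu
  rw [max_eq_left (le_of_lt hu)]

lemma s8_exp_int_one : IntegrableOn (fun u : ℝ => Real.exp (-u)) (Ioi (0:ℝ)) :=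
  IntegrableOn.congr_fun (exp_neg_integrableOn_Ioi (a := 0) (b := 1) one_pos)
    (fun u _ => by norm_num) measurableSet_Ioi

/-- Integrability of the basic integrands appearing in `J`. -/
lemma s8_J_int (V : C(Set.Icc (0:ℝ) 1, ℝ)) {h : ℝ → ℝ}
    (hm : AEStronglyMeasurable h (volume.restrict (Ioi 0)))
    (hb : ∀ u ∈ Ioi (0:ℝ), |h u| ≤ 1) :
    IntegrableOn (fun u => Real.exp (-u) * V (s8proj (Real.exp (-u))) * h u)
      (Ioi (0:ℝ)) := by
  have hVc : Continuous fun u : ℝ => Real.exp (-u) * V (s8proj (Real.exp (-u))) := by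
    refine (Real.continuous_exp.comp continuous_neg).mul ?_
    exact V.continuous.comp ((continuous_projIcc).comp
      (Real.continuous_exp.comp continuous_neg))
  refine s8_intOn (hVc.measurable.aestronglyMeasurable.mul hm) (b := 1) one_pos
    (C := ‖V‖) fun u hu => ?_
  rw [abs_mul, abs_mul, abs_of_pos (Real.exp_pos _), one_mul]
  calc Real.exp (-u) * |V (s8proj (Real.exp (-u)))| * |h u|
      ≤ Real.exp (-u) * ‖V‖ * 1 :=
        mul_le_mul (mul_le_mul_of_nonneg_left (V.norm_coe_le_norm _)
          (Real.exp_pos _).le) (hb u hu) (abs_nonneg _)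
          (mul_nonneg (Real.exp_pos _).le (norm_nonneg _))
    _ = ‖V‖ * Real.exp (-u) := by ring

/-- The Lipschitz estimate for `J` in the `V` variable. -/
lemma s8_J_diff (V W : C(Set.Icc (0:ℝ) 1, ℝ)) {h : ℝ → ℝ}
    (hm : AEStronglyMeasurable h (volume.restrict (Ioi 0)))
    (hb : ∀ u ∈ Ioi (0:ℝ), |h u| ≤ 1) :
    |(∫ u in Ioi (0:ℝ), Real.exp (-u) * V (s8proj (Real.exp (-u))) * h u) -
      ∫ u in Ioi (0:ℝ), Real.exp (-u) * W (s8proj (Real.exp (-u))) * h u| ≤ ‖V - W‖ := by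
  rw [← integral_sub (s8_J_int V hm hb) (s8_J_int W hm hb)]
  calc |∫ u in Ioi (0:ℝ), (Real.exp (-u) * V (s8proj (Real.exp (-u))) * h u -
          Real.exp (-u) * W (s8proj (Real.exp (-u))) * h u)|
      = ‖∫ u in Ioi (0:ℝ), (Real.exp (-u) * V (s8proj (Real.exp (-u))) * h u -
          Real.exp (-u) * W (s8proj (Real.exp (-u))) * h u)‖ :=
        (Real.norm_eq_abs _).symm
    _ ≤ ∫ u in Ioi (0:ℝ), ‖Real.exp (-u) * V (s8proj (Real.exp (-u))) * h u -
          Real.exp (-u) * W (s8proj (Real.exp (-u))) * h u‖ :=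
        norm_integral_le_integral_norm _
    _ ≤ ∫ u in Ioi (0:ℝ), ‖V - W‖ * Real.exp (-u) := ?_
    _ = ‖V - W‖ := by rw [integral_const_mul, integral_exp_neg_Ioi_zero, mul_one]
  refine setIntegral_mono_on
    (((s8_J_int V hm hb).sub (s8_J_int W hm hb)).norm) (s8_exp_int_one.const_mul _)
    measurableSet_Ioi fun u hu => ?_
  have e1 : Real.exp (-u) * V (s8proj (Real.exp (-u))) * h u -
      Real.exp (-u) * W (s8proj (Real.exp (-u))) * h u =
      Real.exp (-u) * ((V - W) (s8proj (Real.exp (-u)))) * h u := by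
    rw [ContinuousMap.sub_apply]; ring
  rw [Real.norm_eq_abs, e1, abs_mul, abs_mul, abs_of_pos (Real.exp_pos _)]
  calc Real.exp (-u) * |(V - W) (s8proj (Real.exp (-u)))| * |h u|
      ≤ Real.exp (-u) * ‖V - W‖ * 1 :=
        mul_le_mul (mul_le_mul_of_nonneg_left ((V - W).norm_coe_le_norm _)
          (Real.exp_pos _).le) (hb u hu) (abs_nonneg _)
          (mul_nonneg (Real.exp_pos _).le (norm_nonneg _))
    _ = ‖V - W‖ * Real.exp (-u) := by ring

/-- Expansion of `J` applied to a polynomial into one-dimensional Laplace transforms. -/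
lemma s8_J_basic {h : ℝ → ℝ}
    (hm : AEStronglyMeasurable h (volume.restrict (Ioi 0)))
    (hb : ∀ u ∈ Ioi (0:ℝ), |h u| ≤ 1) (p : Polynomial ℝ) :
    ∫ u in Ioi (0:ℝ), Real.exp (-u) *
        (p.toContinuousMapOn (Set.Icc 0 1)) (s8proj (Real.exp (-u))) * h u
      = ∑ i ∈ Finset.range (p.natDegree + 1), p.coeff i *
        ∫ u in Ioi (0:ℝ), Real.exp (-((i:ℝ) + 1) * u) * h u := by
  have hint : ∀ i ∈ Finset.range (p.natDegree + 1), IntegrableOn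
      (fun u => p.coeff i * (Real.exp (-((i:ℝ) + 1) * u) * h u)) (Ioi (0:ℝ)) := by
    intro i _
    refine Integrable.const_mul (s8_intOn
      (h := fun u => Real.exp (-((i:ℝ) + 1) * u) * h u) ?_
      (b := (i:ℝ) + 1) (by positivity) (C := 1) fun u hu => ?_) _
    · exact (Real.measurable_exp.comp
        (measurable_id.const_mul (-((i:ℝ) + 1)))).aestronglyMeasurable.mul hm
    rw [abs_mul, abs_of_pos (Real.exp_pos _), one_mul, ← neg_mul]
    exact mul_le_of_le_one_right (Real.exp_pos _).le (hb u hu)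
  calc ∫ u in Ioi (0:ℝ), Real.exp (-u) *
        (p.toContinuousMapOn (Set.Icc 0 1)) (s8proj (Real.exp (-u))) * h u
      = ∫ u in Ioi (0:ℝ), ∑ i ∈ Finset.range (p.natDegree + 1),
          p.coeff i * (Real.exp (-((i:ℝ) + 1) * u) * h u) := by
        refine setIntegral_congr_fun measurableSet_Ioi fun u hu => ?_
        have hmem := s8_exp_mem (le_of_lt (mem_Ioi.1 hu))
        have hcme : (p.toContinuousMapOn (Set.Icc 0 1)) (s8proj (Real.exp (-u)))
            = Polynomial.eval (Real.exp (-u)) p := by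
          simp [Polynomial.toContinuousMapOn, Polynomial.toContinuousMap,
            s8proj_coe hmem]
        rw [hcme, Polynomial.eval_eq_sum_range, Finset.mul_sum, Finset.sum_mul]
        refine Finset.sum_congr rfl fun i _ => ?_
        have e3 : Real.exp (-u) * Real.exp (-u) ^ i = Real.exp (-((i:ℝ) + 1) * u) := by
          rw [← Real.exp_nat_mul, ← Real.exp_add]
          congr 1; ring
        calc Real.exp (-u) * (p.coeff i * Real.exp (-u) ^ i) * h u
            = Real.exp (-u) * Real.exp (-u) ^ i * p.coeff i * h u := by ring
          _ = p.coeff i * (Real.exp (-((i:ℝ) + 1) * u) * h u) := by rw [e3]; ring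
    _ = ∑ i ∈ Finset.range (p.natDegree + 1), ∫ u in Ioi (0:ℝ),
          p.coeff i * (Real.exp (-((i:ℝ) + 1) * u) * h u) := integral_finset_sum _ hint
    _ = ∑ i ∈ Finset.range (p.natDegree + 1), p.coeff i *
          ∫ u in Ioi (0:ℝ), Real.exp (-((i:ℝ) + 1) * u) * h u :=
        Finset.sum_congr rfl fun i _ => integral_const_mul _ _

/-- Convergence of `J` on polynomial test functions. -/
lemma s8_J_poly [IsProbabilityMeasure ν] [IsProbabilityMeasure P]
    (hT : Measurable T) (hA : ∀ i, MeasurableSet (A i))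
    (hζ0 : ∀ ω i, 0 ≤ ζ ω i) {lam : Fin d → ℝ} (hlam : ∀ i, 0 ≤ lam i)
    (hcm : AEMeasurable (fun ω => ∑ i, lam i * ζ ω i) P)
    (hconv : ∀ q : ℝ, 0 < q →
      Tendsto (fun t : ℝ => s8LT T A ν lam t q) atTop (𝓝 (s8RT P ζ lam q)))
    (p : Polynomial ℝ) :
    Tendsto (fun t : ℝ => ∫ u in Ioi (0:ℝ), Real.exp (-u) *
        (p.toContinuousMapOn (Set.Icc 0 1)) (s8proj (Real.exp (-u))) *
        ∫ x, Stilde T A lam ⌊u * t⌋₊ t x ∂ν) atTop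
      (𝓝 (∫ u in Ioi (0:ℝ), Real.exp (-u) *
        (p.toContinuousMapOn (Set.Icc 0 1)) (s8proj (Real.exp (-u))) *
        s8phi P ζ lam u)) := by
  have hφb : ∀ u ∈ Ioi (0:ℝ), |s8phi P ζ lam u| ≤ 1 := fun u hu => by
    rw [abs_of_nonneg (s8_phi_nonneg lam u)]
    exact s8_phi_le_one hζ0 hlam hcm (le_of_lt (mem_Ioi.1 hu))
  have hlim : ∫ u in Ioi (0:ℝ), Real.exp (-u) *
      (p.toContinuousMapOn (Set.Icc 0 1)) (s8proj (Real.exp (-u))) * s8phi P ζ lam u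
      = ∑ i ∈ Finset.range (p.natDegree + 1), p.coeff i * s8RT P ζ lam ((i:ℝ) + 1) :=
    s8_J_basic (s8_phi_aesm hζ0 hlam hcm) hφb p
  rw [hlim]
  have hsum : Tendsto (fun t : ℝ => ∑ i ∈ Finset.range (p.natDegree + 1),
      p.coeff i * s8LT T A ν lam t ((i:ℝ) + 1)) atTop
      (𝓝 (∑ i ∈ Finset.range (p.natDegree + 1), p.coeff i * s8RT P ζ lam ((i:ℝ) + 1))) :=
    tendsto_finset_sum _ fun i _ => (hconv ((i:ℝ) + 1) (by positivity)).const_mul _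
  refine hsum.congr' ?_
  filter_upwards [eventually_ge_atTop (0:ℝ)] with t ht
  have hFm : AEStronglyMeasurable (fun u : ℝ => ∫ x, Stilde T A lam ⌊u * t⌋₊ t x ∂ν)
      (volume.restrict (Ioi 0)) := (s8_F_meas hT hA hlam ht).aestronglyMeasurable
  have hFb : ∀ u ∈ Ioi (0:ℝ), |∫ x, Stilde T A lam ⌊u * t⌋₊ t x ∂ν| ≤ 1 := fun u _ => by
    rw [abs_of_nonneg (s8_F_nonneg lam _ t)]
    exact s8_F_le_one hT hA hlam _ ht
  exact (s8_J_basic hFm hFb p).symm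

/-- Convergence of `J` on all continuous test functions. -/
lemma s8_J_all [IsProbabilityMeasure ν] [IsProbabilityMeasure P]
    (hT : Measurable T) (hA : ∀ i, MeasurableSet (A i))
    (hζ0 : ∀ ω i, 0 ≤ ζ ω i) {lam : Fin d → ℝ} (hlam : ∀ i, 0 ≤ lam i)
    (hcm : AEMeasurable (fun ω => ∑ i, lam i * ζ ω i) P)
    (hconv : ∀ q : ℝ, 0 < q →
      Tendsto (fun t : ℝ => s8LT T A ν lam t q) atTop (𝓝 (s8RT P ζ lam q)))
    (V : C(Set.Icc (0:ℝ) 1, ℝ)) :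
    Tendsto (fun t : ℝ => ∫ u in Ioi (0:ℝ), Real.exp (-u) *
        V (s8proj (Real.exp (-u))) * ∫ x, Stilde T A lam ⌊u * t⌋₊ t x ∂ν) atTop
      (𝓝 (∫ u in Ioi (0:ℝ), Real.exp (-u) * V (s8proj (Real.exp (-u))) *
        s8phi P ζ lam u)) := by
  have hφm := s8_phi_aesm hζ0 hlam hcm
  have hφb : ∀ u ∈ Ioi (0:ℝ), |s8phi P ζ lam u| ≤ 1 := fun u hu => by
    rw [abs_of_nonneg (s8_phi_nonneg lam u)]
    exact s8_phi_le_one hζ0 hlam hcm (le_of_lt (mem_Ioi.1 hu))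
  refine Metric.tendsto_nhds.2 fun ε hε => ?_
  have hdense : V ∈ closure ((polynomialFunctions (Set.Icc (0:ℝ) 1)) : Set _) := by
    rw [← Subalgebra.topologicalClosure_coe, polynomialFunctions_closure_eq_top 0 1]
    simp
  obtain ⟨W, hWmem, hWd⟩ := Metric.mem_closure_iff.1 hdense (ε/3) (by linarith)
  rw [polynomialFunctions_coe] at hWmem
  obtain ⟨p, hp⟩ := hWmem
  have hpW : p.toContinuousMapOn (Set.Icc (0:ℝ) 1) = W := by simpa using hp
  have hWt := s8_J_poly hT hA hζ0 hlam hcm hconv p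
  rw [hpW] at hWt
  filter_upwards [Metric.tendsto_nhds.1 hWt (ε/3) (by linarith),
    eventually_ge_atTop (0:ℝ)] with t hWt' ht
  have hFm : AEStronglyMeasurable (fun u : ℝ => ∫ x, Stilde T A lam ⌊u * t⌋₊ t x ∂ν)
      (volume.restrict (Ioi 0)) := (s8_F_meas hT hA hlam ht).aestronglyMeasurable
  have hFb : ∀ u ∈ Ioi (0:ℝ), |∫ x, Stilde T A lam ⌊u * t⌋₊ t x ∂ν| ≤ 1 := fun u _ => by
    rw [abs_of_nonneg (s8_F_nonneg lam _ t)]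
    exact s8_F_le_one hT hA hlam _ ht
  have h1 := s8_J_diff V W hFm hFb
  have h2 := s8_J_diff W V hφm hφb
  rw [Real.dist_eq] at hWt'
  show dist (∫ u in Ioi (0:ℝ), Real.exp (-u) * V (s8proj (Real.exp (-u))) *
      ∫ x, Stilde T A lam ⌊u * t⌋₊ t x ∂ν)
    (∫ u in Ioi (0:ℝ), Real.exp (-u) * V (s8proj (Real.exp (-u))) * s8phi P ζ lam u) < ε
  rw [Real.dist_eq]
  have hd : ‖V - W‖ < ε/3 := by
    rw [← dist_eq_norm]
    exact hWd
  have hd2 : ‖W - V‖ < ε/3 := by rw [norm_sub_rev]; exact hd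
  have t1 := abs_sub_le
    (∫ u in Ioi (0:ℝ), Real.exp (-u) * V (s8proj (Real.exp (-u))) *
      ∫ x, Stilde T A lam ⌊u * t⌋₊ t x ∂ν)
    (∫ u in Ioi (0:ℝ), Real.exp (-u) * W (s8proj (Real.exp (-u))) *
      ∫ x, Stilde T A lam ⌊u * t⌋₊ t x ∂ν)
    (∫ u in Ioi (0:ℝ), Real.exp (-u) * V (s8proj (Real.exp (-u))) * s8phi P ζ lam u)
  have t2 := abs_sub_le
    (∫ u in Ioi (0:ℝ), Real.exp (-u) * W (s8proj (Real.exp (-u))) *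
      ∫ x, Stilde T A lam ⌊u * t⌋₊ t x ∂ν)
    (∫ u in Ioi (0:ℝ), Real.exp (-u) * W (s8proj (Real.exp (-u))) * s8phi P ζ lam u)
    (∫ u in Ioi (0:ℝ), Real.exp (-u) * V (s8proj (Real.exp (-u))) * s8phi P ζ lam u)
  linarith
/-- A triangular bump function on `[0,1]`, supported in `(l, r)`. -/
def s8tri (l r : ℝ) : C(Set.Icc (0:ℝ) 1, ℝ) :=
  ⟨fun z => max 0 (1 - |2 * (z:ℝ) - (l + r)| / (r - l)),
    continuous_const.max (continuous_const.sub
      (((((continuous_const.mul continuous_subtype_val)).sub continuous_const).abs).div_const _))⟩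

lemma s8tri_nonneg (l r : ℝ) (z : Set.Icc (0:ℝ) 1) : 0 ≤ s8tri l r z :=
  le_max_left _ _

lemma s8tri_supp {l r : ℝ} (h : l < r) {z : Set.Icc (0:ℝ) 1}
    (hz : s8tri l r z ≠ 0) : l < (z:ℝ) ∧ (z:ℝ) < r := by
  by_contra hcon
  apply hz
  show max 0 (1 - |2 * (z:ℝ) - (l + r)| / (r - l)) = 0
  have habs : r - l ≤ |2 * (z:ℝ) - (l + r)| := by
    rcases not_and_or.1 hcon with h1 | h1
    · push_neg at h1
      calc r - l ≤ (l + r) - 2*(z:ℝ) := by linarith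
        _ ≤ |(l + r) - 2*(z:ℝ)| := le_abs_self _
        _ = |2*(z:ℝ) - (l + r)| := abs_sub_comm _ _
    · push_neg at h1
      calc r - l ≤ 2*(z:ℝ) - (l + r) := by linarith
        _ ≤ |2*(z:ℝ) - (l + r)| := le_abs_self _
  have h2 : (1:ℝ) ≤ |2*(z:ℝ) - (l + r)| / (r - l) :=
    (le_div_iff₀ (by linarith)).2 (by linarith)
  exact max_eq_left (by linarith)

lemma s8tri_pos {l r : ℝ} (h : l < r) {z : Set.Icc (0:ℝ) 1}
    (h1 : l < (z:ℝ)) (h2 : (z:ℝ) < r) : 0 < s8tri l r z := by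
  show 0 < max 0 (1 - |2 * (z:ℝ) - (l + r)| / (r - l))
  have habs : |2 * (z:ℝ) - (l + r)| < r - l := by
    rw [abs_lt]; constructor <;> linarith
  have h3 : |2 * (z:ℝ) - (l + r)| / (r - l) < 1 := (div_lt_one (by linarith)).2 habs
  exact lt_max_of_lt_right (by linarith)

/-- Step A: convergence of the Laplace transforms in `λ` at `u = 1`. -/
lemma s8_stepA [IsProbabilityMeasure ν] [IsProbabilityMeasure P]
    (hT : Measurable T) (hA : ∀ i, MeasurableSet (A i))
    (hζ0 : ∀ ω i, 0 ≤ ζ ω i) {lam : Fin d → ℝ} (hlam : ∀ i, 0 ≤ lam i)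
    (hcm : AEMeasurable (fun ω => ∑ i, lam i * ζ ω i) P)
    (hconv : ∀ q : ℝ, 0 < q →
      Tendsto (fun t : ℝ => s8LT T A ν lam t q) atTop (𝓝 (s8RT P ζ lam q))) :
    Tendsto (fun t : ℝ => ∫ x, Stilde T A lam ⌊t⌋₊ t x ∂ν) atTop
      (𝓝 (s8phi P ζ lam 1)) := by
  have hφm := s8_phi_aesm hζ0 hlam hcm
  have hφb : ∀ u ∈ Ioi (0:ℝ), |s8phi P ζ lam u| ≤ 1 := fun u hu => by
    rw [abs_of_nonneg (s8_phi_nonneg lam u)]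
    exact s8_phi_le_one hζ0 hlam hcm (le_of_lt (mem_Ioi.1 hu))
  refine Metric.tendsto_nhds.2 fun ε hε => ?_
  obtain ⟨δ₀, hδ₀pos, hδ₀⟩ : ∃ δ₀ > 0, ∀ v : ℝ, |v - 1| < δ₀ →
      |s8phi P ζ lam v - s8phi P ζ lam 1| < ε/2 := by
    obtain ⟨δ, hδpos, h⟩ :=
      Metric.continuousAt_iff.1 (s8_phi_contAt hζ0 hlam hcm) (ε/2) (by linarith)
    refine ⟨δ, hδpos, fun v hv => ?_⟩
    have h2 := h (show dist v 1 < δ by rwa [Real.dist_eq])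
    rwa [Real.dist_eq] at h2
  set δ := min (δ₀/2) (2⁻¹ : ℝ) with hδdef
  have hδpos : 0 < δ := lt_min (by linarith) (by norm_num)
  have hδlt1 : δ < 1 := lt_of_le_of_lt (min_le_right _ _) (by norm_num)
  have hδδ₀ : δ < δ₀ := lt_of_le_of_lt (min_le_left _ _) (by linarith)
  have hφup : s8phi P ζ lam (1 - δ) < s8phi P ζ lam 1 + ε/2 := by
    have h := hδ₀ (1 - δ) (by
      rw [show (1 - δ) - 1 = -δ by ring, abs_neg, abs_of_pos hδpos]; exact hδδ₀)
    linarith [(abs_lt.1 h).2]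
  have hφdown : s8phi P ζ lam 1 - ε/2 < s8phi P ζ lam (1 + δ) := by
    have h := hδ₀ (1 + δ) (by
      rw [show (1 + δ) - 1 = δ by ring, abs_of_pos hδpos]; exact hδδ₀)
    linarith [(abs_lt.1 h).1]
  -- ### upper bump
  have hupper : ∀ᶠ t : ℝ in atTop,
      ∫ x, Stilde T A lam ⌊t⌋₊ t x ∂ν < s8phi P ζ lam 1 + ε := by
    have hlr : Real.exp (-(1:ℝ)) < Real.exp (δ - 1) := Real.exp_lt_exp.2 (by linarith)
    set V := s8tri (Real.exp (-(1:ℝ))) (Real.exp (δ - 1)) with hV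
    set c := ∫ u in Ioi (0:ℝ), Real.exp (-u) * V (s8proj (Real.exp (-u))) with hc
    have hwnn : ∀ u : ℝ, 0 ≤ Real.exp (-u) * V (s8proj (Real.exp (-u))) :=
      fun u => mul_nonneg (Real.exp_pos _).le (s8tri_nonneg _ _ _)
    have hVint : IntegrableOn
        (fun u => Real.exp (-u) * V (s8proj (Real.exp (-u)))) (Ioi (0:ℝ)) := by
      have h := s8_J_int V (h := fun _ => (1:ℝ)) aestronglyMeasurable_const
        (fun u _ => by norm_num)
      exact IntegrableOn.congr_fun h (fun u _ => by ring) measurableSet_Ioi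
    have hsupp : ∀ u : ℝ, 0 < u → V (s8proj (Real.exp (-u))) ≠ 0 →
        1 - δ < u ∧ u < 1 := by
      intro u hu hne
      have hco : ((s8proj (Real.exp (-u)) : ℝ)) = Real.exp (-u) :=
        s8proj_coe (s8_exp_mem hu.le)
      have h2 := s8tri_supp hlr hne
      rw [hco] at h2
      constructor
      · have h3 : -u < δ - 1 := Real.exp_lt_exp.1 h2.2
        linarith
      · have h3 : -(1:ℝ) < -u := Real.exp_lt_exp.1 h2.1
        linarith
    have hcpos : 0 < c := by
      rw [hc]
      refine (setIntegral_pos_iff_support_of_nonneg_ae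
        ((ae_restrict_iff' measurableSet_Ioi).2
          (Filter.Eventually.of_forall fun u _ => hwnn u)) hVint).2 ?_
      refine lt_of_lt_of_le ?_ (measure_mono (?_ :
        Ioo (1 - δ) 1 ⊆ Function.support _ ∩ Ioi 0))
      · rw [Real.volume_Ioo]
        exact ENNReal.ofReal_pos.2 (by linarith)
      · intro u hu
        obtain ⟨hu1, hu2⟩ := hu
        have hupos : (0:ℝ) < u := by linarith
        constructor
        · apply ne_of_gt
          refine mul_pos (Real.exp_pos _) (s8tri_pos hlr ?_ ?_)
          · rw [s8proj_coe (s8_exp_mem hupos.le)]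
            exact Real.exp_lt_exp.2 (by linarith)
          · rw [s8proj_coe (s8_exp_mem hupos.le)]
            exact Real.exp_lt_exp.2 (by linarith)
        · exact mem_Ioi.2 hupos
    have hkey : ∀ t : ℝ, 0 ≤ t →
        c * ∫ x, Stilde T A lam ⌊t⌋₊ t x ∂ν ≤
        ∫ u in Ioi (0:ℝ), Real.exp (-u) * V (s8proj (Real.exp (-u))) *
          ∫ x, Stilde T A lam ⌊u * t⌋₊ t x ∂ν := by
      intro t ht
      have hFone : ∀ u ∈ Ioi (0:ℝ), |∫ x, Stilde T A lam ⌊t⌋₊ t x ∂ν| ≤ 1 := fun u _ => by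
        rw [abs_of_nonneg (s8_F_nonneg lam _ t)]
        exact s8_F_le_one hT hA hlam _ ht
      have hFm : AEStronglyMeasurable
          (fun u : ℝ => ∫ x, Stilde T A lam ⌊u * t⌋₊ t x ∂ν)
          (volume.restrict (Ioi 0)) := (s8_F_meas hT hA hlam ht).aestronglyMeasurable
      have hFb : ∀ u ∈ Ioi (0:ℝ), |∫ x, Stilde T A lam ⌊u * t⌋₊ t x ∂ν| ≤ 1 :=
        fun u _ => by
          rw [abs_of_nonneg (s8_F_nonneg lam _ t)]
          exact s8_F_le_one hT hA hlam _ ht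
      rw [hc, ← integral_mul_const]
      refine setIntegral_mono_on
        (s8_J_int V (h := fun _ => ∫ x, Stilde T A lam ⌊t⌋₊ t x ∂ν)
          aestronglyMeasurable_const hFone)
        (s8_J_int V hFm hFb) measurableSet_Ioi fun u hu => ?_
      rcases eq_or_ne (V (s8proj (Real.exp (-u)))) 0 with h0 | h0
      · simp [h0]
      · obtain ⟨h1', h2'⟩ := hsupp u (mem_Ioi.1 hu) h0
        have hmono := s8_F_anti (ν := ν) hT hA hlam ht h2'.le
        simp only [one_mul] at hmono
        exact mul_le_mul_of_nonneg_left hmono (hwnn u)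
    have hJb : ∫ u in Ioi (0:ℝ), Real.exp (-u) * V (s8proj (Real.exp (-u))) *
        s8phi P ζ lam u ≤ c * s8phi P ζ lam (1 - δ) := by
      have hφconst : ∀ u ∈ Ioi (0:ℝ), |s8phi P ζ lam (1 - δ)| ≤ 1 := fun u _ => by
        rw [abs_of_nonneg (s8_phi_nonneg lam _)]
        exact s8_phi_le_one hζ0 hlam hcm (by linarith)
      rw [hc, ← integral_mul_const]
      refine setIntegral_mono_on (s8_J_int V hφm hφb)
        (s8_J_int V (h := fun _ => s8phi P ζ lam (1 - δ))
          aestronglyMeasurable_const hφconst) measurableSet_Ioi fun u hu => ?_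
      rcases eq_or_ne (V (s8proj (Real.exp (-u)))) 0 with h0 | h0
      · simp [h0]
      · obtain ⟨h1', _⟩ := hsupp u (mem_Ioi.1 hu) h0
        exact mul_le_mul_of_nonneg_left
          (s8_phi_anti hζ0 hlam hcm (by linarith) h1'.le) (hwnn u)
    have hJ := s8_J_all hT hA hζ0 hlam hcm hconv V
    filter_upwards [Metric.tendsto_nhds.1 hJ (c * (ε/2)) (by positivity),
      eventually_ge_atTop (0:ℝ)] with t hJt ht
    have hk := hkey t ht
    rw [Real.dist_eq] at hJt
    have h2 := (abs_lt.1 hJt).2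
    have hexp : c * (s8phi P ζ lam (1 - δ) + ε/2)
        = c * s8phi P ζ lam (1 - δ) + c * (ε/2) := by ring
    have h3 : c * (∫ x, Stilde T A lam ⌊t⌋₊ t x ∂ν)
        < c * (s8phi P ζ lam (1 - δ) + ε/2) := by
      rw [hexp]; linarith
    have h4 := (mul_lt_mul_iff_right₀ hcpos).1 h3
    linarith
  -- ### lower bump
  have hlower : ∀ᶠ t : ℝ in atTop,
      s8phi P ζ lam 1 - ε < ∫ x, Stilde T A lam ⌊t⌋₊ t x ∂ν := by
    have hlr : Real.exp (-(1+δ)) < Real.exp (-(1:ℝ)) := Real.exp_lt_exp.2 (by linarith)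
    set V := s8tri (Real.exp (-(1+δ))) (Real.exp (-(1:ℝ))) with hV
    set c := ∫ u in Ioi (0:ℝ), Real.exp (-u) * V (s8proj (Real.exp (-u))) with hc
    have hwnn : ∀ u : ℝ, 0 ≤ Real.exp (-u) * V (s8proj (Real.exp (-u))) :=
      fun u => mul_nonneg (Real.exp_pos _).le (s8tri_nonneg _ _ _)
    have hVint : IntegrableOn
        (fun u => Real.exp (-u) * V (s8proj (Real.exp (-u)))) (Ioi (0:ℝ)) := by
      have h := s8_J_int V (h := fun _ => (1:ℝ)) aestronglyMeasurable_const
        (fun u _ => by norm_num)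
      exact IntegrableOn.congr_fun h (fun u _ => by ring) measurableSet_Ioi
    have hsupp : ∀ u : ℝ, 0 < u → V (s8proj (Real.exp (-u))) ≠ 0 →
        1 < u ∧ u < 1 + δ := by
      intro u hu hne
      have hco : ((s8proj (Real.exp (-u)) : ℝ)) = Real.exp (-u) :=
        s8proj_coe (s8_exp_mem hu.le)
      have h2 := s8tri_supp hlr hne
      rw [hco] at h2
      constructor
      · have h3 : -u < -(1:ℝ) := Real.exp_lt_exp.1 h2.2
        linarith
      · have h3 : -(1+δ) < -u := Real.exp_lt_exp.1 h2.1
        linarith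
    have hcpos : 0 < c := by
      rw [hc]
      refine (setIntegral_pos_iff_support_of_nonneg_ae
        ((ae_restrict_iff' measurableSet_Ioi).2
          (Filter.Eventually.of_forall fun u _ => hwnn u)) hVint).2 ?_
      refine lt_of_lt_of_le ?_ (measure_mono (?_ :
        Ioo 1 (1 + δ) ⊆ Function.support _ ∩ Ioi 0))
      · rw [Real.volume_Ioo]
        exact ENNReal.ofReal_pos.2 (by linarith)
      · intro u hu
        obtain ⟨hu1, hu2⟩ := hu
        have hupos : (0:ℝ) < u := by linarith
        constructor
        · apply ne_of_gt
          refine mul_pos (Real.exp_pos _) (s8tri_pos hlr ?_ ?_)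
          · rw [s8proj_coe (s8_exp_mem hupos.le)]
            exact Real.exp_lt_exp.2 (by linarith)
          · rw [s8proj_coe (s8_exp_mem hupos.le)]
            exact Real.exp_lt_exp.2 (by linarith)
        · exact mem_Ioi.2 hupos
    have hkey : ∀ t : ℝ, 0 ≤ t →
        (∫ u in Ioi (0:ℝ), Real.exp (-u) * V (s8proj (Real.exp (-u))) *
          ∫ x, Stilde T A lam ⌊u * t⌋₊ t x ∂ν) ≤
        c * ∫ x, Stilde T A lam ⌊t⌋₊ t x ∂ν := by
      intro t ht
      have hFone : ∀ u ∈ Ioi (0:ℝ), |∫ x, Stilde T A lam ⌊t⌋₊ t x ∂ν| ≤ 1 := fun u _ => by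
        rw [abs_of_nonneg (s8_F_nonneg lam _ t)]
        exact s8_F_le_one hT hA hlam _ ht
      have hFm : AEStronglyMeasurable
          (fun u : ℝ => ∫ x, Stilde T A lam ⌊u * t⌋₊ t x ∂ν)
          (volume.restrict (Ioi 0)) := (s8_F_meas hT hA hlam ht).aestronglyMeasurable
      have hFb : ∀ u ∈ Ioi (0:ℝ), |∫ x, Stilde T A lam ⌊u * t⌋₊ t x ∂ν| ≤ 1 :=
        fun u _ => by
          rw [abs_of_nonneg (s8_F_nonneg lam _ t)]
          exact s8_F_le_one hT hA hlam _ ht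
      rw [hc, ← integral_mul_const]
      refine setIntegral_mono_on (s8_J_int V hFm hFb)
        (s8_J_int V (h := fun _ => ∫ x, Stilde T A lam ⌊t⌋₊ t x ∂ν)
          aestronglyMeasurable_const hFone) measurableSet_Ioi fun u hu => ?_
      rcases eq_or_ne (V (s8proj (Real.exp (-u)))) 0 with h0 | h0
      · simp [h0]
      · obtain ⟨h1', h2'⟩ := hsupp u (mem_Ioi.1 hu) h0
        have hmono := s8_F_anti (ν := ν) hT hA hlam ht h1'.le
        simp only [one_mul] at hmono
        exact mul_le_mul_of_nonneg_left hmono (hwnn u)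
    have hJb : c * s8phi P ζ lam (1 + δ) ≤
        ∫ u in Ioi (0:ℝ), Real.exp (-u) * V (s8proj (Real.exp (-u))) *
          s8phi P ζ lam u := by
      have hφconst : ∀ u ∈ Ioi (0:ℝ), |s8phi P ζ lam (1 + δ)| ≤ 1 := fun u _ => by
        rw [abs_of_nonneg (s8_phi_nonneg lam _)]
        exact s8_phi_le_one hζ0 hlam hcm (by linarith)
      rw [hc, ← integral_mul_const]
      refine setIntegral_mono_on
        (s8_J_int V (h := fun _ => s8phi P ζ lam (1 + δ))
          aestronglyMeasurable_const hφconst)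
        (s8_J_int V hφm hφb) measurableSet_Ioi fun u hu => ?_
      rcases eq_or_ne (V (s8proj (Real.exp (-u)))) 0 with h0 | h0
      · simp [h0]
      · obtain ⟨_, h2'⟩ := hsupp u (mem_Ioi.1 hu) h0
        exact mul_le_mul_of_nonneg_left
          (s8_phi_anti hζ0 hlam hcm (by linarith) h2'.le) (hwnn u)
    have hJ := s8_J_all hT hA hζ0 hlam hcm hconv V
    filter_upwards [Metric.tendsto_nhds.1 hJ (c * (ε/2)) (by positivity),
      eventually_ge_atTop (0:ℝ)] with t hJt ht
    have hk := hkey t ht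
    rw [Real.dist_eq] at hJt
    have h2 := (abs_lt.1 hJt).1
    have hexp : c * (s8phi P ζ lam (1 + δ) - ε/2)
        = c * s8phi P ζ lam (1 + δ) - c * (ε/2) := by ring
    have h3 : c * (s8phi P ζ lam (1 + δ) - ε/2)
        < c * (∫ x, Stilde T A lam ⌊t⌋₊ t x ∂ν) := by
      rw [hexp]; linarith
    have h4 := (mul_lt_mul_iff_right₀ hcpos).1 h3
    linarith
  filter_upwards [hupper, hlower] with t h1 h2
  rw [Real.dist_eq, abs_sub_lt_iff]
  constructor <;> linarith
/-! #### Step B : multivariate Laplace continuity via Stone–Weierstrass -/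

lemma s8_stepA_nat [IsProbabilityMeasure ν] [IsProbabilityMeasure P]
    (hT : Measurable T) (hA : ∀ i, MeasurableSet (A i))
    (hζ0 : ∀ ω i, 0 ≤ ζ ω i) {lam : Fin d → ℝ} (hlam : ∀ i, 0 ≤ lam i)
    (hcm : AEMeasurable (fun ω => ∑ i, lam i * ζ ω i) P)
    (hconv : ∀ q : ℝ, 0 < q →
      Tendsto (fun t : ℝ => s8LT T A ν lam t q) atTop (𝓝 (s8RT P ζ lam q))) :
    Tendsto (fun n : ℕ => ∫ x, Stilde T A lam n (n:ℝ) x ∂ν) atTop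
      (𝓝 (s8phi P ζ lam 1)) := by
  have h := (s8_stepA hT hA hζ0 hlam hcm hconv).comp tendsto_natCast_atTop_atTop
  refine h.congr fun n => ?_
  show (∫ x, Stilde T A lam ⌊(n:ℝ)⌋₊ (n:ℝ) x ∂ν) = _
  rw [Nat.floor_natCast]

/-- Coordinate functions on the cube. -/
def s8coord (d : ℕ) (i : Fin d) : C(Fin d → Set.Icc (0:ℝ) 1, ℝ) :=
  ⟨fun y => (y i : ℝ), continuous_subtype_val.comp (continuous_apply i)⟩

/-- Monomial functions on the cube. -/
def s8mono (d : ℕ) (k : Fin d → ℕ) : C(Fin d → Set.Icc (0:ℝ) 1, ℝ) :=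
  ⟨fun y => ∏ i, ((y i : ℝ)) ^ (k i),
    continuous_finset_prod _ fun i _ =>
      (continuous_subtype_val.comp (continuous_apply i)).pow _⟩

lemma s8mono_zero (d : ℕ) : s8mono d 0 = 1 := by
  ext y; simp [s8mono]

lemma s8mono_add (d : ℕ) (k₁ k₂ : Fin d → ℕ) :
    s8mono d (k₁ + k₂) = s8mono d k₁ * s8mono d k₂ := by
  ext y
  simp [s8mono, pow_add, Finset.prod_mul_distrib]

lemma s8coord_eq (d : ℕ) (i : Fin d) : s8coord d i = s8mono d (Pi.single i 1) := by
  ext y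
  show (y i : ℝ) = ∏ j, ((y j : ℝ)) ^ (Pi.single i 1 j)
  rw [Finset.prod_eq_single i (fun j _ hj => by
      rw [Pi.single_eq_of_ne hj, pow_zero]) (fun h => absurd (Finset.mem_univ i) h)]
  rw [Pi.single_eq_same, pow_one]

/-- Uniform density argument: convergence on the coordinate subalgebra plus a
uniform Lipschitz bound gives convergence everywhere. -/
lemma s8_SW_dense {d : ℕ} {ι : Type*} {L : Filter ι}
    (lt : ι → C(Fin d → Set.Icc (0:ℝ) 1, ℝ) → ℝ)
    (lim : C(Fin d → Set.Icc (0:ℝ) 1, ℝ) → ℝ)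
    (hlip : ∀ n g g', |lt n g - lt n g'| ≤ ‖g - g'‖)
    (hlipl : ∀ g g', |lim g - lim g'| ≤ ‖g - g'‖)
    (hadj : ∀ g ∈ Algebra.adjoin ℝ (Set.range (s8coord d)),
      Tendsto (fun n => lt n g) L (𝓝 (lim g)))
    (g : C(Fin d → Set.Icc (0:ℝ) 1, ℝ)) :
    Tendsto (fun n => lt n g) L (𝓝 (lim g)) := by
  refine Metric.tendsto_nhds.2 fun ε hε => ?_
  have htop : (Algebra.adjoin ℝ (Set.range (s8coord d))).topologicalClosure = ⊤ := by
    apply ContinuousMap.subalgebra_topologicalClosure_eq_top_of_separatesPoints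
    intro y y' hyy
    obtain ⟨i, hi⟩ : ∃ i, y i ≠ y' i := by
      by_contra hcon
      push_neg at hcon
      exact hyy (funext hcon)
    refine ⟨_, ⟨s8coord d i, Algebra.subset_adjoin (Set.mem_range_self i), rfl⟩, ?_⟩
    exact fun h => hi (Subtype.ext h)
  have hg : g ∈ closure ((Algebra.adjoin ℝ (Set.range (s8coord d)) :
      Subalgebra ℝ C(Fin d → Set.Icc (0:ℝ) 1, ℝ)) : Set _) := by
    rw [← Subalgebra.topologicalClosure_coe, htop]
    simp
  obtain ⟨W, hW, hWd⟩ := Metric.mem_closure_iff.1 hg (ε/3) (by linarith)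
  filter_upwards [Metric.tendsto_nhds.1 (hadj W hW) (ε/3) (by linarith)] with n h1
  have h3 := hlip n g W
  have h4 := hlipl W g
  rw [Real.dist_eq] at h1 ⊢
  have hdist : ‖g - W‖ < ε/3 := by rw [← dist_eq_norm]; exact hWd
  have hdist2 : ‖W - g‖ < ε/3 := by rw [norm_sub_rev]; exact hdist
  have t1 := abs_sub_le (lt n g) (lt n W) (lim g)
  have t2 := abs_sub_le (lt n W) (lim W) (lim g)
  linarith

lemma s8_comp_int {α : Type*} [MeasurableSpace α] (m : Measure α)
    [IsProbabilityMeasure m] {d : ℕ} {Φ : α → (Fin d → Set.Icc (0:ℝ) 1)}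
    (hΦ : AEMeasurable Φ m) (h : C(Fin d → Set.Icc (0:ℝ) 1, ℝ)) :
    Integrable (fun a => h (Φ a)) m :=
  (integrable_const ‖h‖).mono'
    ((h.continuous.measurable.comp_aemeasurable hΦ).aestronglyMeasurable)
    (Filter.Eventually.of_forall fun a => h.norm_coe_le_norm _)

lemma s8_int_lip {α : Type*} [MeasurableSpace α] (m : Measure α)
    [IsProbabilityMeasure m] {d : ℕ} {Φ : α → (Fin d → Set.Icc (0:ℝ) 1)}
    (hΦ : AEMeasurable Φ m) (g g' : C(Fin d → Set.Icc (0:ℝ) 1, ℝ)) :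
    |(∫ a, g (Φ a) ∂m) - ∫ a, g' (Φ a) ∂m| ≤ ‖g - g'‖ := by
  rw [← integral_sub (s8_comp_int m hΦ g) (s8_comp_int m hΦ g'), ← Real.norm_eq_abs]
  calc ‖∫ a, (g (Φ a) - g' (Φ a)) ∂m‖
      ≤ ‖g - g'‖ * (m Set.univ).toReal := by
        refine norm_integral_le_of_norm_le_const
          (Filter.Eventually.of_forall fun a => ?_)
        rw [← ContinuousMap.sub_apply]
        exact (g - g').norm_coe_le_norm _
    _ = ‖g - g'‖ := by rw [measure_univ, ENNReal.toReal_one, mul_one]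

lemma s8_mono_n (n : ℕ) (k : Fin d → ℕ) (x : X) :
    s8mono d k (fun i => s8proj (Real.exp (-(occVec T A n x i / n)))) =
      Stilde T A (fun i => (k i : ℝ)) n (n:ℝ) x := by
  show (∏ i, ((s8proj (Real.exp (-(occVec T A n x i / n))) : ℝ)) ^ (k i)) = _
  have hmem : ∀ i : Fin d, Real.exp (-(occVec T A n x i / n)) ∈ Set.Icc (0:ℝ) 1 :=
    fun i => s8_exp_mem (div_nonneg (s8_occ_nonneg n x i) (Nat.cast_nonneg n))
  rw [Stilde]
  calc ∏ i, ((s8proj (Real.exp (-(occVec T A n x i / ↑n))) : ℝ)) ^ k i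
      = ∏ i, Real.exp (-(occVec T A n x i / ↑n)) ^ k i :=
        Finset.prod_congr rfl fun i _ => by rw [s8proj_coe (hmem i)]
    _ = ∏ i, Real.exp ((k i : ℝ) * -(occVec T A n x i / ↑n)) :=
        Finset.prod_congr rfl fun i _ => (Real.exp_nat_mul _ _).symm
    _ = Real.exp (∑ i, (k i : ℝ) * -(occVec T A n x i / ↑n)) :=
        (Real.exp_sum _ _).symm
    _ = Real.exp (-(∑ i, (k i:ℝ) * occVec T A n x i) / ↑n) := by
        congr 1
        have h1 : ∑ i, (k i:ℝ) * -(occVec T A n x i / ↑n)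
            = ∑ i, -((k i:ℝ) * occVec T A n x i) / ↑n :=
          Finset.sum_congr rfl fun i _ => by ring
        rw [h1, ← Finset.sum_div, Finset.sum_neg_distrib, neg_div]

lemma s8_mono_P (hζ0 : ∀ ω i, 0 ≤ ζ ω i) (k : Fin d → ℕ) (ω : Ω) :
    s8mono d k (fun i => s8proj (Real.exp (-(ζ ω i)))) =
      Real.exp (-(1:ℝ) * ∑ i, (k i : ℝ) * ζ ω i) := by
  show (∏ i, ((s8proj (Real.exp (-(ζ ω i))) : ℝ)) ^ (k i)) = _
  calc ∏ i, ((s8proj (Real.exp (-(ζ ω i))) : ℝ)) ^ k i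
      = ∏ i, Real.exp (-(ζ ω i)) ^ k i :=
        Finset.prod_congr rfl fun i _ => by rw [s8proj_coe (s8_exp_mem (hζ0 ω i))]
    _ = ∏ i, Real.exp ((k i : ℝ) * -(ζ ω i)) :=
        Finset.prod_congr rfl fun i _ => (Real.exp_nat_mul _ _).symm
    _ = Real.exp (∑ i, (k i : ℝ) * -(ζ ω i)) := (Real.exp_sum _ _).symm
    _ = Real.exp (-(1:ℝ) * ∑ i, (k i:ℝ) * ζ ω i) := by
        congr 1
        have h1 : ∑ i, (k i:ℝ) * -(ζ ω i) = ∑ i, -((k i:ℝ) * ζ ω i) :=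
          Finset.sum_congr rfl fun i _ => by ring
        rw [h1, Finset.sum_neg_distrib, neg_one_mul]

lemma s8_stepB [IsProbabilityMeasure ν] [IsProbabilityMeasure P]
    (hT : Measurable T) (hA : ∀ i, MeasurableSet (A i))
    (hζ0 : ∀ ω i, 0 ≤ ζ ω i) (hζm : AEMeasurable ζ P)
    (hstep : ∀ lam : Fin d → ℝ, (∀ i, 0 ≤ lam i) →
      Tendsto (fun n : ℕ => ∫ x, Stilde T A lam n (n:ℝ) x ∂ν) atTop
        (𝓝 (s8phi P ζ lam 1)))
    (g : C(Fin d → Set.Icc (0:ℝ) 1, ℝ)) :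
    Tendsto (fun n : ℕ =>
        ∫ x, g (fun i => s8proj (Real.exp (-(occVec T A n x i / n)))) ∂ν)
      atTop (𝓝 (∫ ω, g (fun i => s8proj (Real.exp (-(ζ ω i)))) ∂P)) := by
  have hΦn : ∀ n : ℕ, Measurable fun x : X =>
      (fun i => s8proj (Real.exp (-(occVec T A n x i / n)))) := by
    intro n
    refine measurable_pi_lambda _ fun i => ?_
    exact continuous_projIcc.measurable.comp
      (Real.measurable_exp.comp ((s8_occ_meas hT (hA i) n).div_const _).neg)
  have hΦP : AEMeasurable (fun ω => (fun i => s8proj (Real.exp (-(ζ ω i))))) P := by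
    have hG : Measurable fun v : Fin d → ℝ =>
        (fun i => s8proj (Real.exp (-(v i)))) :=
      measurable_pi_lambda _ fun i => continuous_projIcc.measurable.comp
        (Real.measurable_exp.comp ((measurable_pi_apply i).neg))
    exact hG.comp_aemeasurable hζm
  refine s8_SW_dense _ _ (fun n g₁ g₂ => s8_int_lip ν (hΦn n).aemeasurable g₁ g₂)
    (fun g₁ g₂ => s8_int_lip P hΦP g₁ g₂) ?_ g
  intro W hW
  have hspan : W ∈ Submodule.span ℝ
      ((Submonoid.closure (Set.range (s8coord d)) : Submonoid _) : Set _) := by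
    have h := (Subalgebra.mem_toSubmodule (Algebra.adjoin ℝ (Set.range (s8coord d)))).2 hW
    rwa [Algebra.adjoin_eq_span] at h
  refine Submodule.span_induction ?_ ?_ ?_ ?_ hspan
  · -- monomials
    intro W' hW'
    obtain ⟨k, rfl⟩ : ∃ k, W' = s8mono d k := by
      refine Submonoid.closure_induction (fun y hy => ?_) ⟨0, (s8mono_zero d).symm⟩
        (fun y z _ _ hky hkz => ?_) hW'
      · obtain ⟨i, rfl⟩ := hy
        exact ⟨Pi.single i 1, s8coord_eq d i⟩
      · obtain ⟨k₁, rfl⟩ := hky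
        obtain ⟨k₂, rfl⟩ := hkz
        exact ⟨k₁ + k₂, (s8mono_add d k₁ k₂).symm⟩
    have h1 := hstep (fun i => (k i : ℝ)) (fun i => Nat.cast_nonneg _)
    have e1 : (fun n : ℕ => ∫ x, s8mono d k
        (fun i => s8proj (Real.exp (-(occVec T A n x i / n)))) ∂ν)
        = fun n : ℕ => ∫ x, Stilde T A (fun i => (k i : ℝ)) n (n:ℝ) x ∂ν :=
      funext fun n => integral_congr_ae (Filter.Eventually.of_forall fun x =>
        s8_mono_n n k x)
    have e2 : (∫ ω, s8mono d k (fun i => s8proj (Real.exp (-(ζ ω i)))) ∂P)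
        = s8phi P ζ (fun i => (k i : ℝ)) 1 :=
      integral_congr_ae (Filter.Eventually.of_forall fun ω => s8_mono_P hζ0 k ω)
    rw [e1, e2]
    exact h1
  · -- zero
    simpa using tendsto_const_nhds
  · -- add
    intro y z _ _ hty htz
    have e1 : ∀ n : ℕ, (∫ x, (y + z)
        (fun i => s8proj (Real.exp (-(occVec T A n x i / n)))) ∂ν)
        = (∫ x, y (fun i => s8proj (Real.exp (-(occVec T A n x i / n)))) ∂ν)
          + ∫ x, z (fun i => s8proj (Real.exp (-(occVec T A n x i / n)))) ∂ν := by
      intro n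
      simp only [ContinuousMap.add_apply]
      exact integral_add (s8_comp_int ν (hΦn n).aemeasurable y)
        (s8_comp_int ν (hΦn n).aemeasurable z)
    have e2 : (∫ ω, (y + z) (fun i => s8proj (Real.exp (-(ζ ω i)))) ∂P)
        = (∫ ω, y (fun i => s8proj (Real.exp (-(ζ ω i)))) ∂P)
          + ∫ ω, z (fun i => s8proj (Real.exp (-(ζ ω i)))) ∂P := by
      simp only [ContinuousMap.add_apply]
      exact integral_add (s8_comp_int P hΦP y) (s8_comp_int P hΦP z)
    refine Tendsto.congr (fun n => (e1 n).symm) ?_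
    rw [e2]
    exact hty.add htz
  · -- smul
    intro a y _ hty
    have e1 : ∀ n : ℕ, (∫ x, (a • y)
        (fun i => s8proj (Real.exp (-(occVec T A n x i / n)))) ∂ν)
        = a * ∫ x, y (fun i => s8proj (Real.exp (-(occVec T A n x i / n)))) ∂ν := by
      intro n
      simp only [ContinuousMap.smul_apply, smul_eq_mul]
      exact integral_const_mul a _
    have e2 : (∫ ω, (a • y) (fun i => s8proj (Real.exp (-(ζ ω i)))) ∂P)
        = a * ∫ ω, y (fun i => s8proj (Real.exp (-(ζ ω i)))) ∂P := by
      simp only [ContinuousMap.smul_apply, smul_eq_mul]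
      exact integral_const_mul a _
    refine Tendsto.congr (fun n => (e1 n).symm) ?_
    rw [e2]
    exact hty.const_mul a
/-! #### Final assembly: tightness and the cut-off argument -/

/-- The cut-off transfer of `f` to the cube. -/
def s8g (d : ℕ) (f : BoundedContinuousFunction (Fin d → ℝ) ℝ) (R : ℕ) :
    C(Fin d → Set.Icc (0:ℝ) 1, ℝ) :=
  ⟨fun y => f (fun i => -Real.log (max (Real.exp (-((R:ℝ)+1))) (y i))) *
      ∏ i, max 0 (min 1 (((y i : ℝ) - Real.exp (-((R:ℝ)+1))) /
        (Real.exp (-(R:ℝ)) - Real.exp (-((R:ℝ)+1))))),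
    by
      refine Continuous.mul ?_ ?_
      · refine f.continuous.comp (continuous_pi fun i => Continuous.neg ?_)
        refine Continuous.log ?_ ?_
        · exact continuous_const.max (continuous_subtype_val.comp (continuous_apply i))
        · intro y
          exact ne_of_gt (lt_of_lt_of_le (Real.exp_pos _) (le_max_left _ _))
      · refine continuous_finset_prod _ fun i _ => ?_
        exact continuous_const.max (continuous_const.min
          (((continuous_subtype_val.comp (continuous_apply i)).sub
            continuous_const).div_const _))⟩

lemma s8g_bound (d : ℕ) (f : BoundedContinuousFunction (Fin d → ℝ) ℝ) (R : ℕ)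
    (y : Fin d → Set.Icc (0:ℝ) 1) : |s8g d f R y| ≤ ‖f‖ := by
  show |f _ * ∏ i, max 0 (min 1 _)| ≤ ‖f‖
  rw [abs_mul]
  have h1 : |f (fun i => -Real.log (max (Real.exp (-((R:ℝ)+1))) (y i)))| ≤ ‖f‖ := by
    rw [← Real.norm_eq_abs]
    exact f.norm_coe_le_norm _
  have h2 : |∏ i, max 0 (min 1 (((y i : ℝ) - Real.exp (-((R:ℝ)+1))) /
      (Real.exp (-(R:ℝ)) - Real.exp (-((R:ℝ)+1)))))| ≤ 1 := by
    rw [abs_of_nonneg (Finset.prod_nonneg fun i _ => le_max_left _ _)]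
    refine Finset.prod_le_one (fun i _ => le_max_left _ _) fun i _ => ?_
    exact max_le (by norm_num) (min_le_left _ _)
  calc |f _| * |∏ i, _| ≤ ‖f‖ * 1 :=
        mul_le_mul h1 h2 (abs_nonneg _) (norm_nonneg _)
    _ = ‖f‖ := mul_one _

lemma s8g_eq (d : ℕ) (f : BoundedContinuousFunction (Fin d → ℝ) ℝ) {R : ℕ}
    (c : Fin d → ℝ) (hc : ∀ i, 0 ≤ c i) (hle : ∀ i, c i ≤ R) :
    s8g d f R (fun i => s8proj (Real.exp (-(c i)))) = f c := by
  have hco : ∀ i, ((s8proj (Real.exp (-(c i))) : ℝ)) = Real.exp (-(c i)) :=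
    fun i => s8proj_coe (s8_exp_mem (hc i))
  have hba : Real.exp (-((R:ℝ)+1)) < Real.exp (-(R:ℝ)) :=
    Real.exp_lt_exp.2 (by linarith)
  show f _ * ∏ i, max 0 (min 1 _) = f c
  have hcl : (fun i => -Real.log (max (Real.exp (-((R:ℝ)+1)))
      ((s8proj (Real.exp (-(c i))) : ℝ)))) = c := by
    funext i
    rw [hco i, max_eq_right (Real.exp_le_exp.2 (by linarith [hle i])),
      Real.log_exp, neg_neg]
  have hcut : ∀ i, max 0 (min 1 ((((s8proj (Real.exp (-(c i)))) : ℝ) -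
      Real.exp (-((R:ℝ)+1))) / (Real.exp (-(R:ℝ)) - Real.exp (-((R:ℝ)+1))))) = 1 := by
    intro i
    have hge : (1:ℝ) ≤ (Real.exp (-(c i)) - Real.exp (-((R:ℝ)+1))) /
        (Real.exp (-(R:ℝ)) - Real.exp (-((R:ℝ)+1))) := by
      rw [le_div_iff₀ (by linarith)]
      have := Real.exp_le_exp.2 (show -(R:ℝ) ≤ -(c i) by linarith [hle i])
      linarith
    rw [hco i, min_eq_left hge, max_eq_right zero_le_one]
  rw [hcl]
  have : (∏ i, max 0 (min 1 ((((s8proj (Real.exp (-(c i)))) : ℝ) -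
      Real.exp (-((R:ℝ)+1))) / (Real.exp (-(R:ℝ)) - Real.exp (-((R:ℝ)+1)))))) = 1 := by
    rw [Finset.prod_congr rfl fun i _ => hcut i, Finset.prod_const_one]
  rw [this, mul_one]

set_option maxHeartbeats 800000 in
/-- The key pointwise tightness estimate. -/
lemma s8_key (f : BoundedContinuousFunction (Fin d → ℝ) ℝ) {R : ℕ} (hR : 1 ≤ R)
    (c : Fin d → ℝ) (hc : ∀ i, 0 ≤ c i) :
    |f c - s8g d f R (fun i => s8proj (Real.exp (-(c i))))| ≤
      2 * ‖f‖ * (1 - Real.exp (-1))⁻¹ * ∑ i, (1 - Real.exp (-(c i / R))) := by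
  have hCq : (0:ℝ) < 1 - Real.exp (-1) := by
    have h := Real.exp_lt_exp.2 (show (-1:ℝ) < 0 by norm_num)
    rw [Real.exp_zero] at h
    linarith
  have hsum_nonneg : ∀ i : Fin d, (0:ℝ) ≤ 1 - Real.exp (-(c i / R)) := by
    intro i
    have : Real.exp (-(c i / R)) ≤ 1 := Real.exp_le_one_iff.2
      (neg_nonpos.2 (div_nonneg (hc i) (Nat.cast_nonneg R)))
    linarith
  by_cases hall : ∀ i, c i ≤ R
  · rw [s8g_eq d f c hc hall, sub_self, abs_zero]
    have h3 : (0:ℝ) ≤ ∑ i, (1 - Real.exp (-(c i / R))) :=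
      Finset.sum_nonneg fun i _ => hsum_nonneg i
    have h2 : (0:ℝ) ≤ 2 * ‖f‖ * (1 - Real.exp (-1))⁻¹ :=
      mul_nonneg (mul_nonneg (by norm_num) (norm_nonneg f)) (inv_nonneg.2 hCq.le)
    exact mul_nonneg h2 h3
  · push_neg at hall
    obtain ⟨i0, hi0⟩ := hall
    have hL : |f c - s8g d f R (fun i => s8proj (Real.exp (-(c i))))| ≤ 2 * ‖f‖ := by
      calc |f c - s8g d f R (fun i => s8proj (Real.exp (-(c i))))|
          ≤ |f c| + |s8g d f R (fun i => s8proj (Real.exp (-(c i))))| := by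
            rw [sub_eq_add_neg]
            exact (abs_add_le _ _).trans (by rw [abs_neg])
        _ ≤ ‖f‖ + ‖f‖ := add_le_add (by rw [← Real.norm_eq_abs]; exact f.norm_coe_le_norm _)
            (s8g_bound d f R _)
        _ = 2 * ‖f‖ := by ring
    refine hL.trans ?_
    have hR0 : (0:ℝ) < R := by exact_mod_cast hR
    have hterm : 1 - Real.exp (-1) ≤ 1 - Real.exp (-(c i0 / R)) := by
      have h1 : (1:ℝ) < c i0 / R := (one_lt_div hR0).2 hi0
      have := Real.exp_le_exp.2 (show -(c i0 / R) ≤ -1 by linarith)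
      linarith
    have hsum : 1 - Real.exp (-1) ≤ ∑ i, (1 - Real.exp (-(c i / R))) :=
      hterm.trans (Finset.single_le_sum (fun i _ => hsum_nonneg i) (Finset.mem_univ i0))
    have h1 : 1 ≤ (1 - Real.exp (-1))⁻¹ * ∑ i, (1 - Real.exp (-(c i / R))) := by
      have h5 := mul_le_mul_of_nonneg_left hsum (inv_nonneg.2 hCq.le)
      rwa [inv_mul_cancel₀ (ne_of_gt hCq)] at h5
    calc 2 * ‖f‖ = 2 * ‖f‖ * 1 := (mul_one _).symm
      _ ≤ 2 * ‖f‖ * ((1 - Real.exp (-1))⁻¹ * ∑ i, (1 - Real.exp (-(c i / R)))) :=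
          mul_le_mul_of_nonneg_left h1 (by positivity)
      _ = 2 * ‖f‖ * (1 - Real.exp (-1))⁻¹ * ∑ i, (1 - Real.exp (-(c i / R))) := by ring
set_option maxHeartbeats 1600000 in
/-- Final convergence statement for a single bounded continuous function. -/
lemma s8_final [IsProbabilityMeasure ν] [IsProbabilityMeasure P]
    (hT : Measurable T) (hA : ∀ i, MeasurableSet (A i))
    (hζ0 : ∀ ω i, 0 ≤ ζ ω i) (hζm : AEMeasurable ζ P)
    (hstep : ∀ lam : Fin d → ℝ, (∀ i, 0 ≤ lam i) →
      Tendsto (fun n : ℕ => ∫ x, Stilde T A lam n (n:ℝ) x ∂ν) atTop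
        (𝓝 (s8phi P ζ lam 1)))
    (f : BoundedContinuousFunction (Fin d → ℝ) ℝ) :
    Tendsto (fun n : ℕ => ∫ x, f (fun i => occVec T A n x i / n) ∂ν) atTop
      (𝓝 (∫ ω, f (ζ ω) ∂P)) := by
  have hζi : ∀ i, AEMeasurable (fun ω => ζ ω i) P :=
    fun i => (measurable_pi_apply i).comp_aemeasurable hζm
  have hCq : (0:ℝ) < 1 - Real.exp (-1) := by
    have h := Real.exp_lt_exp.2 (show (-1:ℝ) < 0 by norm_num)
    rw [Real.exp_zero] at h; linarith
  have hK0 : (0:ℝ) ≤ 2 * ‖f‖ * (1 - Real.exp (-1))⁻¹ := by positivity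
  have hintP : ∀ (R : ℕ) (i : Fin d),
      Integrable (fun ω => Real.exp (-(ζ ω i / R))) P := by
    intro R i
    refine (integrable_const 1).mono'
      ((Real.measurable_exp.comp_aemeasurable
        ((hζi i).div_const _).neg).aestronglyMeasurable) ?_
    filter_upwards with ω
    rw [Real.norm_eq_abs, abs_of_pos (Real.exp_pos _)]
    exact Real.exp_le_one_iff.2 (neg_nonpos.2 (div_nonneg (hζ0 ω i) (Nat.cast_nonneg R)))
  have hintν : ∀ (R n : ℕ) (i : Fin d),
      Integrable (fun x => Real.exp (-((occVec T A n x i / n) / R))) ν := by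
    intro R n i
    refine (integrable_const 1).mono'
      ((Real.measurable_exp.comp
        ((((s8_occ_meas hT (hA i) n).div_const _).div_const _).neg)).aestronglyMeasurable) ?_
    filter_upwards with x
    rw [Real.norm_eq_abs, abs_of_pos (Real.exp_pos _)]
    exact Real.exp_le_one_iff.2 (neg_nonpos.2 (div_nonneg
      (div_nonneg (s8_occ_nonneg n x i) (Nat.cast_nonneg n)) (Nat.cast_nonneg R)))
  refine Metric.tendsto_nhds.2 fun ε hε => ?_
  -- choose the truncation level R
  have hη : Tendsto (fun R : ℕ => (2 * ‖f‖ * (1 - Real.exp (-1))⁻¹) *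
      ∑ i, (1 - ∫ ω, Real.exp (-(ζ ω i / R)) ∂P)) atTop (𝓝 0) := by
    have hterm : ∀ i : Fin d, Tendsto
        (fun R : ℕ => ∫ ω, Real.exp (-(ζ ω i / R)) ∂P) atTop (𝓝 1) := by
      intro i
      have hdc := tendsto_integral_filter_of_dominated_convergence (μ := P)
        (F := fun R : ℕ => fun ω => Real.exp (-(ζ ω i / R)))
        (f := fun _ => (1:ℝ)) (bound := fun _ => (1:ℝ))
        (Filter.Eventually.of_forall fun R =>
          (Real.measurable_exp.comp_aemeasurable
            ((hζi i).div_const _).neg).aestronglyMeasurable)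
        (Filter.Eventually.of_forall fun R => Filter.Eventually.of_forall fun ω => by
          rw [Real.norm_eq_abs, abs_of_pos (Real.exp_pos _)]
          exact Real.exp_le_one_iff.2 (neg_nonpos.2
            (div_nonneg (hζ0 ω i) (Nat.cast_nonneg R))))
        (integrable_const 1)
        (Filter.Eventually.of_forall fun ω => by
          have h0 : Tendsto (fun R : ℕ => ζ ω i / R) atTop (𝓝 0) :=
            tendsto_const_div_atTop_nhds_zero_nat _
          have h2 := (Real.continuous_exp.tendsto (-0)).comp h0.neg
          rw [neg_zero, Real.exp_zero] at h2
          exact h2)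
      simpa using hdc
    have hsum : Tendsto (fun R : ℕ => ∑ i, (1 - ∫ ω, Real.exp (-(ζ ω i / R)) ∂P))
        atTop (𝓝 (∑ _i : Fin d, (0:ℝ))) := by
      refine tendsto_finset_sum _ fun i _ => ?_
      have h3 := (tendsto_const_nhds (x := (1:ℝ)) (f := atTop)).sub (hterm i)
      rw [sub_self] at h3
      exact h3
    have h4 := hsum.const_mul (2 * ‖f‖ * (1 - Real.exp (-1))⁻¹)
    simpa using h4
  obtain ⟨R, hRsmall, hR1⟩ : ∃ R : ℕ, ((2 * ‖f‖ * (1 - Real.exp (-1))⁻¹) *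
      ∑ i, (1 - ∫ ω, Real.exp (-(ζ ω i / R)) ∂P) < ε/4) ∧ 1 ≤ R :=
    ((hη.eventually_lt_const (by linarith : (0:ℝ) < ε/4)).and
      (eventually_ge_atTop 1)).exists
  -- the `ν`-side error tends to the `P`-side error
  have htermn : ∀ i : Fin d, Tendsto
      (fun n : ℕ => ∫ x, Real.exp (-((occVec T A n x i / n) / R)) ∂ν) atTop
      (𝓝 (∫ ω, Real.exp (-(ζ ω i / R)) ∂P)) := by
    intro i
    have h1 := hstep (fun j => if j = i then (R:ℝ)⁻¹ else 0)
      (fun j => by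
        by_cases h : j = i
        · simp only [h, if_true]
          positivity
        · simp [h])
    have e1 : (fun n : ℕ =>
        ∫ x, Stilde T A (fun j => if j = i then (R:ℝ)⁻¹ else 0) n (n:ℝ) x ∂ν)
        = fun n : ℕ => ∫ x, Real.exp (-((occVec T A n x i / n) / R)) ∂ν := by
      funext n
      refine integral_congr_ae (Filter.Eventually.of_forall fun x => ?_)
      rw [Stilde]
      simp only [ite_mul, zero_mul, Finset.sum_ite_eq', Finset.mem_univ, if_true]
      congr 1
      ring
    have e2 : s8phi P ζ (fun j => if j = i then (R:ℝ)⁻¹ else 0) 1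
        = ∫ ω, Real.exp (-(ζ ω i / R)) ∂P := by
      rw [s8phi]
      refine integral_congr_ae (Filter.Eventually.of_forall fun ω => ?_)
      simp only [ite_mul, zero_mul, Finset.sum_ite_eq', Finset.mem_univ, if_true]
      congr 1
      ring
    rw [e1, e2] at h1
    exact h1
  have hBtend : Tendsto (fun n : ℕ => (2 * ‖f‖ * (1 - Real.exp (-1))⁻¹) * ∑ i,
      (1 - ∫ x, Real.exp (-((occVec T A n x i / n) / R)) ∂ν)) atTop
      (𝓝 ((2 * ‖f‖ * (1 - Real.exp (-1))⁻¹) *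
        ∑ i, (1 - ∫ ω, Real.exp (-(ζ ω i / R)) ∂P))) := by
    refine Tendsto.const_mul _ (tendsto_finset_sum _ fun i _ => ?_)
    exact (tendsto_const_nhds (x := (1:ℝ)) (f := atTop)).sub (htermn i)
  have hBev : ∀ᶠ n : ℕ in atTop, (2 * ‖f‖ * (1 - Real.exp (-1))⁻¹) * ∑ i,
      (1 - ∫ x, Real.exp (-((occVec T A n x i / n) / R)) ∂ν) < ε/3 :=
    hBtend.eventually_lt_const (by linarith)
  have hg := s8_stepB hT hA hζ0 hζm hstep (s8g d f R)
  filter_upwards [hBev, Metric.tendsto_nhds.1 hg (ε/3) (by linarith)] with n hB1 hg1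
  rw [Real.dist_eq] at hg1
  have hfcn : Integrable (fun x => f (fun i => occVec T A n x i / n)) ν := by
    refine (integrable_const ‖f‖).mono' ?_ ?_
    · exact (f.continuous.measurable.comp (measurable_pi_lambda _ fun i =>
        (s8_occ_meas hT (hA i) n).div_const _)).aestronglyMeasurable
    · filter_upwards with x
      exact f.norm_coe_le_norm _
  have hΦn : Measurable fun x : X =>
      (fun i => s8proj (Real.exp (-(occVec T A n x i / n)))) :=
    measurable_pi_lambda _ fun i => continuous_projIcc.measurable.comp
      (Real.measurable_exp.comp ((s8_occ_meas hT (hA i) n).div_const _).neg)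
  have hgcn : Integrable (fun x =>
      s8g d f R (fun i => s8proj (Real.exp (-(occVec T A n x i / n))))) ν :=
    s8_comp_int ν hΦn.aemeasurable (s8g d f R)
  have hfP : Integrable (fun ω => f (ζ ω)) P := by
    refine (integrable_const ‖f‖).mono'
      ((f.continuous.measurable.comp_aemeasurable hζm).aestronglyMeasurable) ?_
    filter_upwards with ω
    exact f.norm_coe_le_norm _
  have hΦP : AEMeasurable (fun ω => (fun i => s8proj (Real.exp (-(ζ ω i))))) P := by
    have hG : Measurable fun v : Fin d → ℝ =>
        (fun i => s8proj (Real.exp (-(v i)))) :=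
      measurable_pi_lambda _ fun i => continuous_projIcc.measurable.comp
        (Real.measurable_exp.comp ((measurable_pi_apply i).neg))
    exact hG.comp_aemeasurable hζm
  have hgP : Integrable (fun ω =>
      s8g d f R (fun i => s8proj (Real.exp (-(ζ ω i))))) P :=
    s8_comp_int P hΦP (s8g d f R)
  -- estimate on the `ν` side
  have hA1 : |(∫ x, f (fun i => occVec T A n x i / n) ∂ν) -
      ∫ x, s8g d f R (fun i => s8proj (Real.exp (-(occVec T A n x i / n)))) ∂ν| ≤
      (2 * ‖f‖ * (1 - Real.exp (-1))⁻¹) * ∑ i,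
        (1 - ∫ x, Real.exp (-((occVec T A n x i / n) / R)) ∂ν) := by
    rw [← integral_sub hfcn hgcn, ← Real.norm_eq_abs]
    refine (norm_integral_le_integral_norm _).trans ?_
    have hsubint : ∀ i : Fin d,
        Integrable (fun x => 1 - Real.exp (-((occVec T A n x i / n) / R))) ν :=
      fun i => (integrable_const 1).sub (hintν R n i)
    have hRHSint : Integrable (fun x => (2 * ‖f‖ * (1 - Real.exp (-1))⁻¹) * ∑ i,
        (1 - Real.exp (-((occVec T A n x i / n) / R)))) ν := by
      refine Integrable.const_mul (integrable_finset_sum _ fun i _ => ?_) _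
      exact hsubint i
    have step2 : (∫ x, ‖f (fun i => occVec T A n x i / n) -
        s8g d f R (fun i => s8proj (Real.exp (-(occVec T A n x i / n))))‖ ∂ν) ≤
        ∫ x, (2 * ‖f‖ * (1 - Real.exp (-1))⁻¹) * ∑ i,
          (1 - Real.exp (-((occVec T A n x i / n) / R))) ∂ν := by
      refine integral_mono ((hfcn.sub hgcn).norm) hRHSint fun x => ?_
      rw [Real.norm_eq_abs]
      exact s8_key f hR1 (fun i => occVec T A n x i / n)
        (fun i => div_nonneg (s8_occ_nonneg n x i) (Nat.cast_nonneg n))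
    refine step2.trans (le_of_eq ?_)
    rw [integral_const_mul]
    congr 1
    rw [integral_finset_sum _ fun i _ => hsubint i]
    refine Finset.sum_congr rfl fun i _ => ?_
    rw [integral_sub (integrable_const 1) (hintν R n i)]
    simp
  -- estimate on the `P` side
  have hA2 : |(∫ ω, s8g d f R (fun i => s8proj (Real.exp (-(ζ ω i)))) ∂P) -
      ∫ ω, f (ζ ω) ∂P| ≤ (2 * ‖f‖ * (1 - Real.exp (-1))⁻¹) *
        ∑ i, (1 - ∫ ω, Real.exp (-(ζ ω i / R)) ∂P) := by
    rw [← integral_sub hgP hfP, ← Real.norm_eq_abs]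
    refine (norm_integral_le_integral_norm _).trans ?_
    have hsubintP : ∀ i : Fin d,
        Integrable (fun ω => 1 - Real.exp (-(ζ ω i / R))) P :=
      fun i => (integrable_const 1).sub (hintP R i)
    have hRHSint : Integrable (fun ω => (2 * ‖f‖ * (1 - Real.exp (-1))⁻¹) * ∑ i,
        (1 - Real.exp (-(ζ ω i / R)))) P := by
      refine Integrable.const_mul (integrable_finset_sum _ fun i _ => ?_) _
      exact hsubintP i
    have step2 : (∫ ω, ‖s8g d f R (fun i => s8proj (Real.exp (-(ζ ω i)))) -
        f (ζ ω)‖ ∂P) ≤ ∫ ω, (2 * ‖f‖ * (1 - Real.exp (-1))⁻¹) * ∑ i,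
          (1 - Real.exp (-(ζ ω i / R))) ∂P := by
      refine integral_mono ((hgP.sub hfP).norm) hRHSint fun ω => ?_
      rw [Real.norm_eq_abs, abs_sub_comm]
      exact s8_key f hR1 (ζ ω) (hζ0 ω)
    refine step2.trans (le_of_eq ?_)
    rw [integral_const_mul]
    congr 1
    rw [integral_finset_sum _ fun i _ => hsubintP i]
    refine Finset.sum_congr rfl fun i _ => ?_
    rw [integral_sub (integrable_const 1) (hintP R i)]
    simp
  show dist (∫ x, f (fun i => occVec T A n x i / ↑n) ∂ν) (∫ ω, f (ζ ω) ∂P) < ε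
  rw [Real.dist_eq]
  have t1 := abs_sub_le (∫ x, f (fun i => occVec T A n x i / ↑n) ∂ν)
    (∫ x, s8g d f R (fun i => s8proj (Real.exp (-(occVec T A n x i / n)))) ∂ν)
    (∫ ω, f (ζ ω) ∂P)
  have t2 := abs_sub_le
    (∫ x, s8g d f R (fun i => s8proj (Real.exp (-(occVec T A n x i / n)))) ∂ν)
    (∫ ω, s8g d f R (fun i => s8proj (Real.exp (-(ζ ω i)))) ∂P)
    (∫ ω, f (ζ ω) ∂P)
  linarith

end Stmt8Aux
/-- convergence of double Laplace transforms implies strong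
convergence in distribution. -/
theorem stmt8
    {X : Type*} [MeasurableSpace X] (μ : Measure X) (T : X → X)
    {d : ℕ} (Y : Set X) (A : Fin d → Set X)
    (hR : RaySetting μ T Y A)
    {Ω : Type*} [MeasurableSpace Ω] (P : Measure Ω) [IsProbabilityMeasure P]
    (ζ : Ω → Fin d → ℝ) (hζnonneg : ∀ ω i, 0 ≤ ζ ω i)
    (qa qb : ℝ) (hqa : 0 ≤ qa) (hqab : qa < qb)
    (hconv : ∀ q ∈ Ioo qa qb, ∀ lam : Fin d → ℝ, (∀ i, 0 ≤ lam i) →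
      ∀ ν : Measure X, IsProbabilityMeasure ν → ν ≪ μ →
        Tendsto (fun t : ℝ =>
            ∫ u in Ioi (0 : ℝ), Real.exp (-q * u) *
              (∫ x, Stilde T A lam ⌊u * t⌋₊ t x ∂ν))
          atTop
          (𝓝 (∫ u in Ioi (0 : ℝ), Real.exp (-q * u) *
            (∫ ω, Real.exp (-u * ∑ i, lam i * ζ ω i) ∂P)))) :
    ∀ ν : Measure X, IsProbabilityMeasure ν → ν ≪ μ →
      WeakConvTo ν (fun n x i => occVec T A n x i / n) P ζ := by
  intro ν hνP hνμ
  haveI := hνP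
  have hT : Measurable T := hR.ergodic.toMeasurePreserving.measurable
  have hAm : ∀ i, MeasurableSet (A i) := hR.measA
  have hconv' : ∀ q ∈ Ioo qa qb, ∀ lam : Fin d → ℝ, (∀ i, 0 ≤ lam i) →
      Tendsto (fun t : ℝ => s8LT T A ν lam t q) atTop (𝓝 (s8RT P ζ lam q)) :=
    fun q hq lam hlam => hconv q hq lam hlam ν hνP hνμ
  have hζi : ∀ i, AEMeasurable (fun ω => ζ ω i) P :=
    fun i => s8_zeta_meas hqa hqab hT hAm hζnonneg hconv' i
  have hζm : AEMeasurable ζ P := by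
    have hg : Measurable fun ω => (fun i => (hζi i).mk _ ω) :=
      measurable_pi_lambda _ fun i => (hζi i).measurable_mk
    refine ⟨_, hg, ?_⟩
    have h1 : ∀ᵐ ω ∂P, ∀ i, ζ ω i = (hζi i).mk _ ω :=
      (Filter.eventually_all).2 fun i => (hζi i).ae_eq_mk
    filter_upwards [h1] with ω hω
    exact funext hω
  have hsumm : ∀ lam : Fin d → ℝ, AEMeasurable (fun ω => ∑ i, lam i * ζ ω i) P := by
    intro lam
    exact (Finset.measurable_sum Finset.univ (f := fun i (v : Fin d → ℝ) => lam i * v i)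
      fun i _ => by fun_prop).comp_aemeasurable hζm
  have hstep : ∀ lam : Fin d → ℝ, (∀ i, 0 ≤ lam i) →
      Tendsto (fun n : ℕ => ∫ x, Stilde T A lam n (n:ℝ) x ∂ν) atTop
        (𝓝 (s8phi P ζ lam 1)) :=
    fun lam hlam => s8_stepA_nat hT hAm hζnonneg hlam (hsumm lam)
      (fun q hq => s8_hconv_all hqa hqab hconv' hq hlam)
  intro f
  exact s8_final hT hAm hζnonneg hζm hstep f

end
end
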